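/- arXiv:1707.01533 — 9 statements merged into one kernel-verified Lean document; each statement's English description precedes it below -/
import Mathlib

section
/- For every integer r ≥ 3, the limit π(K_{r,r}^{(r)}) = lim_{n→∞} ex(n, K_{r,r}^{(r)})/C(n,r) exists and equals r! · sup{λ(H) : H an intersecting r-graph}. -/
open Finset

/-- The vertex type of the concrete representative of `K_{r,r}^{(r)}`. -/
abbrev KrrV (r : ℕ) := (Fin 2 × Fin r) ⊕ ((Fin r × Fin r) × Fin (r - 2))

/-- The `r`-graph `K_{r,r}^{(r)}`: the extension of two disjoint `r`-edges. -/
def Krr (r : ℕ) : Finset (Finset (KrrV r)) :=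
  {(Finset.univ : Finset (Fin r)).image (fun i => Sum.inl ((0 : Fin 2), i)),
   (Finset.univ : Finset (Fin r)).image (fun i => Sum.inl ((1 : Fin 2), i))} ∪
  (Finset.univ : Finset (Fin r × Fin r)).image
    (fun uv => insert (Sum.inl ((0 : Fin 2), uv.1)) (insert (Sum.inl ((1 : Fin 2), uv.2))
      ((Finset.univ : Finset (Fin (r - 2))).image (fun k => Sum.inr (uv, k)))))

/-- `G` is `F`-free. -/
def Free {γ δ : Type*} [DecidableEq γ] [DecidableEq δ]
    (F : Finset (Finset γ)) (G : Finset (Finset δ)) : Prop :=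
  ¬ ∃ φ : γ → δ, Function.Injective φ ∧ ∀ e ∈ F, e.image φ ∈ G

/-- The Turán number `ex(n, F)`. -/
noncomputable def exNum (r n : ℕ) {γ : Type*} [DecidableEq γ] (F : Finset (Finset γ)) : ℕ :=
  sSup {m | ∃ G : Finset (Finset (Fin n)),
    (∀ e ∈ G, e.card = r) ∧ Free F G ∧ G.card = m}

/-- The Lagrangian of an `r`-graph. -/
noncomputable def lagrangian {γ : Type*} [Fintype γ] (G : Finset (Finset γ)) : ℝ :=
  sSup {x : ℝ | ∃ p : γ → ℝ, (∀ v, 0 ≤ p v) ∧ (∀ v, p v ≤ 1) ∧ (∑ v, p v) = 1 ∧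
    x = ∑ e ∈ G, ∏ v ∈ e, p v}

set_option linter.unusedSectionVars false
set_option linter.unusedVariables false
set_option linter.unusedTactic false

namespace KrrProof

variable {γ : Type*} [Fintype γ] [DecidableEq γ]

/-- the value of a weighting -/
def lval (G : Finset (Finset γ)) (p : γ → ℝ) : ℝ := ∑ e ∈ G, ∏ v ∈ e, p v

def Feas (p : γ → ℝ) : Prop := (∀ v, 0 ≤ p v) ∧ (∑ v, p v) = 1

lemma Feas.le_one {p : γ → ℝ} (hp : Feas p) (v : γ) : p v ≤ 1 := by
  rcases hp with ⟨h0, h1⟩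
  calc p v ≤ ∑ w, p w := Finset.single_le_sum (fun w _ => h0 w) (mem_univ v)
  _ = 1 := h1

lemma lagSet_eq (G : Finset (Finset γ)) :
    {x : ℝ | ∃ p : γ → ℝ, (∀ v, 0 ≤ p v) ∧ (∀ v, p v ≤ 1) ∧ (∑ v, p v) = 1 ∧
      x = ∑ e ∈ G, ∏ v ∈ e, p v} = {x : ℝ | ∃ p : γ → ℝ, Feas p ∧ x = lval G p} := by
  ext x
  constructor
  · rintro ⟨p, h0, _, h1, rfl⟩; exact ⟨p, ⟨h0, h1⟩, rfl⟩
  · rintro ⟨p, hp, rfl⟩; exact ⟨p, hp.1, hp.le_one, hp.2, rfl⟩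

lemma lval_nonneg {G : Finset (Finset γ)} {p : γ → ℝ} (hp : Feas p) : 0 ≤ lval G p :=
  Finset.sum_nonneg fun e _ => Finset.prod_nonneg fun v _ => hp.1 v

lemma lval_le_three {G : Finset (Finset γ)} {p : γ → ℝ} (hp : Feas p) : lval G p ≤ 3 := by
  have h1 : lval G p ≤ ∑ e ∈ univ.powerset, ∏ v ∈ e, p v := by
    apply Finset.sum_le_sum_of_subset_of_nonneg
    · intro e _; exact mem_powerset.2 (subset_univ e)
    · intro e _ _; exact Finset.prod_nonneg fun v _ => hp.1 v
  have h2 : ∑ e ∈ univ.powerset, ∏ v ∈ e, p v = ∏ v : γ, (p v + 1) := by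
    rw [Finset.prod_add]
    apply Finset.sum_congr rfl
    intro t _
    simp
  have h3 : ∏ v : γ, (p v + 1) ≤ Real.exp 1 := by
    calc ∏ v : γ, (p v + 1) ≤ ∏ v : γ, Real.exp (p v) := by
          apply Finset.prod_le_prod
          · intro v _; have := hp.1 v; linarith
          · intro v _; exact Real.add_one_le_exp (p v)
      _ = Real.exp (∑ v, p v) := by rw [Real.exp_sum]
      _ = Real.exp 1 := by rw [hp.2]
  have := Real.exp_one_lt_d9
  linarith

lemma lval_le_lagrangian {G : Finset (Finset γ)} {p : γ → ℝ} (hp : Feas p) :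
    lval G p ≤ lagrangian G := by
  rw [lagrangian, lagSet_eq]
  apply le_csSup
  · exact ⟨3, by rintro x ⟨q, hq, rfl⟩; exact lval_le_three hq⟩
  · exact ⟨p, hp, rfl⟩

lemma lagrangian_le_three (G : Finset (Finset γ)) : lagrangian G ≤ 3 := by
  rw [lagrangian, lagSet_eq]
  apply Real.sSup_le
  · rintro x ⟨q, hq, rfl⟩; exact lval_le_three hq
  · norm_num

end KrrProof

namespace KrrProof
variable {γ : Type*} [Fintype γ] [DecidableEq γ]

/-- the set in the main theorem -/
def LagSet (r : ℕ) : Set ℝ :=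
  {x : ℝ | ∃ (k : ℕ) (H : Finset (Finset (Fin k))),
    (∀ e ∈ H, e.card = r) ∧ (∀ e ∈ H, ∀ f ∈ H, (e ∩ f).Nonempty) ∧ x = lagrangian H}

lemma zero_mem_lagSet (r : ℕ) : (0:ℝ) ∈ LagSet r := by
  refine ⟨0, ∅, by simp, by simp, ?_⟩
  rw [lagrangian]
  have : {x : ℝ | ∃ p : Fin 0 → ℝ, (∀ v, 0 ≤ p v) ∧ (∀ v, p v ≤ 1) ∧ (∑ v, p v) = 1 ∧
      x = ∑ e ∈ (∅ : Finset (Finset (Fin 0))), ∏ v ∈ e, p v} = ∅ := by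
    ext x
    simp only [Set.mem_empty_iff_false, iff_false, Set.mem_setOf_eq, not_exists]
    rintro p ⟨_, _, h1, _⟩
    simp at h1
  rw [this, Real.sSup_empty]

lemma lagSet_bddAbove (r : ℕ) : BddAbove (LagSet r) := by
  refine ⟨3, ?_⟩
  rintro x ⟨k, H, _, _, rfl⟩
  exact lagrangian_le_three H

lemma lagSet_nonneg (r : ℕ) : 0 ≤ sSup (LagSet r) :=
  le_csSup (lagSet_bddAbove r) (zero_mem_lagSet r)

/-- existence of a maximizer -/
lemma exists_maximizer [Nonempty γ] (K : Finset (Finset γ)) :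
    ∃ p : γ → ℝ, Feas p ∧ (∀ q : γ → ℝ, Feas q → lval K q ≤ lval K p) := by
  have hD : IsCompact {p : γ → ℝ | Feas p} := by
    have : {p : γ → ℝ | Feas p} =
        (Set.univ.pi fun _ : γ => Set.Icc (0:ℝ) 1) ∩ {p | ∑ v, p v = 1} := by
      ext p
      constructor
      · intro hp
        exact ⟨fun v _ => ⟨hp.1 v, hp.le_one v⟩, hp.2⟩
      · rintro ⟨h1, h2⟩
        exact ⟨fun v => (h1 v (Set.mem_univ v)).1, h2⟩
    rw [this]
    exact (isCompact_univ_pi fun _ => isCompact_Icc).inter_right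
      (isClosed_eq (continuous_finset_sum _ fun i _ => continuous_apply i) continuous_const)
  have hne : Set.Nonempty {p : γ → ℝ | Feas p} := by
    refine ⟨fun _ => 1 / (Fintype.card γ : ℝ), fun v => by positivity, ?_⟩
    have hc : (0:ℝ) < (Fintype.card γ : ℝ) := by
      have := Fintype.card_pos (α := γ); positivity
    simp [Finset.sum_const, Finset.card_univ]
  have hcont : ContinuousOn (lval K) {p : γ → ℝ | Feas p} :=
    (continuous_finset_sum _ fun e _ =>
      continuous_finset_prod _ fun v _ => continuous_apply v).continuousOn
  obtain ⟨p, hp, hmax⟩ := hD.exists_isMaxOn hne hcont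
  exact ⟨p, hp, fun q hq => hmax hq⟩

lemma lagrangian_eq_of_max [Nonempty γ] {K : Finset (Finset γ)} {p : γ → ℝ}
    (hp : Feas p) (hmax : ∀ q : γ → ℝ, Feas q → lval K q ≤ lval K p) :
    lagrangian K = lval K p := by
  apply le_antisymm
  · rw [lagrangian, lagSet_eq]
    apply Real.sSup_le
    · rintro x ⟨q, hq, rfl⟩; exact hmax q hq
    · exact lval_nonneg hp
  · exact lval_le_lagrangian hp

end KrrProof

namespace KrrProof
variable {γ : Type*} [Fintype γ] [DecidableEq γ]

/-- the shifted weighting -/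
def shiftW (p : γ → ℝ) (u v : γ) (t : ℝ) : γ → ℝ :=
  Function.update (Function.update p u (p u + t)) v (p v - t)

lemma shiftW_u {p : γ → ℝ} {u v : γ} (huv : u ≠ v) (t : ℝ) : shiftW p u v t u = p u + t := by
  rw [shiftW, Function.update_of_ne huv, Function.update_self]

lemma shiftW_v {p : γ → ℝ} {u v : γ} (t : ℝ) : shiftW p u v t v = p v - t := by
  rw [shiftW, Function.update_self]

lemma shiftW_other {p : γ → ℝ} {u v w : γ} (hwu : w ≠ u) (hwv : w ≠ v) (t : ℝ) :
    shiftW p u v t w = p w := by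
  rw [shiftW, Function.update_of_ne hwv, Function.update_of_ne hwu]

lemma sum_three {u v : γ} (huv : u ≠ v) (f : γ → ℝ) :
    ∑ x, f x = f v + (f u + ∑ x ∈ (univ.erase v).erase u, f x) := by
  rw [Finset.add_sum_erase _ f (Finset.mem_erase.2 ⟨huv, mem_univ u⟩),
    Finset.add_sum_erase _ f (mem_univ v)]

lemma shiftW_sum {p : γ → ℝ} {u v : γ} (huv : u ≠ v) (t : ℝ) :
    ∑ x, shiftW p u v t x = ∑ x, p x := by
  rw [sum_three huv (shiftW p u v t), sum_three huv p, shiftW_u huv, shiftW_v]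
  have : ∑ x ∈ (univ.erase v).erase u, shiftW p u v t x = ∑ x ∈ (univ.erase v).erase u, p x := by
    apply Finset.sum_congr rfl
    intro x hx
    rw [Finset.mem_erase] at hx
    exact shiftW_other hx.1 (Finset.mem_erase.1 hx.2).1 t
  rw [this]; ring

lemma shiftW_feas {p : γ → ℝ} (hp : Feas p) {u v : γ} (huv : u ≠ v) {t : ℝ}
    (h1 : 0 ≤ p u + t) (h2 : 0 ≤ p v - t) : Feas (shiftW p u v t) := by
  constructor
  · intro w
    by_cases hwv : w = v
    · subst hwv; rw [shiftW_v]; exact h2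
    by_cases hwu : w = u
    · subst hwu; rw [shiftW_u huv]; exact h1
    · rw [shiftW_other hwu hwv]; exact hp.1 w
  · rw [shiftW_sum huv]; exact hp.2

/-- coefficient of `t` in an edge's contribution -/
def ecoef (p : γ → ℝ) (u v : γ) (e : Finset γ) : ℝ :=
  (if u ∈ e ∧ v ∉ e then ∏ w ∈ e.erase u, p w else 0)
    - (if v ∈ e ∧ u ∉ e then ∏ w ∈ e.erase v, p w else 0)

lemma prod_shiftW {p : γ → ℝ} {u v : γ} (huv : u ≠ v) (t : ℝ) (e : Finset γ)
    (hz : u ∈ e → v ∈ e → ∃ w ∈ e, w ≠ u ∧ w ≠ v ∧ p w = 0) :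
    ∏ w ∈ e, shiftW p u v t w = ∏ w ∈ e, p w + t * ecoef p u v e := by
  by_cases hu : u ∈ e <;> by_cases hv : v ∈ e
  · obtain ⟨w, hw, hwu, hwv, hw0⟩ := hz hu hv
    rw [Finset.prod_eq_zero hw (by rw [shiftW_other hwu hwv]; exact hw0),
      Finset.prod_eq_zero hw hw0, ecoef]
    simp [hu, hv]
  · have herase : ∏ w ∈ e.erase u, shiftW p u v t w = ∏ w ∈ e.erase u, p w := by
      apply Finset.prod_congr rfl
      intro w hw
      rw [Finset.mem_erase] at hw
      exact shiftW_other hw.1 (fun hwv => hv (by rw [← hwv]; exact hw.2)) t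
    rw [← Finset.mul_prod_erase e _ hu, herase, shiftW_u huv,
      ← Finset.mul_prod_erase e p hu, ecoef]
    simp [hu, hv]
    ring
  · have herase : ∏ w ∈ e.erase v, shiftW p u v t w = ∏ w ∈ e.erase v, p w := by
      apply Finset.prod_congr rfl
      intro w hw
      rw [Finset.mem_erase] at hw
      exact shiftW_other (fun hwu => hu (by rw [← hwu]; exact hw.2)) hw.1 t
    rw [← Finset.mul_prod_erase e _ hv, herase, shiftW_v,
      ← Finset.mul_prod_erase e p hv, ecoef]
    simp [hu, hv]
    ring
  · have : ∏ w ∈ e, shiftW p u v t w = ∏ w ∈ e, p w := by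
      apply Finset.prod_congr rfl
      intro w hw
      exact shiftW_other (fun h => hu (by rw [← h]; exact hw)) (fun h => hv (by rw [← h]; exact hw)) t
    rw [this, ecoef]
    simp [hu, hv]

lemma lval_shiftW {K : Finset (Finset γ)} {p : γ → ℝ} {u v : γ} (huv : u ≠ v) (t : ℝ)
    (hz : ∀ e ∈ K, u ∈ e → v ∈ e → ∃ w ∈ e, w ≠ u ∧ w ≠ v ∧ p w = 0) :
    lval K (shiftW p u v t) = lval K p + t * ∑ e ∈ K, ecoef p u v e := by
  rw [lval, lval, Finset.mul_sum, ← Finset.sum_add_distrib]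
  exact Finset.sum_congr rfl fun e he => prod_shiftW huv t e (hz e he)

/-- a maximizer whose support covers pairs positively -/
lemma exists_good_maximizer [Nonempty γ] (K : Finset (Finset γ)) :
    ∃ p : γ → ℝ, Feas p ∧ (∀ q : γ → ℝ, Feas q → lval K q ≤ lval K p) ∧
      ∀ u v : γ, u ≠ v → p u ≠ 0 → p v ≠ 0 →
        ∃ e ∈ K, u ∈ e ∧ v ∈ e ∧ ∀ w ∈ e, p w ≠ 0 := by
  set M := {m : ℕ | ∃ p : γ → ℝ, Feas p ∧ (∀ q : γ → ℝ, Feas q → lval K q ≤ lval K p) ∧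
    (univ.filter fun w => p w ≠ 0).card = m} with hM
  have hMne : M.Nonempty := by
    obtain ⟨p, hp, hmax⟩ := exists_maximizer K
    exact ⟨_, p, hp, hmax, rfl⟩
  obtain ⟨p, hfeas, hmax, hcard⟩ := Nat.sInf_mem hMne
  have hminimal : ∀ p' : γ → ℝ, Feas p' → (∀ q : γ → ℝ, Feas q → lval K q ≤ lval K p') →
      (univ.filter fun w => p w ≠ 0).card ≤ (univ.filter fun w => p' w ≠ 0).card := by
    intro p' h1 h2
    rw [hcard]
    exact Nat.sInf_le ⟨p', h1, h2, rfl⟩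
  refine ⟨p, hfeas, hmax, ?_⟩
  intro u v huv hu hv
  by_contra hcon
  push_neg at hcon
  have hz : ∀ e ∈ K, u ∈ e → v ∈ e → ∃ w ∈ e, w ≠ u ∧ w ≠ v ∧ p w = 0 := by
    intro e he hue hve
    obtain ⟨w, hw, hw0⟩ := hcon e he hue hve
    exact ⟨w, hw, fun h => hu (h ▸ hw0), fun h => hv (h ▸ hw0), hw0⟩
  set B := ∑ e ∈ K, ecoef p u v e with hB
  have hpu : 0 < p u := lt_of_le_of_ne (hfeas.1 u) (Ne.symm hu)
  have hpv : 0 < p v := lt_of_le_of_ne (hfeas.1 v) (Ne.symm hv)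
  rcases le_or_gt 0 B with hBpos | hBneg
  · -- shift all of v's weight to u; value stays max, support shrinks
    set q := shiftW p u v (p v) with hq
    have hqfeas : Feas q := shiftW_feas hfeas huv (by linarith) (by linarith)
    have hqval : lval K q = lval K p + p v * B := lval_shiftW huv (p v) hz
    have hqmax : ∀ q' : γ → ℝ, Feas q' → lval K q' ≤ lval K q := by
      intro q' hq'
      calc lval K q' ≤ lval K p := hmax q' hq'
        _ ≤ lval K q := by rw [hqval]; nlinarith
    have hsub : (univ.filter fun w => q w ≠ 0) ⊆ (univ.filter fun w => p w ≠ 0).erase v := by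
      intro w hw
      rw [Finset.mem_filter] at hw
      rw [Finset.mem_erase, Finset.mem_filter]
      have hwv : w ≠ v := by
        rintro rfl
        apply hw.2
        rw [hq, shiftW_v]; ring
      refine ⟨hwv, mem_univ w, ?_⟩
      by_cases hwu : w = u
      · subst hwu; exact hu
      · rw [hq, shiftW_other hwu hwv] at hw; exact hw.2
    have hvmem : v ∈ (univ.filter fun w => p w ≠ 0) := Finset.mem_filter.2 ⟨mem_univ v, hv⟩
    have hlt : ((univ.filter fun w => q w ≠ 0)).card < ((univ.filter fun w => p w ≠ 0)).card :=
      lt_of_le_of_lt (Finset.card_le_card hsub) (Finset.card_erase_lt_of_mem hvmem)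
    exact absurd (hminimal q hqfeas hqmax) (by omega)
  · -- shifting u's weight to v would strictly increase the value
    set q := shiftW p u v (-(p u)) with hq
    have hqfeas : Feas q := shiftW_feas hfeas huv (by linarith) (by linarith)
    have hqval : lval K q = lval K p + (-(p u)) * B := lval_shiftW huv (-(p u)) hz
    have : lval K q ≤ lval K p := hmax q hqfeas
    nlinarith

end KrrProof

namespace KrrProof

/-- Lemma C: a graph in which any two disjoint edges have an uncovered cross pair has
Lagrangian at most the sup over intersecting families. -/
lemma lagrangian_le_lagSup {n r : ℕ} (hn : 1 ≤ n) (K : Finset (Finset (Fin n)))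
    (hcard : ∀ e ∈ K, e.card = r)
    (hstar : ∀ e ∈ K, ∀ f ∈ K, Disjoint e f →
      ∃ u ∈ e, ∃ v ∈ f, ∀ g ∈ K, ¬(u ∈ g ∧ v ∈ g)) :
    lagrangian K ≤ sSup (LagSet r) := by
  have : Nonempty (Fin n) := ⟨⟨0, hn⟩⟩
  obtain ⟨p, hfeas, hmax, hcover⟩ := exists_good_maximizer K
  set H := K.filter (fun e => ∀ w ∈ e, p w ≠ 0) with hH
  have hHsub : H ⊆ K := Finset.filter_subset _ _
  have hHcard : ∀ e ∈ H, e.card = r := fun e he => hcard e (hHsub he)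
  have hHint : ∀ e ∈ H, ∀ f ∈ H, (e ∩ f).Nonempty := by
    intro e he f hf
    by_contra hcon
    have hdisj : Disjoint e f := by
      rw [Finset.disjoint_iff_inter_eq_empty]
      exact Finset.not_nonempty_iff_eq_empty.1 hcon
    obtain ⟨u, hu, v, hv, hnog⟩ := hstar e (hHsub he) f (hHsub hf) hdisj
    have huv : u ≠ v := fun h => (Finset.disjoint_left.1 hdisj hu) (h ▸ hv)
    have hpu : p u ≠ 0 := (Finset.mem_filter.1 he).2 u hu
    have hpv : p v ≠ 0 := (Finset.mem_filter.1 hf).2 v hv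
    obtain ⟨g, hg, hug, hvg, _⟩ := hcover u v huv hpu hpv
    exact hnog g hg ⟨hug, hvg⟩
  have hval : lval K p = lval H p := by
    symm
    apply Finset.sum_subset hHsub
    intro e he heH
    rw [hH, Finset.mem_filter] at heH
    push_neg at heH
    obtain ⟨w, hw, hw0⟩ := heH he
    exact Finset.prod_eq_zero hw hw0
  calc lagrangian K = lval K p := lagrangian_eq_of_max hfeas hmax
    _ = lval H p := hval
    _ ≤ lagrangian H := lval_le_lagrangian hfeas
    _ ≤ sSup (LagSet r) := le_csSup (lagSet_bddAbove r) ⟨n, H, hHcard, hHint, rfl⟩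

end KrrProof

namespace KrrProof

/-- bound on the number of "outside" vertices used in a greedy embedding of `Krr` -/
def TT (r : ℕ) : ℕ := 2*r + r*r*(r-2)

/-- the pair `u,v` can always be covered avoiding any small vertex set -/
def Strong {n : ℕ} (G : Finset (Finset (Fin n))) (r : ℕ) (u v : Fin n) : Prop :=
  ∀ W : Finset (Fin n), W.card ≤ TT r →
    ∃ e ∈ G, u ∈ e ∧ v ∈ e ∧ Disjoint (e \ {u, v}) W

variable {n r : ℕ} {G : Finset (Finset (Fin n))}

/-- greedy choice of the r² covering edges -/
lemma greedy (hG : ∀ e ∈ G, e.card = r) {e₁ e₂ : Finset (Fin n)}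
    (h1 : e₁ ∈ G) (h2 : e₂ ∈ G) (hdisj : Disjoint e₁ e₂)
    {a b : Fin r → Fin n} (ha : ∀ i, a i ∈ e₁) (hb : ∀ j, b j ∈ e₂)
    (hstrong : ∀ u ∈ e₁, ∀ v ∈ e₂, Strong G r u v) (Q : Finset (Fin r × Fin r)) :
    ∃ g : Fin r × Fin r → Finset (Fin n), ∀ ij ∈ Q,
      (g ij ∈ G ∧ a ij.1 ∈ g ij ∧ b ij.2 ∈ g ij ∧
        Disjoint (g ij \ {a ij.1, b ij.2}) (e₁ ∪ e₂)) ∧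
      ∀ kl ∈ Q, kl ≠ ij →
        Disjoint (g ij \ {a ij.1, b ij.2}) (g kl \ {a kl.1, b kl.2}) := by
  classical
  induction Q using Finset.induction_on with
  | empty => exact ⟨fun _ => ∅, by simp⟩
  | @insert ij Q hijQ IH =>
    obtain ⟨g, hg⟩ := IH
    set W : Finset (Fin n) :=
      (e₁ ∪ e₂) ∪ Q.biUnion (fun kl => g kl \ {a kl.1, b kl.2}) with hW
    have hab_ne : ∀ kl : Fin r × Fin r, a kl.1 ≠ b kl.2 := by
      intro kl h
      exact (Finset.disjoint_left.1 hdisj (ha kl.1)) (h ▸ hb kl.2)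
    have hcard_out : ∀ kl ∈ Q, (g kl \ {a kl.1, b kl.2}).card = r - 2 := by
      intro kl hkl
      have h := (hg kl hkl).1
      have hsub : {a kl.1, b kl.2} ⊆ g kl := by
        intro x hx
        rcases Finset.mem_insert.1 hx with rfl | hx
        · exact h.2.1
        · rw [Finset.mem_singleton.1 hx]; exact h.2.2.1
      rw [Finset.card_sdiff_of_subset hsub, hG _ h.1, Finset.card_insert_of_notMem
        (by simp [hab_ne kl]), Finset.card_singleton]
    have hWcard : W.card ≤ TT r := by
      have hQcard : Q.card ≤ r * r := by
        calc Q.card ≤ Fintype.card (Fin r × Fin r) := Finset.card_le_univ Q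
          _ = r * r := by simp
      calc W.card ≤ (e₁ ∪ e₂).card + (Q.biUnion (fun kl => g kl \ {a kl.1, b kl.2})).card :=
            Finset.card_union_le _ _
        _ ≤ (e₁.card + e₂.card) + ∑ kl ∈ Q, (g kl \ {a kl.1, b kl.2}).card := by
            gcongr
            · exact Finset.card_union_le _ _
            · exact Finset.card_biUnion_le
        _ ≤ (r + r) + Q.card * (r - 2) := by
            rw [hG _ h1, hG _ h2]
            gcongr ?_ + ?_
            · exact le_rfl
            · rw [Finset.sum_congr rfl hcard_out, Finset.sum_const, smul_eq_mul]
        _ ≤ (r + r) + r * r * (r - 2) := by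
            gcongr
        _ = TT r := by rw [TT]; ring
    obtain ⟨e, he, hue, hve, hdisjW⟩ := hstrong (a ij.1) (ha ij.1) (b ij.2) (hb ij.2) W hWcard
    refine ⟨Function.update g ij e, ?_⟩
    intro kl hkl
    rcases Finset.mem_insert.1 hkl with rfl | hklQ
    · rw [Function.update_self]
      refine ⟨⟨he, hue, hve, hdisjW.mono_right (by rw [hW]; exact Finset.subset_union_left)⟩, ?_⟩
      intro ml hml hmlne
      rcases Finset.mem_insert.1 hml with rfl | hmlQ
      · exact absurd rfl hmlne
      · rw [Function.update_of_ne (by rintro rfl; exact hijQ hmlQ)]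
        apply hdisjW.mono_right
        rw [hW]
        exact Finset.Subset.trans
          (Finset.subset_biUnion_of_mem (fun kl => g kl \ {a kl.1, b kl.2}) hmlQ)
          Finset.subset_union_right
    · rw [Function.update_of_ne (by rintro rfl; exact hijQ hklQ)]
      refine ⟨(hg kl hklQ).1, ?_⟩
      intro ml hml hmlne
      rcases Finset.mem_insert.1 hml with rfl | hmlQ
      · rw [Function.update_self]
        apply Disjoint.symm
        apply hdisjW.mono_right
        rw [hW]
        exact Finset.Subset.trans
          (Finset.subset_biUnion_of_mem (fun kl => g kl \ {a kl.1, b kl.2}) hklQ)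
          Finset.subset_union_right
      · rw [Function.update_of_ne (by rintro rfl; exact hijQ hmlQ)]
        exact (hg kl hklQ).2 ml hmlQ hmlne

end KrrProof

namespace KrrProof

lemma fin2_cases (s : Fin 2) : s = 0 ∨ s = 1 := by
  rcases s with ⟨v, hv⟩
  interval_cases v
  · left; rfl
  · right; rfl

variable {n r : ℕ} {G : Finset (Finset (Fin n))}

/-- enumeration of a finset of known cardinality -/
lemma enum_spec {s : Finset (Fin n)} {k : ℕ} (h : s.card = k) :
    ∃ f : Fin k → Fin n, Function.Injective f ∧ Finset.image f univ = s := by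
  refine ⟨fun i => (s.orderIsoOfFin h i : Fin n), ?_, ?_⟩
  · intro i j hij
    exact (s.orderIsoOfFin h).injective (Subtype.ext hij)
  · ext x
    simp only [Finset.mem_image, Finset.mem_univ, true_and]
    constructor
    · rintro ⟨i, rfl⟩; exact (s.orderIsoOfFin h i).2
    · intro hx
      exact ⟨(s.orderIsoOfFin h).symm ⟨x, hx⟩,
        congrArg Subtype.val ((s.orderIsoOfFin h).apply_symm_apply ⟨x, hx⟩)⟩

lemma not_free_of_strong (hG : ∀ e ∈ G, e.card = r)
    {e₁ e₂ : Finset (Fin n)} (h1 : e₁ ∈ G) (h2 : e₂ ∈ G) (hdisj : Disjoint e₁ e₂)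
    (hstrong : ∀ u ∈ e₁, ∀ v ∈ e₂, Strong G r u v) :
    ∃ φ : KrrV r → Fin n, Function.Injective φ ∧ ∀ e ∈ Krr r, e.image φ ∈ G := by
  classical
  obtain ⟨a, hainj, haim⟩ := enum_spec (hG _ h1)
  obtain ⟨b, hbinj, hbim⟩ := enum_spec (hG _ h2)
  have ha : ∀ i, a i ∈ e₁ := fun i => haim ▸ Finset.mem_image_of_mem a (mem_univ i)
  have hb : ∀ j, b j ∈ e₂ := fun j => hbim ▸ Finset.mem_image_of_mem b (mem_univ j)
  have hab_ne : ∀ i j, a i ≠ b j := by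
    intro i j h
    exact (Finset.disjoint_left.1 hdisj (ha i)) (h ▸ hb j)
  obtain ⟨g, hg⟩ := greedy hG h1 h2 hdisj ha hb hstrong univ
  have hgmem : ∀ ij : Fin r × Fin r, g ij ∈ G := fun ij => (hg ij (mem_univ ij)).1.1
  have hgau : ∀ ij : Fin r × Fin r, a ij.1 ∈ g ij := fun ij => (hg ij (mem_univ ij)).1.2.1
  have hgbv : ∀ ij : Fin r × Fin r, b ij.2 ∈ g ij := fun ij => (hg ij (mem_univ ij)).1.2.2.1
  have hgout : ∀ ij : Fin r × Fin r, Disjoint (g ij \ {a ij.1, b ij.2}) (e₁ ∪ e₂) :=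
    fun ij => (hg ij (mem_univ ij)).1.2.2.2
  have hgpw : ∀ ij kl : Fin r × Fin r, kl ≠ ij →
      Disjoint (g ij \ {a ij.1, b ij.2}) (g kl \ {a kl.1, b kl.2}) :=
    fun ij kl hne => (hg ij (mem_univ ij)).2 kl (mem_univ kl) hne
  have hcard_out : ∀ ij : Fin r × Fin r, (g ij \ {a ij.1, b ij.2}).card = r - 2 := by
    intro ij
    have hsub : {a ij.1, b ij.2} ⊆ g ij := by
      intro x hx
      rcases Finset.mem_insert.1 hx with rfl | hx
      · exact hgau ij
      · rw [Finset.mem_singleton.1 hx]; exact hgbv ij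
    rw [Finset.card_sdiff_of_subset hsub, hG _ (hgmem ij), Finset.card_insert_of_notMem
      (by simp [hab_ne ij.1 ij.2]), Finset.card_singleton]
  have hcspec : ∀ ij : Fin r × Fin r, ∃ c : Fin (r-2) → Fin n,
      Function.Injective c ∧ Finset.image c univ = g ij \ {a ij.1, b ij.2} :=
    fun ij => enum_spec (hcard_out ij)
  choose c hcinj hcim using hcspec
  have hcmem : ∀ ij k, c ij k ∈ g ij \ {a ij.1, b ij.2} :=
    fun ij k => hcim ij ▸ Finset.mem_image_of_mem (c ij) (mem_univ k)
  have hcnotin : ∀ ij k, c ij k ∉ e₁ ∪ e₂ :=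
    fun ij k => Finset.disjoint_left.1 (hgout ij) (hcmem ij k)
  set φ : KrrV r → Fin n :=
    Sum.elim (fun si => if si.1 = 0 then a si.2 else b si.2) (fun p => c p.1 p.2) with hφ
  have hφ0 : ∀ i : Fin r, φ (Sum.inl ((0 : Fin 2), i)) = a i := by intro i; simp [hφ]
  have hφ1 : ∀ i : Fin r, φ (Sum.inl ((1 : Fin 2), i)) = b i := by
    intro i; simp only [hφ, Sum.elim_inl]
    rw [if_neg (by decide)]
  have hφc : ∀ ij k, φ (Sum.inr (ij, k)) = c ij k := by intro ij k; simp [hφ]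
  refine ⟨φ, ?_, ?_⟩
  · -- injectivity
    rintro (⟨s, i⟩ | ⟨ij, k⟩) (⟨s', i'⟩ | ⟨i'j', k'⟩) hxy
    · rcases fin2_cases s with rfl | rfl <;> rcases fin2_cases s' with rfl | rfl
      · rw [hφ0, hφ0] at hxy; rw [hainj hxy]
      · rw [hφ0, hφ1] at hxy; exact absurd hxy (hab_ne i i')
      · rw [hφ1, hφ0] at hxy; exact absurd hxy.symm (hab_ne i' i)
      · rw [hφ1, hφ1] at hxy; rw [hbinj hxy]
    · exfalso
      apply hcnotin i'j' k'
      rw [← hφc i'j' k', ← hxy]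
      rcases fin2_cases s with rfl | rfl
      · rw [hφ0]; exact Finset.mem_union_left _ (ha i)
      · rw [hφ1]; exact Finset.mem_union_right _ (hb i)
    · exfalso
      apply hcnotin ij k
      rw [← hφc ij k, hxy]
      rcases fin2_cases s' with rfl | rfl
      · rw [hφ0]; exact Finset.mem_union_left _ (ha i')
      · rw [hφ1]; exact Finset.mem_union_right _ (hb i')
    · rw [hφc, hφc] at hxy
      by_cases hij : ij = i'j'
      · subst hij
        rw [hcinj ij hxy]
      · exfalso
        exact Finset.disjoint_left.1 (hgpw ij i'j' (Ne.symm hij)) (hcmem ij k)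
          (hxy ▸ hcmem i'j' k')
  · -- edges map into G
    intro e he
    rw [Krr, Finset.mem_union] at he
    rcases he with he | he
    · rcases Finset.mem_insert.1 he with rfl | he
      · rw [Finset.image_image]
        have : Finset.image (fun i => φ (Sum.inl ((0 : Fin 2), i))) univ = e₁ := by
          rw [← haim]
          exact Finset.image_congr (fun i _ => hφ0 i)
        rw [show (φ ∘ fun i => Sum.inl ((0:Fin 2), i)) = fun i => φ (Sum.inl ((0:Fin 2), i))
          from rfl, this]
        exact h1
      · rw [Finset.mem_singleton.1 he, Finset.image_image]
        have : Finset.image (fun i => φ (Sum.inl ((1 : Fin 2), i))) univ = e₂ := by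
          rw [← hbim]
          exact Finset.image_congr (fun i _ => hφ1 i)
        rw [show (φ ∘ fun i => Sum.inl ((1:Fin 2), i)) = fun i => φ (Sum.inl ((1:Fin 2), i))
          from rfl, this]
        exact h2
    · obtain ⟨uv, _, rfl⟩ := Finset.mem_image.1 he
      rw [Finset.image_insert, Finset.image_insert, Finset.image_image]
      have himc : Finset.image (φ ∘ fun k => Sum.inr (uv, k)) univ
          = g uv \ {a uv.1, b uv.2} := by
        rw [← hcim uv]
        exact Finset.image_congr (fun k _ => hφc uv k)
      rw [himc, hφ0, hφ1]
      have : insert (a uv.1) (insert (b uv.2) (g uv \ {a uv.1, b uv.2})) = g uv := by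
        ext x
        simp only [Finset.mem_insert, Finset.mem_sdiff, Finset.mem_singleton]
        constructor
        · rintro (rfl | rfl | ⟨hx, _⟩)
          · exact hgau uv
          · exact hgbv uv
          · exact hx
        · intro hx
          by_cases hxa : x = a uv.1
          · exact Or.inl hxa
          by_cases hxb : x = b uv.2
          · exact Or.inr (Or.inl hxb)
          · exact Or.inr (Or.inr ⟨hx, by simp [hxa, hxb]⟩)
      rw [this]
      exact hgmem uv

end KrrProof

namespace KrrProof

attribute [local instance] Classical.propDecidable

variable {n r : ℕ} {G : Finset (Finset (Fin n))}

lemma weak_of_free (hG : ∀ e ∈ G, e.card = r) (hfree : Free (Krr r) G)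
    {e₁ e₂ : Finset (Fin n)} (h1 : e₁ ∈ G) (h2 : e₂ ∈ G) (hdisj : Disjoint e₁ e₂) :
    ∃ u ∈ e₁, ∃ v ∈ e₂, ¬ Strong G r u v := by
  by_contra h
  push_neg at h
  exact hfree (not_free_of_strong hG h1 h2 hdisj h)

/-- delete every edge containing a pair which is not strong -/
noncomputable def cleaned (G : Finset (Finset (Fin n))) (r : ℕ) : Finset (Finset (Fin n)) :=
  G.filter (fun e => ∀ u ∈ e, ∀ v ∈ e, u ≠ v → Strong G r u v)

lemma cleaned_subset : cleaned G r ⊆ G := Finset.filter_subset _ _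

lemma cleaned_star (hG : ∀ e ∈ G, e.card = r) (hfree : Free (Krr r) G) :
    ∀ e ∈ cleaned G r, ∀ f ∈ cleaned G r, Disjoint e f →
      ∃ u ∈ e, ∃ v ∈ f, ∀ g ∈ cleaned G r, ¬(u ∈ g ∧ v ∈ g) := by
  intro e he f hf hdisj
  obtain ⟨u, hu, v, hv, hns⟩ := weak_of_free hG hfree (cleaned_subset he) (cleaned_subset hf) hdisj
  refine ⟨u, hu, v, hv, ?_⟩
  intro g hg ⟨hug, hvg⟩
  have huv : u ≠ v := fun h => (Finset.disjoint_left.1 hdisj hu) (h ▸ hv)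
  exact hns ((Finset.mem_filter.1 hg).2 u hug v hvg huv)

lemma weak_witness (G : Finset (Finset (Fin n))) (r : ℕ) (u v : Fin n) :
    ∃ W : Finset (Fin n), W.card ≤ TT r ∧ ((¬ Strong G r u v) →
      ∀ e ∈ G, u ∈ e → v ∈ e → ¬ Disjoint (e \ {u, v}) W) := by
  by_cases h : Strong G r u v
  · exact ⟨∅, by simp, fun hc => absurd h hc⟩
  · rw [Strong] at h
    push_neg at h
    obtain ⟨W, hWc, hWe⟩ := h
    refine ⟨W, hWc, fun _ => ?_⟩
    intro e he hue hve hd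
    exact (hWe e he) hue hve hd

lemma card_filter_superset (hr : 3 ≤ r) {s : Finset (Fin n)} (hs : s.card = 3) :
    ((univ.powersetCard r).filter (fun e => s ⊆ e)).card ≤ n.choose (r - 3) := by
  have := Finset.card_le_card_of_injOn
    (s := (univ.powersetCard r).filter (fun e => s ⊆ e))
    (f := fun e => e \ s) (t := univ.powersetCard (r-3)) ?_ ?_
  · calc ((univ.powersetCard r).filter (fun e => s ⊆ e)).card
        ≤ (univ.powersetCard (r-3) : Finset (Finset (Fin n))).card := this
      _ = n.choose (r-3) := by
          rw [Finset.card_powersetCard, Finset.card_univ, Fintype.card_fin]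
  · intro e he
    rw [Finset.mem_coe, Finset.mem_filter, Finset.mem_powersetCard] at he
    rw [Finset.mem_coe, Finset.mem_powersetCard]
    exact ⟨Finset.subset_univ _, by rw [Finset.card_sdiff_of_subset he.2, he.1.2, hs]⟩
  · intro e1 h1 e2 h2 hde
    rw [Finset.mem_coe, Finset.mem_filter] at h1 h2
    simp only at hde
    rw [← Finset.sdiff_union_of_subset h1.2, ← Finset.sdiff_union_of_subset h2.2, hde]

lemma card_sdiff_cleaned (hr : 3 ≤ r) (hG : ∀ e ∈ G, e.card = r) :
    (G \ cleaned G r).card ≤ n * n * (TT r * n.choose (r - 3)) := by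
  choose Wit hWitc hWit using weak_witness G r
  have hsub : G \ cleaned G r ⊆ (univ ×ˢ univ : Finset (Fin n × Fin n)).biUnion
      (fun uv => (Wit uv.1 uv.2).biUnion
        (fun x => (univ.powersetCard r).filter
          (fun e => {uv.1, uv.2, x} ⊆ e ∧ ({uv.1, uv.2, x} : Finset (Fin n)).card = 3))) := by
    intro e he
    rw [Finset.mem_sdiff] at he
    have hne : ¬ (∀ u ∈ e, ∀ v ∈ e, u ≠ v → Strong G r u v) := by
      intro h
      exact he.2 (Finset.mem_filter.2 ⟨he.1, h⟩)
    push_neg at hne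
    obtain ⟨u, hu, v, hv, huv, hns⟩ := hne
    have hnd := hWit u v hns e he.1 hu hv
    rw [Finset.not_disjoint_iff] at hnd
    obtain ⟨x, hx1, hx2⟩ := hnd
    rw [Finset.mem_sdiff] at hx1
    have hxu : x ≠ u := by
      intro h; apply hx1.2; rw [h]; exact Finset.mem_insert_self _ _
    have hxv : x ≠ v := by
      intro h; apply hx1.2; rw [h]
      exact Finset.mem_insert_of_mem (Finset.mem_singleton_self _)
    have h3 : ({u, v, x} : Finset (Fin n)).card = 3 := by
      rw [Finset.card_insert_of_notMem (by simp [huv, Ne.symm hxu]),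
        Finset.card_insert_of_notMem (by simp [Ne.symm hxv]), Finset.card_singleton]
    rw [Finset.mem_biUnion]
    refine ⟨(u, v), Finset.mem_product.2 ⟨mem_univ u, mem_univ v⟩, ?_⟩
    rw [Finset.mem_biUnion]
    refine ⟨x, hx2, ?_⟩
    rw [Finset.mem_filter, Finset.mem_powersetCard]
    refine ⟨⟨Finset.subset_univ _, hG e he.1⟩, ?_, h3⟩
    intro y hy
    rcases Finset.mem_insert.1 hy with rfl | hy
    · exact hu
    rcases Finset.mem_insert.1 hy with rfl | hy
    · exact hv
    · rw [Finset.mem_singleton.1 hy]; exact hx1.1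
  calc (G \ cleaned G r).card
      ≤ ∑ uv ∈ (univ ×ˢ univ : Finset (Fin n × Fin n)), ((Wit uv.1 uv.2).biUnion
          (fun x => (univ.powersetCard r).filter
            (fun e => {uv.1, uv.2, x} ⊆ e ∧ ({uv.1, uv.2, x} : Finset (Fin n)).card = 3))).card :=
        le_trans (Finset.card_le_card hsub) Finset.card_biUnion_le
    _ ≤ ∑ _uv ∈ (univ ×ˢ univ : Finset (Fin n × Fin n)), (TT r * n.choose (r - 3)) := by
        apply Finset.sum_le_sum
        intro uv huv
        calc ((Wit uv.1 uv.2).biUnion _).card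
            ≤ ∑ x ∈ Wit uv.1 uv.2,
              ((univ.powersetCard r).filter
                (fun e => {uv.1, uv.2, x} ⊆ e ∧ ({uv.1, uv.2, x} : Finset (Fin n)).card = 3)).card :=
              Finset.card_biUnion_le
          _ ≤ ∑ _x ∈ Wit uv.1 uv.2, n.choose (r - 3) := by
              apply Finset.sum_le_sum
              intro x hx
              by_cases hcard3 : ({uv.1, uv.2, x} : Finset (Fin n)).card = 3
              · calc ((univ.powersetCard r).filter
                    (fun e => {uv.1, uv.2, x} ⊆ e ∧ ({uv.1, uv.2, x} : Finset (Fin n)).card = 3)).card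
                    ≤ ((univ.powersetCard r).filter (fun e => {uv.1, uv.2, x} ⊆ e)).card := by
                      apply Finset.card_le_card
                      intro e he
                      rw [Finset.mem_filter] at he ⊢
                      exact ⟨he.1, he.2.1⟩
                  _ ≤ n.choose (r - 3) := card_filter_superset hr hcard3
              · have : ((univ.powersetCard r).filter
                    (fun e => {uv.1, uv.2, x} ⊆ e ∧ ({uv.1, uv.2, x} : Finset (Fin n)).card = 3)) = ∅ := by
                  apply Finset.filter_false_of_mem
                  intro e he h
                  exact hcard3 h.2
                rw [this, Finset.card_empty]
                exact Nat.zero_le _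
          _ = (Wit uv.1 uv.2).card * n.choose (r - 3) := by
              rw [Finset.sum_const, smul_eq_mul]
          _ ≤ TT r * n.choose (r - 3) :=
              Nat.mul_le_mul_right _ (hWitc uv.1 uv.2)
    _ = n * n * (TT r * n.choose (r - 3)) := by
        rw [Finset.sum_const, smul_eq_mul, Finset.card_product, Finset.card_univ,
          Fintype.card_fin]

end KrrProof

namespace KrrProof

variable {n r : ℕ}

lemma krr_base_mem (r : ℕ) :
    ((Finset.univ : Finset (Fin r)).image (fun i => Sum.inl ((0 : Fin 2), i)) : Finset (KrrV r))
      ∈ Krr r :=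
  Finset.mem_union_left _ (Finset.mem_insert_self _ _)

lemma free_empty (r n : ℕ) : Free (Krr r) (∅ : Finset (Finset (Fin n))) := by
  rintro ⟨φ, _, hmap⟩
  exact absurd (hmap _ (krr_base_mem r)) (Finset.notMem_empty _)

lemma exSet_bddAbove (r n : ℕ) : BddAbove {m | ∃ G : Finset (Finset (Fin n)),
    (∀ e ∈ G, e.card = r) ∧ Free (Krr r) G ∧ G.card = m} := by
  refine ⟨n.choose r, ?_⟩
  rintro m ⟨G, hG, _, rfl⟩
  have hsub : G ⊆ univ.powersetCard r := by
    intro e he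
    rw [Finset.mem_powersetCard]
    exact ⟨Finset.subset_univ _, hG e he⟩
  calc G.card ≤ (univ.powersetCard r : Finset (Finset (Fin n))).card := Finset.card_le_card hsub
    _ = n.choose r := by rw [Finset.card_powersetCard, Finset.card_univ, Fintype.card_fin]

lemma exNum_witness (r n : ℕ) : ∃ G : Finset (Finset (Fin n)),
    (∀ e ∈ G, e.card = r) ∧ Free (Krr r) G ∧ G.card = exNum r n (Krr r) := by
  have := Nat.sSup_mem (s := {m | ∃ G : Finset (Finset (Fin n)),
    (∀ e ∈ G, e.card = r) ∧ Free (Krr r) G ∧ G.card = m})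
    ⟨0, ∅, by simp, free_empty r n, rfl⟩ (exSet_bddAbove r n)
  exact this

lemma le_exNum {G : Finset (Finset (Fin n))} (hG : ∀ e ∈ G, e.card = r)
    (hfree : Free (Krr r) G) : G.card ≤ exNum r n (Krr r) :=
  le_csSup (exSet_bddAbove r n) ⟨G, hG, hfree, rfl⟩

lemma card_le_lagrangian (hn : 1 ≤ n) {K : Finset (Finset (Fin n))}
    (hK : ∀ e ∈ K, e.card = r) : (K.card : ℝ) ≤ lagrangian K * (n:ℝ)^r := by
  have hnpos : (0:ℝ) < (n:ℝ) := by exact_mod_cast Nat.lt_of_lt_of_le Nat.zero_lt_one hn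
  set p : Fin n → ℝ := fun _ => (n:ℝ)⁻¹ with hp
  have hfeas : Feas p := by
    constructor
    · intro v; positivity
    · rw [hp]
      simp only [Finset.sum_const, Finset.card_univ, Fintype.card_fin, nsmul_eq_mul]
      field_simp
  have hval : lval K p = (K.card : ℝ) * ((n:ℝ)⁻¹)^r := by
    rw [lval]
    rw [Finset.sum_congr rfl (fun e he => ?_), Finset.sum_const, nsmul_eq_mul]
    rw [Finset.prod_const, hK e he]
  have h1 : (K.card : ℝ) = lval K p * (n:ℝ)^r := by
    rw [hval, inv_pow, mul_assoc, inv_mul_cancel₀ (by positivity), mul_one]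
  rw [h1]
  exact mul_le_mul_of_nonneg_right (lval_le_lagrangian hfeas) (by positivity)

lemma exNum_upper (hr : 3 ≤ r) (hn : 1 ≤ n) :
    (exNum r n (Krr r) : ℝ) ≤ sSup (LagSet r) * (n:ℝ)^r + (TT r : ℝ) * (n:ℝ)^(r-1) := by
  obtain ⟨G, hG, hfree, hcard⟩ := exNum_witness r n
  rw [← hcard]
  set K := cleaned G r with hKdef
  have hKcards : ∀ e ∈ K, e.card = r := fun e he => hG e (cleaned_subset he)
  have h1 : (K.card : ℝ) ≤ sSup (LagSet r) * (n:ℝ)^r := by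
    calc (K.card : ℝ) ≤ lagrangian K * (n:ℝ)^r := card_le_lagrangian hn hKcards
      _ ≤ sSup (LagSet r) * (n:ℝ)^r := by
          apply mul_le_mul_of_nonneg_right ?_ (by positivity)
          exact lagrangian_le_lagSup hn K hKcards (cleaned_star hG hfree)
  have h2nat : (G \ K).card ≤ TT r * n^(r-1) := by
    calc (G \ K).card ≤ n * n * (TT r * n.choose (r - 3)) := card_sdiff_cleaned hr hG
      _ ≤ n * n * (TT r * n^(r-3)) := by
          gcongr
          exact le_trans (Nat.choose_le_descFactorial n (r-3)) (Nat.descFactorial_le_pow n (r-3))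
      _ = TT r * (n^2 * n^(r-3)) := by ring
      _ = TT r * n^(r-1) := by
          have h23 : 2 + (r-3) = r-1 := by omega
          rw [← pow_add, h23]
  have h2 : ((G \ K).card : ℝ) ≤ (TT r : ℝ) * (n:ℝ)^(r-1) := by
    calc ((G \ K).card : ℝ) ≤ ((TT r * n^(r-1) : ℕ) : ℝ) := by exact_mod_cast h2nat
      _ = (TT r : ℝ) * (n:ℝ)^(r-1) := by push_cast; ring
  have hsplit : (G \ K).card + K.card = G.card := Finset.card_sdiff_add_card_eq_card cleaned_subset
  have : (G.card : ℝ) = ((G \ K).card : ℝ) + (K.card : ℝ) := by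
    rw [← hsplit]; push_cast; ring
  linarith

end KrrProof

namespace KrrProof

lemma prod_ge_of_close {ι : Type*} [DecidableEq ι] (N : ℝ) (f : Finset ι) :
    ∀ (x y : ι → ℝ), (∀ i ∈ f, 0 ≤ y i ∧ y i ≤ x i ∧ x i ≤ y i + 1 ∧ x i ≤ N) →
      ∏ i ∈ f, x i - (f.card : ℝ) * N ^ (f.card - 1) ≤ ∏ i ∈ f, y i := by
  induction f using Finset.induction_on with
  | empty => intro x y _; simp
  | @insert a f ha IH =>
    intro x y h
    have hf := fun i hi => h i (Finset.mem_insert_of_mem hi)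
    have hA := h a (Finset.mem_insert_self a f)
    have hy0 : ∀ i ∈ f, (0:ℝ) ≤ y i := fun i hi => (hf i hi).1
    have hx0 : ∀ i ∈ f, (0:ℝ) ≤ x i := fun i hi => le_trans (hf i hi).1 (hf i hi).2.1
    have hY : (0:ℝ) ≤ ∏ i ∈ f, y i := Finset.prod_nonneg hy0
    have hP : (0:ℝ) ≤ ∏ i ∈ f, x i := Finset.prod_nonneg hx0
    have hN0 : (0:ℝ) ≤ N := le_trans (le_trans hA.1 hA.2.1) hA.2.2.2
    have hPK : ∏ i ∈ f, x i ≤ N ^ f.card := by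
      calc ∏ i ∈ f, x i ≤ ∏ _i ∈ f, N :=
            Finset.prod_le_prod hx0 (fun i hi => (hf i hi).2.2.2)
        _ = N ^ f.card := by rw [Finset.prod_const]
    rw [Finset.prod_insert ha, Finset.prod_insert ha, Finset.card_insert_of_notMem ha]
    have IH' := IH x y hf
    by_cases hc : f.card = 0
    · rw [Finset.card_eq_zero.1 hc] at *
      simp only [Finset.prod_empty, mul_one, Finset.card_empty] at *
      norm_num
      nlinarith [hA.2.2.1, hA.1]
    · have hc1 : 1 ≤ f.card := Nat.one_le_iff_ne_zero.2 hc
      have hMK : N * N ^ (f.card - 1) = N ^ f.card := by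
        conv_rhs => rw [show f.card = 1 + (f.card - 1) by omega]
        rw [pow_add, pow_one]
      have hpow : N ^ (f.card + 1 - 1) = N ^ f.card := by rw [Nat.add_sub_cancel]
      rw [hpow]
      have hM0 : (0:ℝ) ≤ N ^ (f.card - 1) := by positivity
      have hK0 : (0:ℝ) ≤ N ^ f.card := by positivity
      have step1 : y a * (∏ i ∈ f, x i - (f.card : ℝ) * N ^ (f.card - 1)) ≤ y a * ∏ i ∈ f, y i :=
        mul_le_mul_of_nonneg_left IH' hA.1
      have hyaN : y a ≤ N := le_trans hA.2.1 hA.2.2.2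
      have hcast : ((f.card + 1 : ℕ) : ℝ) = (f.card : ℝ) + 1 := by push_cast; ring
      rw [hcast]
      nlinarith [step1, mul_nonneg (mul_nonneg (Nat.cast_nonneg f.card) hM0)
        (sub_nonneg.2 hyaN), mul_nonneg hP (sub_nonneg.2 hA.2.2.1), hA.1, hPK,
        mul_le_mul_of_nonneg_left hPK (hA.1)]

lemma krr_base1_mem (r : ℕ) :
    ((Finset.univ : Finset (Fin r)).image (fun i => Sum.inl ((1 : Fin 2), i)) : Finset (KrrV r))
      ∈ Krr r :=
  Finset.mem_union_left _ (Finset.mem_insert_of_mem (Finset.mem_singleton_self _))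

lemma krr_cross_mem (r : ℕ) (i j : Fin r) :
    (insert (Sum.inl ((0 : Fin 2), i)) (insert (Sum.inl ((1 : Fin 2), j))
      ((Finset.univ : Finset (Fin (r - 2))).image (fun k => Sum.inr ((i, j), k)))) : Finset (KrrV r))
      ∈ Krr r :=
  Finset.mem_union_right _ (Finset.mem_image.2 ⟨(i, j), Finset.mem_univ _, rfl⟩)

/-- the blow-up of an intersecting family: `Krr`-free with many edges -/
lemma blowup_exists (hr : 3 ≤ r) {k n : ℕ} (H : Finset (Finset (Fin k)))
    (hH : ∀ e ∈ H, e.card = r) (hint : ∀ e ∈ H, ∀ f ∈ H, (e ∩ f).Nonempty)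
    (m : Fin k → ℕ) (hm : ∑ i, m i ≤ n) :
    ∃ B : Finset (Finset (Fin n)), (∀ e ∈ B, e.card = r) ∧ Free (Krr r) B ∧
      (∑ f ∈ H, ∏ i ∈ f, m i) ≤ B.card := by
  classical
  rcases H.eq_empty_or_nonempty with rfl | hne
  · exact ⟨∅, by simp, free_empty r n, by simp⟩
  obtain ⟨f₀, hf₀⟩ := hne
  have hf₀ne : f₀.Nonempty := Finset.card_pos.1 (by rw [hH f₀ hf₀]; omega)
  obtain ⟨x₀, _⟩ := hf₀ne
  have hcards : Fintype.card (Σ i : Fin k, Fin (m i)) ≤ Fintype.card (Fin n) := by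
    rw [Fintype.card_sigma, Fintype.card_fin]
    simpa using hm
  obtain ⟨ψ⟩ := Function.Embedding.nonempty_of_card_le hcards
  set c : Fin n → Fin k := fun v =>
    if h : ∃ s : Σ i : Fin k, Fin (m i), ψ s = v then h.choose.1 else x₀ with hcdef
  have hc : ∀ (i : Fin k) (t : Fin (m i)), c (ψ ⟨i, t⟩) = i := by
    intro i t
    have hex : ∃ s : Σ i : Fin k, Fin (m i), ψ s = ψ ⟨i, t⟩ := ⟨⟨i, t⟩, rfl⟩
    have hch : hex.choose = ⟨i, t⟩ := ψ.injective hex.choose_spec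
    rw [hcdef]
    simp only [dif_pos hex]
    rw [hch]
  set B : Finset (Finset (Fin n)) := (univ.powersetCard r).filter
    (fun e => Finset.image c e ∈ H ∧ (Finset.image c e).card = r) with hBdef
  have hBcards : ∀ e ∈ B, e.card = r := by
    intro e he
    exact (Finset.mem_powersetCard.1 (Finset.mem_filter.1 he).1).2
  have hBfree : Free (Krr r) B := by
    rintro ⟨φ, hinj, hmap⟩
    have hE₀ := hmap _ (krr_base_mem r)
    have hE₁ := hmap _ (krr_base1_mem r)
    obtain ⟨hE₀p, hE₀H, hE₀c⟩ := Finset.mem_filter.1 hE₀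
    obtain ⟨hE₁p, hE₁H, hE₁c⟩ := Finset.mem_filter.1 hE₁
    obtain ⟨w, hw⟩ := hint _ hE₀H _ hE₁H
    rw [Finset.mem_inter] at hw
    obtain ⟨y, hy, hcy⟩ := Finset.mem_image.1 hw.1
    obtain ⟨z, hz, hcz⟩ := Finset.mem_image.1 hw.2
    rw [Finset.image_image, Finset.mem_image] at hy hz
    obtain ⟨i, _, hyi⟩ := hy
    obtain ⟨j, _, hzj⟩ := hz
    simp only [Function.comp_apply] at hyi hzj
    have hg := hmap _ (krr_cross_mem r i j)
    obtain ⟨hgp, hgH, hgc⟩ := Finset.mem_filter.1 hg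
    have hgcard : (Finset.image φ _).card = r := (Finset.mem_powersetCard.1 hgp).2
    have hinjOn := Finset.card_image_iff.1 (hgc.trans hgcard.symm)
    have hymem : y ∈ Finset.image φ (insert (Sum.inl ((0 : Fin 2), i))
        (insert (Sum.inl ((1 : Fin 2), j))
        ((Finset.univ : Finset (Fin (r - 2))).image (fun k => Sum.inr ((i, j), k))))) := by
      rw [← hyi]
      exact Finset.mem_image_of_mem φ (Finset.mem_insert_self _ _)
    have hzmem : z ∈ Finset.image φ (insert (Sum.inl ((0 : Fin 2), i))
        (insert (Sum.inl ((1 : Fin 2), j))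
        ((Finset.univ : Finset (Fin (r - 2))).image (fun k => Sum.inr ((i, j), k))))) := by
      rw [← hzj]
      exact Finset.mem_image_of_mem φ (Finset.mem_insert_of_mem (Finset.mem_insert_self _ _))
    have hyz : y = z := hinjOn hymem hzmem (by rw [hcy, hcz])
    have : (Sum.inl ((0 : Fin 2), i) : KrrV r) = Sum.inl ((1 : Fin 2), j) := by
      apply hinj
      rw [hyi, hzj, hyz]
    rw [Sum.inl.injEq, Prod.mk.injEq] at this
    exact absurd this.1 (by decide)
  refine ⟨B, hBcards, hBfree, ?_⟩
  set Sf : Finset (Fin k) → Finset (Finset (Fin n)) := fun f =>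
    (f.pi (fun i => (univ : Finset (Fin (m i))))).image
      (fun g => f.attach.image (fun i => ψ ⟨i.1, g i.1 i.2⟩)) with hSf
  have himc : ∀ (f : Finset (Fin k)) (g : ∀ i ∈ f, Fin (m i)),
      Finset.image c (f.attach.image (fun i => ψ ⟨i.1, g i.1 i.2⟩)) = f := by
    intro f g
    rw [Finset.image_image]
    have heqf : (c ∘ fun i : {x // x ∈ f} => ψ ⟨i.1, g i.1 i.2⟩)
        = fun i : {x // x ∈ f} => i.1 := by
      funext i
      exact hc i.1 (g i.1 i.2)
    rw [heqf, Finset.attach_image_val]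
  have hcardinj : ∀ (f : Finset (Fin k)) (g : ∀ i ∈ f, Fin (m i)),
      (f.attach.image (fun i => ψ ⟨i.1, g i.1 i.2⟩)).card = f.card := by
    intro f g
    rw [Finset.card_image_of_injOn, Finset.card_attach]
    intro i1 _ i2 _ he
    have h2 := ψ.injective he
    rw [Sigma.mk.inj_iff] at h2
    exact Subtype.ext h2.1
  have hSfB : ∀ f ∈ H, Sf f ⊆ B := by
    intro f hf e he
    rw [hSf] at he
    obtain ⟨g, _, rfl⟩ := Finset.mem_image.1 he
    rw [hBdef, Finset.mem_filter, Finset.mem_powersetCard]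
    refine ⟨⟨Finset.subset_univ _, by rw [hcardinj f g, hH f hf]⟩, ?_, ?_⟩
    · rw [himc f g]; exact hf
    · rw [himc f g, hH f hf]
  have hSfdisj : ∀ f ∈ H, ∀ f' ∈ H, f ≠ f' → Disjoint (Sf f) (Sf f') := by
    intro f _ f' _ hne
    rw [Finset.disjoint_left]
    intro e he he'
    rw [hSf] at he he'
    obtain ⟨g, _, rfl⟩ := Finset.mem_image.1 he
    obtain ⟨g', _, heq⟩ := Finset.mem_image.1 he'
    have h2 := himc f' g'
    rw [heq] at h2
    exact hne ((himc f g).symm.trans h2)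
  have hinjpi : ∀ f ∈ H, Set.InjOn
      (fun g : ∀ i ∈ f, Fin (m i) => f.attach.image (fun i => ψ ⟨i.1, g i.1 i.2⟩))
      (f.pi (fun i => (univ : Finset (Fin (m i))))) := by
    intro f _ g hg g' hg' heq
    simp only at heq
    funext i hi
    have hmem : ψ ⟨i, g i hi⟩ ∈ f.attach.image (fun j => ψ ⟨j.1, g j.1 j.2⟩) :=
      Finset.mem_image_of_mem _ (Finset.mem_attach f ⟨i, hi⟩)
    rw [heq] at hmem
    obtain ⟨j, _, hj⟩ := Finset.mem_image.1 hmem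
    have h2 := ψ.injective hj
    rw [Sigma.mk.inj_iff] at h2
    obtain ⟨h1, h2⟩ := h2
    subst h1
    exact (eq_of_heq h2).symm
  have hcount : ∀ f ∈ H, (Sf f).card = ∏ i ∈ f, m i := by
    intro f hf
    rw [hSf]
    simp only
    rw [Finset.card_image_of_injOn (hinjpi f hf), Finset.card_pi]
    apply Finset.prod_congr rfl
    intro i _
    rw [Finset.card_univ, Fintype.card_fin]
  calc ∑ f ∈ H, ∏ i ∈ f, m i = ∑ f ∈ H, (Sf f).card :=
        Finset.sum_congr rfl (fun f hf => (hcount f hf).symm)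
    _ = (H.biUnion Sf).card := (Finset.card_biUnion hSfdisj).symm
    _ ≤ B.card := Finset.card_le_card (Finset.biUnion_subset.2 hSfB)

end KrrProof

namespace KrrProof

lemma exNum_lower (hr : 3 ≤ r) {k : ℕ} {H : Finset (Finset (Fin k))}
    (hH : ∀ e ∈ H, e.card = r) (hint : ∀ e ∈ H, ∀ f ∈ H, (e ∩ f).Nonempty)
    {p : Fin k → ℝ} (hp : Feas p) (n : ℕ) :
    lval H p * (n:ℝ)^r - ((H.card : ℝ) * r) * (n:ℝ)^(r-1) ≤ (exNum r n (Krr r) : ℝ) := by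
  classical
  set m : Fin k → ℕ := fun i => ⌊p i * n⌋₊ with hm
  have hmle : ∑ i, m i ≤ n := by
    have hreal : ((∑ i, m i : ℕ) : ℝ) ≤ (n : ℝ) := by
      push_cast
      calc ∑ i, ((m i : ℕ) : ℝ) ≤ ∑ i, p i * n := by
            apply Finset.sum_le_sum
            intro i _
            exact Nat.floor_le (mul_nonneg (hp.1 i) (Nat.cast_nonneg n))
        _ = (∑ i, p i) * n := by rw [← Finset.sum_mul]
        _ = n := by rw [hp.2]; ring
    exact_mod_cast hreal
  obtain ⟨B, hBc, hBf, hBcount⟩ := blowup_exists hr H hH hint m hmle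
  have h1 : (B.card : ℝ) ≤ (exNum r n (Krr r) : ℝ) := by
    exact_mod_cast le_exNum hBc hBf
  have hper : ∀ f ∈ H, (∏ i ∈ f, p i) * (n:ℝ)^r - (r:ℝ) * (n:ℝ)^(r-1) ≤ ∏ i ∈ f, (m i : ℝ) := by
    intro f hf
    have := prod_ge_of_close (n:ℝ) f (fun i => p i * n) (fun i => (m i : ℝ)) ?_
    · rw [hH f hf] at this
      calc (∏ i ∈ f, p i) * (n:ℝ)^r - (r:ℝ) * (n:ℝ)^(r-1)
          = ∏ i ∈ f, (p i * n) - (r:ℝ) * (n:ℝ)^(r-1) := by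
            rw [Finset.prod_mul_distrib, Finset.prod_const, hH f hf]
        _ ≤ ∏ i ∈ f, (m i : ℝ) := this
    · intro i _
      refine ⟨Nat.cast_nonneg _, Nat.floor_le (mul_nonneg (hp.1 i) (Nat.cast_nonneg n)),
        le_of_lt (Nat.lt_floor_add_one _), ?_⟩
      calc p i * n ≤ 1 * n := mul_le_mul_of_nonneg_right (hp.le_one i) (Nat.cast_nonneg n)
        _ = n := one_mul _
  have h2 : lval H p * (n:ℝ)^r - ((H.card : ℝ) * r) * (n:ℝ)^(r-1)
      ≤ ((∑ f ∈ H, ∏ i ∈ f, m i : ℕ) : ℝ) := by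
    push_cast
    calc lval H p * (n:ℝ)^r - ((H.card : ℝ) * r) * (n:ℝ)^(r-1)
        = ∑ f ∈ H, ((∏ i ∈ f, p i) * (n:ℝ)^r - (r:ℝ) * (n:ℝ)^(r-1)) := by
          rw [Finset.sum_sub_distrib, Finset.sum_const, ← Finset.sum_mul, lval, nsmul_eq_mul]
          push_cast
          ring
      _ ≤ ∑ f ∈ H, ∏ i ∈ f, (m i : ℝ) := Finset.sum_le_sum hper
  have h3 : ((∑ f ∈ H, ∏ i ∈ f, m i : ℕ) : ℝ) ≤ (B.card : ℝ) := by exact_mod_cast hBcount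
  linarith

end KrrProof

namespace KrrProof

open Filter

lemma choose_div_pow_tendsto (r : ℕ) :
    Tendsto (fun n : ℕ => (n.choose r : ℝ) / (n:ℝ)^r) atTop (nhds (1 / r.factorial)) := by
  have hprod : Tendsto (fun n : ℕ => ∏ i ∈ Finset.range r, (1 - (i:ℝ)/(n:ℝ))) atTop
      (nhds (∏ _i ∈ Finset.range r, (1:ℝ))) := by
    apply tendsto_finset_prod
    intro i _
    have h2 : Tendsto (fun n : ℕ => 1 - (i:ℝ)/(n:ℝ)) atTop (nhds (1 - 0)) :=
      tendsto_const_nhds.sub (tendsto_const_div_atTop_nhds_zero_nat (i:ℝ))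
    simpa using h2
  have hlim : Tendsto (fun n : ℕ => (∏ i ∈ Finset.range r, (1 - (i:ℝ)/(n:ℝ))) / r.factorial)
      atTop (nhds (1 / r.factorial)) := by
    have := hprod.div_const (r.factorial : ℝ)
    simpa using this
  apply hlim.congr'
  filter_upwards [Filter.eventually_ge_atTop r, Filter.eventually_ge_atTop 1] with n hnr hn1
  have hn0 : (0:ℝ) < (n:ℝ) := by exact_mod_cast hn1
  have hch : (n.choose r : ℝ) = (∏ i ∈ Finset.range r, ((n:ℝ) - i)) / r.factorial := by
    have hnat : r.factorial * n.choose r = ∏ i ∈ Finset.range r, (n - i) := by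
      rw [← Nat.descFactorial_eq_prod_range, Nat.descFactorial_eq_factorial_mul_choose]
    have hcast : (r.factorial : ℝ) * (n.choose r : ℝ) = ∏ i ∈ Finset.range r, ((n:ℝ) - i) := by
      calc (r.factorial : ℝ) * (n.choose r : ℝ) = ((r.factorial * n.choose r : ℕ) : ℝ) := by
            push_cast; ring
        _ = ((∏ i ∈ Finset.range r, (n - i) : ℕ) : ℝ) := by rw [hnat]
        _ = ∏ i ∈ Finset.range r, ((n:ℝ) - i) := by
            rw [Nat.cast_prod]
            apply Finset.prod_congr rfl
            intro i hi
            rw [Nat.cast_sub (le_trans (le_of_lt (Finset.mem_range.1 hi)) hnr)]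
    rw [eq_div_iff (by exact_mod_cast r.factorial_ne_zero)]
    rw [← hcast]; ring
  have hsplit : ∏ i ∈ Finset.range r, (1 - (i:ℝ)/(n:ℝ))
      = (∏ i ∈ Finset.range r, ((n:ℝ) - i)) / (n:ℝ)^r := by
    have hnr' : (n:ℝ)^r = ∏ _i ∈ Finset.range r, (n:ℝ) := by
      rw [Finset.prod_const, Finset.card_range]
    rw [hnr', ← Finset.prod_div_distrib]
    apply Finset.prod_congr rfl
    intro i _
    rw [sub_div, div_self (ne_of_gt hn0)]
  rw [hsplit, hch]
  ring

lemma pow_div_choose_tendsto (r : ℕ) :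
    Tendsto (fun n : ℕ => (n:ℝ)^r / (n.choose r : ℝ)) atTop (nhds (r.factorial : ℝ)) := by
  have h := (choose_div_pow_tendsto r).inv₀
    (by positivity)
  simp only [inv_div] at h
  simpa using h

lemma powm1_div_choose_tendsto (r : ℕ) (hr : 1 ≤ r) :
    Tendsto (fun n : ℕ => (n:ℝ)^(r-1) / (n.choose r : ℝ)) atTop (nhds 0) := by
  have h := tendsto_one_div_atTop_nhds_zero_nat.mul (pow_div_choose_tendsto r)
  rw [zero_mul] at h
  apply h.congr'
  filter_upwards [Filter.eventually_ge_atTop 1] with n hn1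
  have hn0 : (n:ℝ) ≠ 0 := by
    have : (0:ℝ) < (n:ℝ) := by exact_mod_cast hn1
    exact ne_of_gt this
  have hpow : (n:ℝ)^r = (n:ℝ) * (n:ℝ)^(r-1) := by
    conv_lhs => rw [show r = 1 + (r-1) by omega]
    rw [pow_add, pow_one]
  rw [div_mul_div_comm, one_mul, hpow, mul_div_mul_left _ _ hn0]

end KrrProof

namespace KrrProof

open Filter

theorem main (r : ℕ) (hr : 3 ≤ r) :
    Tendsto (fun n : ℕ => (exNum r n (Krr r) : ℝ) / (n.choose r : ℝ)) atTop
      (nhds ((r.factorial : ℝ) * sSup (LagSet r))) := by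
  have hr1 : 1 ≤ r := by omega
  have hfacpos : (0:ℝ) < (r.factorial : ℝ) := by exact_mod_cast r.factorial_pos
  rw [tendsto_order]
  constructor
  · intro a ha
    rcases lt_or_ge a 0 with ha0 | ha0
    · apply Filter.Eventually.of_forall
      intro n
      exact lt_of_lt_of_le ha0 (div_nonneg (Nat.cast_nonneg _) (Nat.cast_nonneg _))
    · have haΛ : a / (r.factorial : ℝ) < sSup (LagSet r) := by
        rw [div_lt_iff₀ hfacpos, mul_comm]
        exact ha
      obtain ⟨x, hxmem, hxgt⟩ := exists_lt_of_lt_csSup ⟨0, zero_mem_lagSet r⟩ haΛ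
      obtain ⟨k, H, hH, hint, rfl⟩ := hxmem
      have hlag : a / (r.factorial : ℝ) < lagrangian H := hxgt
      have hne : {x : ℝ | ∃ p : Fin k → ℝ, Feas p ∧ x = lval H p}.Nonempty := by
        by_contra hcon
        rw [Set.not_nonempty_iff_eq_empty] at hcon
        have hz : lagrangian H = 0 := by
          rw [lagrangian, lagSet_eq, hcon, Real.sSup_empty]
        rw [hz] at hlag
        have : 0 ≤ a / (r.factorial : ℝ) := div_nonneg ha0 (le_of_lt hfacpos)
        linarith
      rw [lagrangian, lagSet_eq] at hlag
      obtain ⟨y, hy, hygt⟩ := exists_lt_of_lt_csSup hne hlag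
      obtain ⟨p, hfeas, rfl⟩ := hy
      set C := (H.card : ℝ) * r with hC
      have hlim : Tendsto (fun n : ℕ => lval H p * ((n:ℝ)^r/(n.choose r : ℝ))
          - C * ((n:ℝ)^(r-1)/(n.choose r : ℝ))) atTop
          (nhds (lval H p * (r.factorial : ℝ) - C * 0)) :=
        ((pow_div_choose_tendsto r).const_mul _).sub
          ((powm1_div_choose_tendsto r hr1).const_mul _)
      have hlimgt : a < lval H p * (r.factorial : ℝ) - C * 0 := by
        rw [mul_zero, sub_zero]
        calc a = (a / (r.factorial : ℝ)) * (r.factorial : ℝ) := by field_simp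
          _ < lval H p * (r.factorial : ℝ) := by
              exact mul_lt_mul_of_pos_right hygt hfacpos
      have hev := hlim.eventually (eventually_gt_nhds hlimgt)
      filter_upwards [hev, Filter.eventually_ge_atTop r] with n hn hnr
      have hchoose : (0:ℝ) < (n.choose r : ℝ) := by exact_mod_cast Nat.choose_pos hnr
      apply lt_of_lt_of_le hn
      have hlow := exNum_lower hr hH hint hfeas n
      have hexpr : lval H p * ((n:ℝ)^r/(n.choose r : ℝ)) - C * ((n:ℝ)^(r-1)/(n.choose r : ℝ))
          = (lval H p * (n:ℝ)^r - C * (n:ℝ)^(r-1)) / (n.choose r : ℝ) := by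
        ring
      rw [hexpr]
      exact (div_le_div_iff_of_pos_right hchoose).2 hlow
  · intro a ha
    have hlim : Tendsto (fun n : ℕ => sSup (LagSet r) * ((n:ℝ)^r/(n.choose r : ℝ))
        + (TT r : ℝ) * ((n:ℝ)^(r-1)/(n.choose r : ℝ))) atTop
        (nhds (sSup (LagSet r) * (r.factorial : ℝ) + (TT r : ℝ) * 0)) :=
      ((pow_div_choose_tendsto r).const_mul _).add
        ((powm1_div_choose_tendsto r hr1).const_mul _)
    have hlimlt : sSup (LagSet r) * (r.factorial : ℝ) + (TT r : ℝ) * 0 < a := by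
      rw [mul_zero, add_zero, mul_comm]
      exact ha
    have hev := hlim.eventually (eventually_lt_nhds hlimlt)
    filter_upwards [hev, Filter.eventually_ge_atTop r] with n hn hnr
    have hchoose : (0:ℝ) < (n.choose r : ℝ) := by exact_mod_cast Nat.choose_pos hnr
    apply lt_of_le_of_lt ?_ hn
    have hup := exNum_upper (n := n) hr (by omega)
    have hexpr : sSup (LagSet r) * ((n:ℝ)^r/(n.choose r : ℝ))
        + (TT r : ℝ) * ((n:ℝ)^(r-1)/(n.choose r : ℝ))
        = (sSup (LagSet r) * (n:ℝ)^r + (TT r : ℝ) * (n:ℝ)^(r-1)) / (n.choose r : ℝ) := by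
      ring
    rw [hexpr]
    exact (div_le_div_iff_of_pos_right hchoose).2 hup

end KrrProof

theorem turan_density_Krr_eq_sup_lagrangian_intersecting (r : ℕ) (hr : 3 ≤ r) :
    Filter.Tendsto (fun n : ℕ => (exNum r n (Krr r) : ℝ) / (n.choose r : ℝ)) Filter.atTop
      (nhds ((r.factorial : ℝ) *
        sSup {x : ℝ | ∃ (k : ℕ) (H : Finset (Finset (Fin k))),
          (∀ e ∈ H, e.card = r) ∧ (∀ e ∈ H, ∀ f ∈ H, (e ∩ f).Nonempty) ∧
          x = lagrangian H})) := by
  exact KrrProof.main r hr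
end

section
/- Let r ≥ 4 and let (G,s,p) be a target. Then either (i) for every e ∈ G and all 1 ≤ i < j ≤ s with j ∈ e and i ∉ e, the set (e ∖ {j}) ∪ {i} belongs to G, or (ii) 2 ∈ e for every e ∈ G. -/
open Finset

/-- The weight `w_p(e) = (r!/(r-|e|)!) · p_∞^{r-|e|} · ∏_{i ∈ e} p i` of a set `e ⊆ [s]`
with `|e| ≤ r`, where `q = p_∞`. -/
noncomputable def wissWeight (r : ℕ) (p : ℕ → ℝ) (q : ℝ) (e : Finset ℕ) : ℝ :=
  ((r.factorial : ℝ) / ((r - e.card).factorial : ℝ)) * q ^ (r - e.card) * ∏ i ∈ e, p i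

/-- The total weight `w_p(G) = ∑_{e ∈ G} w_p(e)`. -/
noncomputable def wissTotal (r : ℕ) (p : ℕ → ℝ) (q : ℝ) (G : Finset (Finset ℕ)) : ℝ :=
  ∑ e ∈ G, wissWeight r p q e

/-- `(G, s, p)` (with `q = p(∞)`) is a weighted intersecting set system:
`s ≥ 1`; `G` is an intersecting family of nonempty subsets of `[s] = {1, …, s}`,
each of size at most `r`; `p` takes values in `[0,1]` on `[s]`, is non-increasing on `[s]`,
and together with `q ∈ [0,1]` sums to `1`. -/
def IsWISS (r s : ℕ) (G : Finset (Finset ℕ)) (p : ℕ → ℝ) (q : ℝ) : Prop :=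
  1 ≤ s ∧
  (∀ e ∈ G, e.Nonempty ∧ e ⊆ Finset.Icc 1 s ∧ e.card ≤ r) ∧
  (∀ e ∈ G, ∀ f ∈ G, (e ∩ f).Nonempty) ∧
  (∀ i ∈ Finset.Icc 1 s, 0 ≤ p i ∧ p i ≤ 1) ∧
  (0 ≤ q ∧ q ≤ 1) ∧
  ((∑ i ∈ Finset.Icc 1 s, p i) + q = 1) ∧
  (∀ i j : ℕ, 1 ≤ i → i ≤ j → j ≤ s → p j ≤ p i)

/-- A weighted intersecting set system is principal if every member contains `1`. -/
def WISSPrincipal (G : Finset (Finset ℕ)) : Prop :=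
  ∀ e ∈ G, 1 ∈ e

/-- `L_r = (1 - 1/r)^{r-1}`. -/
noncomputable def Lr (r : ℕ) : ℝ := (1 - 1 / (r : ℝ)) ^ (r - 1)

/-- A non-principal w.i.s.s. `(G, s, p)` is a target if its weight is at least that of every
non-principal w.i.s.s. `(G', s', p')` with `s' ≤ s`, and whenever equality of weights holds
one has `s' = s`, `p s > 0`, and `∑_{e ∈ G} ∑_{i ∈ e} i ≤ ∑_{e' ∈ G'} ∑_{i ∈ e'} i`. -/
def IsTarget (r s : ℕ) (G : Finset (Finset ℕ)) (p : ℕ → ℝ) (q : ℝ) : Prop :=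
  IsWISS r s G p q ∧ ¬ WISSPrincipal G ∧
  ∀ (s' : ℕ) (G' : Finset (Finset ℕ)) (p' : ℕ → ℝ) (q' : ℝ),
    s' ≤ s → IsWISS r s' G' p' q' → ¬ WISSPrincipal G' →
    wissTotal r p' q' G' ≤ wissTotal r p q G ∧
    (wissTotal r p' q' G' = wissTotal r p q G →
      s' = s ∧ 0 < p s ∧ (∑ e ∈ G, ∑ i ∈ e, i) ≤ ∑ e ∈ G', ∑ i ∈ e, i)

namespace TP

/-- swap: replace `j` by `i` -/
def swp (i j : ℕ) (e : Finset ℕ) : Finset ℕ := insert i (e.erase j)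

variable {r s : ℕ} {G : Finset (Finset ℕ)} {p : ℕ → ℝ} {q : ℝ}
variable {i j : ℕ} {a b e v : Finset ℕ}

lemma card_swp (hj : j ∈ e) (hi : i ∉ e) : (swp i j e).card = e.card := by
  unfold swp
  rw [Finset.card_insert_of_notMem (fun h => hi (Finset.mem_of_mem_erase h)),
    Finset.card_erase_of_mem hj]
  have : 1 ≤ e.card := Finset.card_pos.mpr ⟨j, hj⟩
  omega

lemma sum_swp (hj : j ∈ e) (hi : i ∉ e) :
    (∑ x ∈ swp i j e, x) + j = (∑ x ∈ e, x) + i := by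
  unfold swp
  rw [Finset.sum_insert (fun h => hi (Finset.mem_of_mem_erase h))]
  have h2 : (∑ x ∈ e.erase j, x) + j = ∑ x ∈ e, x := Finset.sum_erase_add e _ hj
  omega

lemma prod_swp (hj : j ∈ e) (hi : i ∉ e) :
    (∏ x ∈ swp i j e, p x) * p j = (∏ x ∈ e, p x) * p i := by
  unfold swp
  rw [Finset.prod_insert (fun h => hi (Finset.mem_of_mem_erase h))]
  have h2 : (∏ x ∈ e.erase j, p x) * p j = ∏ x ∈ e, p x := Finset.prod_erase_mul e _ hj
  calc p i * (∏ x ∈ e.erase j, p x) * p j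
      = ((∏ x ∈ e.erase j, p x) * p j) * p i := by ring
    _ = (∏ x ∈ e, p x) * p i := by rw [h2]

lemma weight_swp (hj : j ∈ e) (hi : i ∉ e) :
    wissWeight r p q (swp i j e) * p j = wissWeight r p q e * p i := by
  unfold wissWeight
  rw [card_swp hj hi, mul_assoc, mul_assoc, prod_swp hj hi]
  ring

lemma wissWeight_nonneg (hq : 0 ≤ q) (hp : ∀ x ∈ e, 0 ≤ p x) :
    0 ≤ wissWeight r p q e := by
  unfold wissWeight
  exact mul_nonneg (mul_nonneg (div_nonneg (Nat.cast_nonneg _) (Nat.cast_nonneg _))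
    (pow_nonneg hq _)) (Finset.prod_nonneg hp)

lemma wissWeight_pos (hq : 0 ≤ q) (hp : ∀ x ∈ e, 0 < p x)
    (hc : 0 < q ∨ e.card = r) : 0 < wissWeight r p q e := by
  unfold wissWeight
  have h1 : (0:ℝ) < (r.factorial : ℝ) / ((r - e.card).factorial : ℝ) :=
    div_pos (by exact_mod_cast Nat.factorial_pos r) (by exact_mod_cast Nat.factorial_pos _)
  have h2 : (0:ℝ) < q ^ (r - e.card) := by
    rcases hc with hc | hc
    · exact pow_pos hc _
    · rw [hc, Nat.sub_self, pow_zero]; norm_num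
  exact mul_pos (mul_pos h1 h2) (Finset.prod_pos hp)

lemma wissWeight_zero (hq : q = 0) (hlt : e.card < r) : wissWeight r p q e = 0 := by
  unfold wissWeight
  rw [hq, zero_pow (by omega)]
  ring

lemma weight_swp_le (hj : j ∈ e) (hi : i ∉ e) (hpj : 0 < p j) (hpij : p j ≤ p i)
    (hwe : 0 ≤ wissWeight r p q e) :
    wissWeight r p q e ≤ wissWeight r p q (swp i j e) := by
  have h := weight_swp (r := r) (p := p) (q := q) hj hi
  have h2 : wissWeight r p q e * p j ≤ wissWeight r p q e * p i :=
    mul_le_mul_of_nonneg_left hpij hwe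
  rw [← h] at h2
  exact le_of_mul_le_mul_right h2 hpj

lemma sum_swp_lt (hj : j ∈ e) (hi : i ∉ e) (hij : i < j) :
    (∑ x ∈ swp i j e, x) < ∑ x ∈ e, x := by
  have := sum_swp (e := e) hj hi
  omega

lemma sumS_ge_one (h : e.Nonempty) (hsub : e ⊆ Finset.Icc 1 s) : 1 ≤ ∑ x ∈ e, x := by
  obtain ⟨x, hx⟩ := h
  have hx1 : 1 ≤ x := (Finset.mem_Icc.mp (hsub hx)).1
  exact le_trans hx1 (Finset.single_le_sum (f := fun x => x) (fun y _ => Nat.zero_le y) hx)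

/-! ### Shift machinery -/

def shE (G : Finset (Finset ℕ)) (i j : ℕ) (e : Finset ℕ) : Finset ℕ :=
  if j ∈ e ∧ i ∉ e ∧ swp i j e ∉ G then swp i j e else e

def shF (G : Finset (Finset ℕ)) (i j : ℕ) : Finset (Finset ℕ) := G.image (shE G i j)

lemma shE_cases (G : Finset (Finset ℕ)) (i j : ℕ) (a : Finset ℕ) :
    (shE G i j a = a ∧ ¬(j ∈ a ∧ i ∉ a ∧ swp i j a ∉ G)) ∨
      (shE G i j a = swp i j a ∧ j ∈ a ∧ i ∉ a ∧ swp i j a ∉ G) := by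
  unfold shE
  split_ifs with h
  · exact Or.inr ⟨rfl, h⟩
  · exact Or.inl ⟨rfl, h⟩

lemma shE_of_cond (G : Finset (Finset ℕ)) {i j : ℕ} {a : Finset ℕ}
    (h : j ∈ a ∧ i ∉ a ∧ swp i j a ∉ G) : shE G i j a = swp i j a := by
  unfold shE; rw [if_pos h]

lemma swp_recover (hj : j ∈ a) (hi : i ∉ a) : insert j ((swp i j a).erase i) = a := by
  unfold swp
  rw [Finset.erase_insert (fun h => hi (Finset.mem_of_mem_erase h))]
  exact Finset.insert_erase hj

lemma shE_inj (ha : a ∈ G) (hb : b ∈ G) (h : shE G i j a = shE G i j b) : a = b := by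
  rcases shE_cases G i j a with ⟨hA, -⟩ | ⟨hA, hja, hia, hsa⟩ <;>
    rcases shE_cases G i j b with ⟨hB, -⟩ | ⟨hB, hjb, hib, hsb⟩
  · rw [hA, hB] at h; exact h
  · rw [hA, hB] at h; exact absurd (h ▸ ha) hsb
  · rw [hA, hB] at h; exact absurd (h.symm ▸ hb) hsa
  · rw [hA, hB] at h
    have := congrArg (fun t => insert j (t.erase i)) h
    simpa [swp_recover hja hia, swp_recover hjb hib] using this

lemma shE_inter_aux (hint : ∀ e ∈ G, ∀ f ∈ G, (e ∩ f).Nonempty)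
    (ha : a ∈ G) (hb : b ∈ G) (hca : j ∈ a ∧ i ∉ a ∧ swp i j a ∉ G)
    (hcb : ¬(j ∈ b ∧ i ∉ b ∧ swp i j b ∉ G)) : ((swp i j a) ∩ b).Nonempty := by
  by_cases hib : i ∈ b
  · exact ⟨i, Finset.mem_inter.mpr ⟨Finset.mem_insert_self _ _, hib⟩⟩
  by_cases hjb : j ∈ b
  · have hsb : swp i j b ∈ G := by
      by_contra hx; exact hcb ⟨hjb, hib, hx⟩
    obtain ⟨x, hx⟩ := hint a ha (swp i j b) hsb
    rw [Finset.mem_inter] at hx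
    obtain ⟨hxa, hxs⟩ := hx
    rcases Finset.mem_insert.mp hxs with rfl | hxe
    · exact absurd hxa hca.2.1
    · refine ⟨x, Finset.mem_inter.mpr ⟨?_, Finset.mem_of_mem_erase hxe⟩⟩
      exact Finset.mem_insert.mpr (Or.inr (Finset.mem_erase.mpr
        ⟨(Finset.mem_erase.mp hxe).1, hxa⟩))
  · obtain ⟨x, hx⟩ := hint a ha b hb
    rw [Finset.mem_inter] at hx
    have hxj : x ≠ j := fun h => hjb (h ▸ hx.2)
    exact ⟨x, Finset.mem_inter.mpr
      ⟨Finset.mem_insert.mpr (Or.inr (Finset.mem_erase.mpr ⟨hxj, hx.1⟩)), hx.2⟩⟩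

lemma shE_inter (hint : ∀ e ∈ G, ∀ f ∈ G, (e ∩ f).Nonempty)
    (ha : a ∈ G) (hb : b ∈ G) : ((shE G i j a) ∩ (shE G i j b)).Nonempty := by
  rcases shE_cases G i j a with ⟨hA, hnca⟩ | ⟨hA, hca⟩ <;>
    rcases shE_cases G i j b with ⟨hB, hncb⟩ | ⟨hB, hcb⟩
  · rw [hA, hB]; exact hint a ha b hb
  · rw [hA, hB, Finset.inter_comm]
    exact shE_inter_aux hint hb ha hcb hnca
  · rw [hA, hB]
    exact shE_inter_aux hint ha hb hca hncb
  · rw [hA, hB]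
    exact ⟨i, Finset.mem_inter.mpr ⟨Finset.mem_insert_self _ _, Finset.mem_insert_self _ _⟩⟩

lemma shF_isWISS (hws : IsWISS r s G p q) (h1i : 1 ≤ i) (hij : i < j) (hjs : j ≤ s) :
    IsWISS r s (shF G i j) p q := by
  obtain ⟨hs1, hmem, hint, hpbd, hqbd, hsum, hmono⟩ := hws
  refine ⟨hs1, ?_, ?_, hpbd, hqbd, hsum, hmono⟩
  · intro E hE
    obtain ⟨a, ha, rfl⟩ := Finset.mem_image.mp hE
    obtain ⟨hne, hsub, hcard⟩ := hmem a ha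
    rcases shE_cases G i j a with ⟨hA, hnca⟩ | ⟨hA, hja, hia, _⟩
    · rw [hA]; exact ⟨hne, hsub, hcard⟩
    · rw [hA]
      refine ⟨Finset.insert_nonempty _ _, ?_, ?_⟩
      · intro x hx
        rcases Finset.mem_insert.mp hx with rfl | hx
        · exact Finset.mem_Icc.mpr ⟨h1i, le_trans (le_of_lt hij) hjs⟩
        · exact hsub (Finset.mem_of_mem_erase hx)
      · rw [card_swp hja hia]; exact hcard
  · intro E hE F hF
    obtain ⟨a, ha, rfl⟩ := Finset.mem_image.mp hE
    obtain ⟨b, hb, rfl⟩ := Finset.mem_image.mp hF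
    exact shE_inter hint ha hb

lemma shF_total (hij : i < j) :
    wissTotal r p q (shF G i j) = ∑ a ∈ G, wissWeight r p q (shE G i j a) := by
  unfold wissTotal shF
  exact Finset.sum_image (fun x hx y hy h => shE_inj hx hy h)

lemma shF_sumS (hij : i < j) :
    (∑ e ∈ shF G i j, ∑ x ∈ e, x) = ∑ a ∈ G, ∑ x ∈ shE G i j a, x := by
  unfold shF
  exact Finset.sum_image (fun x hx y hy h => shE_inj hx hy h)

/-- Applying the target property to a shifted family yields a contradiction,
provided the shifted family is non-principal and something actually shifts. -/
lemma shift_contra (hT : IsTarget r s G p q)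
    (hppos : ∀ k, 1 ≤ k → k ≤ s → 0 < p k)
    (h1i : 1 ≤ i) (hij : i < j) (hjs : j ≤ s)
    (hbad : ∃ e ∈ G, j ∈ e ∧ i ∉ e ∧ swp i j e ∉ G)
    (hnp : ¬ WISSPrincipal (shF G i j)) : False := by
  obtain ⟨hws, hNP, hcomp⟩ := hT
  have hmem := hws.2.1
  have hqnn : 0 ≤ q := hws.2.2.2.2.1.1
  have hmono := hws.2.2.2.2.2.2
  obtain ⟨hle, heq⟩ := hcomp s (shF G i j) p q le_rfl (shF_isWISS hws h1i hij hjs) hnp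
  -- weights do not decrease
  have hwge : wissTotal r p q G ≤ wissTotal r p q (shF G i j) := by
    rw [shF_total hij]
    unfold wissTotal
    refine Finset.sum_le_sum ?_
    intro a ha
    rcases shE_cases G i j a with ⟨hA, hnca⟩ | ⟨hA, hja, hia, _⟩
    · rw [hA]
    · rw [hA]
      obtain ⟨hne, hsub, hcard⟩ := hmem a ha
      have hjIcc := Finset.mem_Icc.mp (hsub hja)
      refine weight_swp_le hja hia (hppos j hjIcc.1 hjIcc.2)
        (hmono i j h1i (le_of_lt hij) hjs) ?_
      exact wissWeight_nonneg hqnn (fun x hx =>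
        le_of_lt (hppos x (Finset.mem_Icc.mp (hsub hx)).1 (Finset.mem_Icc.mp (hsub hx)).2))
  have heq' : wissTotal r p q (shF G i j) = wissTotal r p q G := le_antisymm hle hwge
  obtain ⟨-, -, hsum⟩ := heq heq'
  rw [shF_sumS hij] at hsum
  obtain ⟨e, he, hje, hie, hse⟩ := hbad
  have hlt : (∑ a ∈ G, ∑ x ∈ shE G i j a, x) < ∑ a ∈ G, ∑ x ∈ a, x := by
    refine Finset.sum_lt_sum ?_ ⟨e, he, ?_⟩
    · intro a ha
      rcases shE_cases G i j a with ⟨hA, hnca⟩ | ⟨hA, hja, hia, _⟩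
      · rw [hA]
      · rw [hA]; exact le_of_lt (sum_swp_lt hja hia hij)
    · rw [shE_of_cond G ⟨hje, hie, hse⟩]
      exact sum_swp_lt hje hie hij
  omega

/-- All swaps with `2 ≤ i` are present in a target. -/
lemma closure2 (hT : IsTarget r s G p q)
    (hppos : ∀ k, 1 ≤ k → k ≤ s → 0 < p k) :
    ∀ e ∈ G, ∀ i j : ℕ, 2 ≤ i → i < j → j ≤ s → j ∈ e → i ∉ e → swp i j e ∈ G := by
  intro e he i j h2i hij hjs hje hie
  by_contra hnm
  refine shift_contra hT hppos (by omega) hij hjs ⟨e, he, hje, hie, hnm⟩ ?_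
  intro hP
  obtain ⟨g, hg, hg1⟩ := by
    have := hT.2.1
    unfold WISSPrincipal at this
    push_neg at this
    exact this
  apply hg1
  have h1 := hP _ (Finset.mem_image_of_mem _ hg)
  rcases shE_cases G i j g with ⟨hA, -⟩ | ⟨hA, hja, hia, _⟩
  · rwa [hA] at h1
  · rw [hA] at h1
    rcases Finset.mem_insert.mp h1 with h | h
    · omega
    · exact Finset.mem_of_mem_erase h

/-- If there is a bad `(e,1,j)` swap, then every member not containing `1`
contains `j` and its swap is outside `G`. -/
lemma star_of_bad1 (hT : IsTarget r s G p q)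
    (hppos : ∀ k, 1 ≤ k → k ≤ s → 0 < p k)
    (h1j : 1 < j) (hjs : j ≤ s)
    (he : e ∈ G) (h1e : 1 ∉ e) (hje : j ∈ e) (hnm : swp 1 j e ∉ G) :
    ∀ g ∈ G, 1 ∉ g → j ∈ g ∧ swp 1 j g ∉ G := by
  have hP : WISSPrincipal (shF G 1 j) := by
    by_contra hnp
    exact shift_contra hT hppos le_rfl h1j hjs ⟨e, he, hje, h1e, hnm⟩ hnp
  intro g hg hg1
  have h1 := hP _ (Finset.mem_image_of_mem _ hg)
  rcases shE_cases G 1 j g with ⟨hA, -⟩ | ⟨hA, hja, hia, hsa⟩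
  · rw [hA] at h1; exact absurd h1 hg1
  · exact ⟨hja, hsa⟩

/-- Maximality: any admissible set meeting all members is a member. -/
lemma max_mem (hT : IsTarget r s G p q)
    (hppos : ∀ k, 1 ≤ k → k ≤ s → 0 < p k)
    (hv : v ⊆ Finset.Icc 1 s) (hvne : v.Nonempty) (hvc : v.card ≤ r)
    (hsz : 0 < q ∨ v.card = r)
    (hmeet : ∀ g ∈ G, (v ∩ g).Nonempty) : v ∈ G := by
  by_contra hvG
  obtain ⟨hws, hNP, hcomp⟩ := hT
  obtain ⟨hs1, hmem, hint, hpbd, hqbd, hsum, hmono⟩ := hws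
  have hW : IsWISS r s (insert v G) p q := by
    refine ⟨hs1, ?_, ?_, hpbd, hqbd, hsum, hmono⟩
    · intro E hE
      rcases Finset.mem_insert.mp hE with rfl | hE
      · exact ⟨hvne, hv, hvc⟩
      · exact hmem E hE
    · intro E hE F hF
      rcases Finset.mem_insert.mp hE with hEv | hEG <;>
        rcases Finset.mem_insert.mp hF with hFv | hFG
      · subst hEv; subst hFv; rw [Finset.inter_self]; exact hvne
      · subst hEv; exact hmeet F hFG
      · subst hFv; rw [Finset.inter_comm]; exact hmeet E hEG
      · exact hint E hEG F hFG
  have hNP' : ¬ WISSPrincipal (insert v G) := by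
    intro hP
    apply hNP
    intro e he
    exact hP e (Finset.mem_insert_of_mem he)
  obtain ⟨hle, -⟩ := hcomp s (insert v G) p q le_rfl hW hNP'
  have hpos : 0 < wissWeight r p q v :=
    wissWeight_pos hqbd.1 (fun x hx => hppos x (Finset.mem_Icc.mp (hv hx)).1
      (Finset.mem_Icc.mp (hv hx)).2) hsz
  have : wissTotal r p q (insert v G) = wissWeight r p q v + wissTotal r p q G := by
    unfold wissTotal
    exact Finset.sum_insert hvG
  rw [this] at hle
  linarith

/-- Compression to an initial segment, using closure under swaps with `2 ≤ i`. -/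
lemma compress (hC : ∀ e ∈ G, ∀ i j : ℕ, 2 ≤ i → i < j → j ≤ s → j ∈ e → i ∉ e → swp i j e ∈ G)
    (K : Finset ℕ) (hK : ∀ k ∈ K, k < 3) :
    ∀ (n : ℕ) (X : Finset ℕ), (∑ x ∈ X, x) = n → K ∪ X ∈ G → X ⊆ Finset.Icc 3 s →
      K ∪ Finset.Icc 3 (X.card + 2) ∈ G := by
  intro n
  induction n using Nat.strong_induction_on with
  | _ n ih =>
    intro X hsum hmem hsub
    by_cases hX : X = Finset.Icc 3 (X.card + 2)
    · rw [← hX]; exact hmem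
    · have hXne : X.Nonempty := by
        rcases Finset.eq_empty_or_nonempty X with h | h
        · exfalso; apply hX; rw [h]; simp
        · exact h
      have hXc1 : 1 ≤ X.card := Finset.card_pos.mpr hXne
      have h1 := Finset.card_le_card hsub
      rw [Nat.card_Icc] at h1
      have hcard2 : X.card + 2 ≤ s := by omega
      have hIccCard : (Finset.Icc 3 (X.card + 2)).card = X.card := by
        rw [Nat.card_Icc]; omega
      have hD : ((Finset.Icc 3 (X.card + 2)) \ X).Nonempty := by
        rw [Finset.sdiff_nonempty]
        intro hsubI
        exact hX (Finset.eq_of_subset_of_card_le hsubI (le_of_eq hIccCard.symm)).symm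
      have hXd : (X \ (Finset.Icc 3 (X.card + 2))).Nonempty := by
        rw [Finset.sdiff_nonempty]
        intro hsubX
        exact hX (Finset.eq_of_subset_of_card_le hsubX (le_of_eq hIccCard))
      obtain ⟨i, hi⟩ := hD
      obtain ⟨x, hx⟩ := hXd
      rw [Finset.mem_sdiff] at hi hx
      have hiIcc := Finset.mem_Icc.mp hi.1
      have hxs := Finset.mem_Icc.mp (hsub hx.1)
      have hix : i < x := by
        have : ¬(3 ≤ x ∧ x ≤ X.card + 2) := fun h => hx.2 (Finset.mem_Icc.mpr h)
        omega
      have hiK : i ∉ K := fun h => by have := hK i h; omega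
      have hxK : x ∉ K := fun h => by have := hK x h; omega
      have hiKX : i ∉ K ∪ X := by
        rw [Finset.mem_union]; rintro (h | h)
        · exact hiK h
        · exact hi.2 h
      have hswap := hC (K ∪ X) hmem i x (by omega) hix hxs.2
        (Finset.mem_union_right _ hx.1) hiKX
      have hswap_eq : swp i x (K ∪ X) = K ∪ (insert i (X.erase x)) := by
        unfold swp
        rw [Finset.erase_union_distrib, Finset.erase_eq_of_notMem hxK,
          Finset.union_insert]
      rw [hswap_eq] at hswap
      have hiX' : i ∉ X.erase x := fun h => hi.2 (Finset.mem_of_mem_erase h)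
      have hcard' : (insert i (X.erase x)).card = X.card := by
        rw [Finset.card_insert_of_notMem hiX', Finset.card_erase_of_mem hx.1]
        have : 1 ≤ X.card := Finset.card_pos.mpr ⟨x, hx.1⟩
        omega
      have hsum' : (∑ y ∈ insert i (X.erase x), y) < n := by
        rw [Finset.sum_insert hiX']
        have h2 : (∑ y ∈ X.erase x, y) + x = ∑ y ∈ X, y := Finset.sum_erase_add X _ hx.1
        omega
      have hsub' : insert i (X.erase x) ⊆ Finset.Icc 3 s := by
        intro y hy
        rcases Finset.mem_insert.mp hy with rfl | hy
        · exact Finset.mem_Icc.mpr ⟨hiIcc.1, le_trans hiIcc.2 hcard2⟩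
        · exact hsub (Finset.mem_of_mem_erase hy)
      have := ih _ hsum' (insert i (X.erase x)) rfl hswap hsub'
      rwa [hcard'] at this

lemma family_eq_of_sumS_le {H : Finset (Finset ℕ)} (hsub : H ⊆ G)
    (hmem : ∀ e ∈ G, e.Nonempty ∧ e ⊆ Finset.Icc 1 s ∧ e.card ≤ r)
    (hsum : (∑ e ∈ G, ∑ x ∈ e, x) ≤ ∑ e ∈ H, ∑ x ∈ e, x) : G = H := by
  have h1 : (∑ e ∈ G \ H, ∑ x ∈ e, x) + (∑ e ∈ H, ∑ x ∈ e, x) = ∑ e ∈ G, ∑ x ∈ e, x :=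
    Finset.sum_sdiff hsub
  have h2 : G \ H = ∅ := by
    by_contra hne
    obtain ⟨e, he⟩ := Finset.nonempty_iff_ne_empty.mpr hne
    have heG : e ∈ G := (Finset.mem_sdiff.mp he).1
    have h3 : 1 ≤ ∑ x ∈ e, x :=
      sumS_ge_one (s := s) (hmem e heG).1 (hmem e heG).2.1
    have h4 : 1 ≤ ∑ e ∈ G \ H, ∑ x ∈ e, x :=
      le_trans h3 (Finset.single_le_sum (f := fun e => ∑ x ∈ e, x)
        (fun y _ => Nat.zero_le _) he)
    omega
  exact (Finset.sdiff_eq_empty_iff_subset.mp h2).antisymm hsub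

lemma q_zero_cases (hr : 4 ≤ r) (hT : IsTarget r s G p q)
    (hppos : ∀ k, 1 ≤ k → k ≤ s → 0 < p k) (hs2 : 2 ≤ s) (hq0 : q = 0) :
    (∀ e ∈ G, 2 ∈ e) ∨ (∀ e ∈ G, e.card = r) := by
  classical
  obtain ⟨hws, hNP, hcomp⟩ := hT
  obtain ⟨hs1, hmem, hint, hpbd, hqbd, hsump, hmono⟩ := hws
  set Z := G.filter (fun e => e.card = r) with hZdef
  have hZsub : Z ⊆ G := Finset.filter_subset _ _
  have hwz : wissTotal r p q G = wissTotal r p q Z := by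
    unfold wissTotal
    rw [← Finset.sum_filter_add_sum_filter_not G (fun e => e.card = r)
      (fun e => wissWeight r p q e)]
    have hzero : ∑ e ∈ G.filter (fun e => ¬ e.card = r), wissWeight r p q e = 0 := by
      refine Finset.sum_eq_zero ?_
      intro e he
      rw [Finset.mem_filter] at he
      exact wissWeight_zero hq0 (lt_of_le_of_ne (hmem e he.1).2.2 he.2)
    rw [hzero, add_zero]
  by_cases hZe : Z = ∅
  · -- total weight 0; beaten by the family {{2}}
    exfalso
    have hG0 : wissTotal r p q G = 0 := by rw [hwz, hZe]; simp [wissTotal]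
    have hW2 : IsWISS r 2 {({2} : Finset ℕ)} (fun _ => (1/4 : ℝ)) (1/2) := by
      refine ⟨by omega, ?_, ?_, ?_, by norm_num, ?_, ?_⟩
      · intro e he
        rw [Finset.mem_singleton] at he
        subst he
        refine ⟨⟨2, Finset.mem_singleton_self 2⟩, ?_, by simp; omega⟩
        intro x hx; rw [Finset.mem_singleton] at hx; subst hx
        exact Finset.mem_Icc.mpr ⟨by omega, le_rfl⟩
      · intro e he f hf
        rw [Finset.mem_singleton] at he hf; subst he; subst hf
        rw [Finset.inter_self]
        exact ⟨2, Finset.mem_singleton_self 2⟩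
      · intro i _; norm_num
      · rw [Finset.sum_const, Nat.card_Icc]
        norm_num
      · exact fun i j _ _ _ => le_rfl
    have hNP2 : ¬ WISSPrincipal {({2} : Finset ℕ)} := by
      intro h
      have := h {2} (Finset.mem_singleton_self _)
      simp at this
    obtain ⟨hle, -⟩ := hcomp 2 {({2} : Finset ℕ)} (fun _ => (1/4 : ℝ)) (1/2) hs2 hW2 hNP2
    rw [hG0] at hle
    have hpos : 0 < wissTotal r (fun _ => (1/4 : ℝ)) (1/2) {({2} : Finset ℕ)} := by
      unfold wissTotal
      rw [Finset.sum_singleton]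
      refine wissWeight_pos (by norm_num) (fun x _ => by norm_num) (Or.inl (by norm_num))
    linarith
  · -- Z nonempty
    have hZne : Z.Nonempty := Finset.nonempty_iff_ne_empty.mpr hZe
    by_cases hZP : WISSPrincipal Z
    · -- Z principal
      obtain ⟨g0, hg0, hg01⟩ : ∃ g ∈ G, 1 ∉ g := by
        unfold WISSPrincipal at hNP; push_neg at hNP; exact hNP
      have hg0Z : g0 ∉ Z := fun h => hg01 (hZP _ h)
      have hg0card : g0.card < r := by
        have h1 := (hmem g0 hg0).2.2
        have h2 : ¬ g0.card = r := fun h => hg0Z (Finset.mem_filter.mpr ⟨hg0, h⟩)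
        omega
      have hsubG : insert g0 Z ⊆ G := Finset.insert_subset hg0 hZsub
      have hWins : IsWISS r s (insert g0 Z) p q :=
        ⟨hs1, fun e he => hmem e (hsubG he), fun e he f hf => hint e (hsubG he) f (hsubG hf),
          hpbd, hqbd, hsump, hmono⟩
      have hNPins : ¬ WISSPrincipal (insert g0 Z) := fun h =>
        hg01 (h g0 (Finset.mem_insert_self _ _))
      obtain ⟨hle, heq⟩ := hcomp s (insert g0 Z) p q le_rfl hWins hNPins
      have hwe : wissTotal r p q (insert g0 Z) = wissTotal r p q G := by
        have h1 : wissTotal r p q (insert g0 Z)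
            = wissWeight r p q g0 + wissTotal r p q Z := Finset.sum_insert hg0Z
        rw [h1, wissWeight_zero hq0 hg0card, zero_add, hwz]
      obtain ⟨-, -, hsum⟩ := heq hwe
      have hGeq : G = insert g0 Z := family_eq_of_sumS_le hsubG hmem hsum
      obtain ⟨z, hz⟩ := hZne
      have hzG := hZsub hz
      have hzcard : z.card = r := (Finset.mem_filter.mp hz).2
      have hsr : r ≤ s := by
        have h1 := Finset.card_le_card (hmem z hzG).2.1
        rw [Nat.card_Icc] at h1
        omega
      by_cases hsR : s = r
      · -- conclude that every member contains 2
        left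
        have hZall : ∀ y ∈ Z, y = Finset.Icc 1 s := by
          intro y hy
          refine Finset.eq_of_subset_of_card_le (hmem y (hZsub hy)).2.1 ?_
          rw [Nat.card_Icc, (Finset.mem_filter.mp hy).2]
          omega
        have hZeq : Z = {Finset.Icc 1 s} := by
          apply Finset.eq_singleton_iff_unique_mem.mpr
          exact ⟨hZall z hz ▸ hz, hZall⟩
        have hIccmem : (2:ℕ) ∈ Finset.Icc 1 s := Finset.mem_Icc.mpr ⟨by omega, hs2⟩
        have h2Icc : ({2} : Finset ℕ) ≠ Finset.Icc 1 s := by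
          intro h
          have := congrArg Finset.card h
          rw [Finset.card_singleton, Nat.card_Icc] at this
          omega
        have h2nm : ({2} : Finset ℕ) ∉ ({Finset.Icc 1 s} : Finset (Finset ℕ)) := by
          rw [Finset.mem_singleton]; exact h2Icc
        have hWG' : IsWISS r s (insert ({2} : Finset ℕ) {Finset.Icc 1 s}) p q := by
          refine ⟨hs1, ?_, ?_, hpbd, hqbd, hsump, hmono⟩
          · intro e he
            rcases Finset.mem_insert.mp he with h | h
            · subst h
              refine ⟨⟨2, Finset.mem_singleton_self _⟩, ?_, by simp; omega⟩
              intro x hx; rw [Finset.mem_singleton] at hx; subst hx; exact hIccmem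
            · rw [Finset.mem_singleton] at h; subst h
              exact ⟨⟨1, Finset.mem_Icc.mpr ⟨le_rfl, hs1⟩⟩, Finset.Subset.refl _,
                by rw [Nat.card_Icc]; omega⟩
          · intro e he f hf
            have key : ∀ u : Finset ℕ, u ∈ insert ({2} : Finset ℕ) ({Finset.Icc 1 s} : Finset (Finset ℕ)) → (2:ℕ) ∈ u := by
              intro u hu
              rcases Finset.mem_insert.mp hu with h | h
              · subst h; exact Finset.mem_singleton_self _
              · rw [Finset.mem_singleton] at h; subst h; exact hIccmem
            exact ⟨2, Finset.mem_inter.mpr ⟨key e he, key f hf⟩⟩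
        have hNPG' : ¬ WISSPrincipal (insert ({2} : Finset ℕ) {Finset.Icc 1 s}) := by
          intro h
          have := h {2} (Finset.mem_insert_self _ _)
          simp at this
        obtain ⟨hle', heq'⟩ := hcomp s _ p q le_rfl hWG' hNPG'
        have hwe' : wissTotal r p q (insert ({2} : Finset ℕ) {Finset.Icc 1 s})
            = wissTotal r p q G := by
          have h1 : wissTotal r p q (insert ({2} : Finset ℕ) {Finset.Icc 1 s})
              = wissWeight r p q {2} + wissTotal r p q {Finset.Icc 1 s} :=
            Finset.sum_insert h2nm
          have h2 : wissWeight r p q ({2} : Finset ℕ) = 0 :=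
            wissWeight_zero hq0 (by rw [Finset.card_singleton]; omega)
          rw [h1, h2, zero_add, hwz, hZeq]
        obtain ⟨-, -, hsum'⟩ := heq' hwe'
        -- compute both double sums
        have hg0nm : g0 ∉ ({Finset.Icc 1 s} : Finset (Finset ℕ)) := by
          rw [Finset.mem_singleton]
          intro h
          exact hg01 (h ▸ (Finset.mem_Icc.mpr ⟨le_rfl, hs1⟩ : (1:ℕ) ∈ Finset.Icc 1 s))
        have hL : (∑ e ∈ G, ∑ x ∈ e, x)
            = (∑ x ∈ g0, x) + ∑ x ∈ Finset.Icc 1 s, x := by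
          rw [hGeq, hZeq, Finset.sum_insert hg0nm, Finset.sum_singleton]
        have hR : (∑ e ∈ insert ({2} : Finset ℕ) {Finset.Icc 1 s}, ∑ x ∈ e, x)
            = 2 + ∑ x ∈ Finset.Icc 1 s, x := by
          rw [Finset.sum_insert h2nm, Finset.sum_singleton, Finset.sum_singleton]
        rw [hL, hR] at hsum'
        have hg0sum : (∑ x ∈ g0, x) ≤ 2 := by omega
        have hx2 : ∀ x ∈ g0, x = 2 := by
          intro x hx
          have h1 := (Finset.mem_Icc.mp ((hmem g0 hg0).2.1 hx)).1
          have hx1 : x ≠ 1 := fun h => hg01 (h ▸ hx)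
          have hxle : x ≤ ∑ y ∈ g0, y :=
            Finset.single_le_sum (f := fun y => y) (fun y _ => Nat.zero_le y) hx
          omega
        have hg0eq : g0 = {2} := by
          obtain ⟨x, hx⟩ := (hmem g0 hg0).1
          have hx2' := hx2 x hx
          exact Finset.eq_singleton_iff_unique_mem.mpr ⟨hx2' ▸ hx, hx2⟩
        intro e he
        rw [hGeq, hZeq] at he
        rcases Finset.mem_insert.mp he with h | h
        · subst h; rw [hg0eq]; exact Finset.mem_singleton_self _
        · rw [Finset.mem_singleton] at h; subst h; exact hIccmem
      · -- s ≥ r+1 : contradiction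
        exfalso
        have hg0sub2 : g0 ⊆ Finset.Icc 2 s := by
          intro x hx
          have h1 := Finset.mem_Icc.mp ((hmem g0 hg0).2.1 hx)
          have hx1 : x ≠ 1 := fun h => hg01 (h ▸ hx)
          exact Finset.mem_Icc.mpr ⟨by omega, h1.2⟩
        have hcards : r - g0.card ≤ ((Finset.Icc 2 s) \ g0).card := by
          rw [Finset.card_sdiff_of_subset hg0sub2, Nat.card_Icc]
          omega
        obtain ⟨T, hTsub, hTcard⟩ := Finset.exists_subset_card_eq hcards
        have hdisj : Disjoint g0 T := by
          rw [Finset.disjoint_right]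
          exact fun {x} hxT hxg => (Finset.mem_sdiff.mp (hTsub hxT)).2 hxg
        have hh2card : (g0 ∪ T).card = r := by
          rw [Finset.card_union_of_disjoint hdisj, hTcard]
          omega
        have hh21 : 1 ∉ g0 ∪ T := by
          rw [Finset.mem_union]
          rintro (h | h)
          · exact hg01 h
          · have := Finset.mem_Icc.mp (Finset.mem_sdiff.mp (hTsub h)).1; omega
        have hh2G : g0 ∪ T ∉ G := by
          rw [hGeq]
          intro h
          rcases Finset.mem_insert.mp h with h | h
          · rw [← h] at hg0card
            omega
          · exact hh21 (hZP _ h)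
        apply hh2G
        refine max_mem ⟨⟨hs1, hmem, hint, hpbd, hqbd, hsump, hmono⟩, hNP, hcomp⟩ hppos
          ?_ ?_ ?_ (Or.inr hh2card) ?_
        · intro x hx
          rcases Finset.mem_union.mp hx with h | h
          · exact (hmem g0 hg0).2.1 h
          · have := Finset.mem_Icc.mp (Finset.mem_sdiff.mp (hTsub h)).1
            exact Finset.mem_Icc.mpr ⟨by omega, this.2⟩
        · exact ((hmem g0 hg0).1).mono Finset.subset_union_left
        · omega
        · intro g hg
          obtain ⟨x, hx⟩ := hint g0 hg0 g hg
          rw [Finset.mem_inter] at hx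
          exact ⟨x, Finset.mem_inter.mpr ⟨Finset.mem_union_left _ hx.1, hx.2⟩⟩
    · -- Z not principal : G is r-uniform
      right
      have hWZ : IsWISS r s Z p q :=
        ⟨hs1, fun e he => hmem e (hZsub he), fun e he f hf => hint e (hZsub he) f (hZsub hf),
          hpbd, hqbd, hsump, hmono⟩
      obtain ⟨hle, heq⟩ := hcomp s Z p q le_rfl hWZ hZP
      obtain ⟨-, -, hsum⟩ := heq hwz.symm
      have hGeq : G = Z := family_eq_of_sumS_le hZsub hmem hsum
      intro e he
      rw [hGeq] at he
      exact (Finset.mem_filter.mp he).2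

lemma swp_eq (i j : ℕ) (e : Finset ℕ) : swp i j e = insert i (e.erase j) := rfl

end TP

theorem target_compressed_or_contains_two (r s : ℕ) (hr : 4 ≤ r)
    (G : Finset (Finset ℕ)) (p : ℕ → ℝ) (q : ℝ) (hT : IsTarget r s G p q) :
    (∀ e ∈ G, ∀ i j : ℕ, 1 ≤ i → i < j → j ≤ s → j ∈ e → i ∉ e →
      insert i (e.erase j) ∈ G) ∨
    (∀ e ∈ G, 2 ∈ e) := by
  classical
  obtain ⟨hs1, hmem, hint, hpbd, hqbd, hsump, hmono⟩ := hT.1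
  have hNP := hT.2.1
  have hcomp := hT.2.2
  have hps : 0 < p s := ((hcomp s G p q le_rfl hT.1 hNP).2 rfl).2.1
  have hppos : ∀ k, 1 ≤ k → k ≤ s → 0 < p k := fun k h1 h2 =>
    lt_of_lt_of_le hps (hmono k s h1 h2 le_rfl)
  obtain ⟨g0, hg0, hg01⟩ : ∃ g ∈ G, 1 ∉ g := by
    have h := hNP
    unfold WISSPrincipal at h
    push_neg at h
    exact h
  have hs2 : 2 ≤ s := by
    obtain ⟨x, hx⟩ := (hmem g0 hg0).1
    have h1 := Finset.mem_Icc.mp ((hmem g0 hg0).2.1 hx)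
    have hx1 : x ≠ 1 := fun h => hg01 (h ▸ hx)
    omega
  have hkey : (∀ e ∈ G, 2 ∈ e) ∨ (∀ e ∈ G, 0 < q ∨ e.card = r) := by
    rcases lt_or_eq_of_le hqbd.1 with hq | hq
    · exact Or.inr (fun e _ => Or.inl hq)
    · rcases TP.q_zero_cases hr hT hppos hs2 hq.symm with h | h
      · exact Or.inl h
      · exact Or.inr (fun e he => Or.inr (h e he))
  rcases hkey with h2all | hsize
  · exact Or.inr h2all
  have hC : ∀ e ∈ G, ∀ i j : ℕ, 2 ≤ i → i < j → j ≤ s → j ∈ e → i ∉ e →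
      TP.swp i j e ∈ G := TP.closure2 hT hppos
  by_cases hgood : ∀ e ∈ G, ∀ i j : ℕ, 1 ≤ i → i < j → j ≤ s → j ∈ e → i ∉ e →
      insert i (e.erase j) ∈ G
  · exact Or.inl hgood
  right
  push_neg at hgood
  obtain ⟨e, he, i, j, h1i, hij, hjs, hje, hie, hnm⟩ := hgood
  have hi1 : i = 1 := by
    by_contra h
    exact hnm (TP.swp_eq i j e ▸ hC e he i j (by omega) hij hjs hje hie)
  subst hi1
  -- no bad swaps (1, y) with 3 ≤ y
  have hnb3 : ∀ g ∈ G, 1 ∉ g → ∀ y ∈ g, 3 ≤ y → TP.swp 1 y g ∈ G := by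
    intro g hg hg1 y hy h3y
    by_contra hnm'
    have hys : y ≤ s := (Finset.mem_Icc.mp ((hmem g hg).2.1 hy)).2
    have hstar := TP.star_of_bad1 hT hppos (by omega) hys hg hg1 hy hnm'
    have hsub' : ∀ h' ∈ G, 1 ∉ h' → ∀ k, 2 ≤ k → k ≤ y → k ∈ h' := by
      intro h' hh' h1h' k h2k hky
      rcases eq_or_lt_of_le hky with rfl | hklt
      · exact (hstar h' hh' h1h').1
      · by_contra hkh'
        have hswap := hC h' hh' k y h2k hklt hys (hstar h' hh' h1h').1 hkh'
        have h1sw : 1 ∉ TP.swp k y h' := by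
          rw [TP.swp_eq, Finset.mem_insert]
          rintro (h | h)
          · omega
          · exact h1h' (Finset.mem_of_mem_erase h)
        have hyin := (hstar _ hswap h1sw).1
        rw [TP.swp_eq, Finset.mem_insert] at hyin
        rcases hyin with h | h
        · omega
        · exact (Finset.mem_erase.mp h).1 rfl
    apply hnm'
    rw [TP.swp_eq]
    refine TP.max_mem hT hppos ?_ (Finset.insert_nonempty _ _) ?_ ?_ ?_
    · intro x hx
      rcases Finset.mem_insert.mp hx with rfl | hx
      · exact Finset.mem_Icc.mpr ⟨le_rfl, hs1⟩
      · exact (hmem g hg).2.1 (Finset.mem_of_mem_erase hx)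
    · have : (insert 1 (g.erase y)).card = g.card := TP.card_swp hy hg1
      rw [this]; exact (hmem g hg).2.2
    · rcases hsize g hg with h | h
      · exact Or.inl h
      · right
        have : (insert 1 (g.erase y)).card = g.card := TP.card_swp hy hg1
        rw [this]; exact h
    · intro g' hg'
      by_cases h1g' : 1 ∈ g'
      · exact ⟨1, Finset.mem_inter.mpr ⟨Finset.mem_insert_self _ _, h1g'⟩⟩
      · have h2g' := hsub' g' hg' h1g' 2 le_rfl (by omega)
        have h2g := hsub' g hg hg1 2 le_rfl (by omega)
        refine ⟨2, Finset.mem_inter.mpr ⟨?_, h2g'⟩⟩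
        exact Finset.mem_insert_of_mem (Finset.mem_erase.mpr ⟨by omega, h2g⟩)
  have hj2 : j = 2 := by
    by_contra h
    exact hnm (TP.swp_eq 1 j e ▸ hnb3 e he hie j hje (by omega))
  subst hj2
  have hstar2 := TP.star_of_bad1 hT hppos (by omega) hjs he hie hje
    (by rw [TP.swp_eq]; exact hnm)
  intro f hf
  by_cases h1f : 1 ∈ f
  · by_contra h2f
    -- main contradiction
    have hFsub : f.erase 1 ⊆ Finset.Icc 3 s := by
      intro x hx
      obtain ⟨hxne, hxf⟩ := Finset.mem_erase.mp hx
      have h1 := Finset.mem_Icc.mp ((hmem f hf).2.1 hxf)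
      have hx2 : x ≠ 2 := fun h => h2f (h ▸ hxf)
      exact Finset.mem_Icc.mpr ⟨by omega, h1.2⟩
    set a := (f.erase 1).card with ha
    have hfcard : a + 1 = f.card := Finset.card_erase_add_one h1f
    have hfd : insert 1 (Finset.Icc 3 (a + 2)) ∈ G := by
      have h := TP.compress hC {1} (by intro k hk; rw [Finset.mem_singleton] at hk; omega)
        _ (f.erase 1) rfl (by rw [← Finset.insert_eq, Finset.insert_erase h1f]; exact hf)
        hFsub
      rwa [← Finset.insert_eq] at h
    have hane : (f.erase 1).Nonempty := by
      rcases Finset.eq_empty_or_nonempty (f.erase 1) with h | h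
      · exfalso
        obtain ⟨x, hx⟩ := hint f hf e he
        rw [Finset.mem_inter] at hx
        have hx1 : x = 1 := by
          by_contra hne
          have : x ∈ f.erase 1 := Finset.mem_erase.mpr ⟨hne, hx.1⟩
          rw [h] at this
          simp at this
        exact hie (hx1 ▸ hx.2)
      · exact h
    have ha1 : 1 ≤ a := Finset.card_pos.mpr hane
    have ha2s : a + 2 ≤ s := by
      have h1 := Finset.card_le_card hFsub
      rw [Nat.card_Icc] at h1
      omega
    have h2Ia : (2:ℕ) ∉ Finset.Icc 3 (a + 2) := by simp
    have hsfd : insert 2 (Finset.Icc 3 (a + 2)) ∉ G := by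
      intro hin
      have h1n : 1 ∉ insert 2 (Finset.Icc 3 (a + 2)) := by
        rw [Finset.mem_insert]
        rintro (h | h)
        · omega
        · have := Finset.mem_Icc.mp h; omega
      have hh := (hstar2 _ hin h1n).2
      apply hh
      rw [TP.swp_eq, Finset.erase_insert h2Ia]
      exact hfd
    have hcard_sfd : (insert 2 (Finset.Icc 3 (a + 2))).card = a + 1 := by
      rw [Finset.card_insert_of_notMem h2Ia, Nat.card_Icc]
      omega
    have hu' : ∃ u ∈ G, ∀ x ∈ u, x ∉ insert 2 (Finset.Icc 3 (a + 2)) := by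
      by_contra hno
      push_neg at hno
      apply hsfd
      refine TP.max_mem hT hppos ?_ (Finset.insert_nonempty _ _) ?_ ?_ ?_
      · intro x hx
        rcases Finset.mem_insert.mp hx with rfl | hx
        · exact Finset.mem_Icc.mpr ⟨by omega, hs2⟩
        · have := Finset.mem_Icc.mp hx
          exact Finset.mem_Icc.mpr ⟨by omega, by omega⟩
      · rw [hcard_sfd, hfcard]; exact (hmem f hf).2.2
      · rcases hsize f hf with h | h
        · exact Or.inl h
        · right; rw [hcard_sfd, hfcard]; exact h
      · intro g hg
        obtain ⟨x, hxg, hxm⟩ := hno g hg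
        exact ⟨x, Finset.mem_inter.mpr ⟨hxm, hxg⟩⟩
    obtain ⟨u, hu, huav⟩ := hu'
    have h2u : 2 ∉ u := fun h => huav 2 h (Finset.mem_insert_self _ _)
    have hE : ∀ x ∈ u, x ≠ 1 → a + 3 ≤ x := by
      intro x hxu hx1
      have h1 := Finset.mem_Icc.mp ((hmem u hu).2.1 hxu)
      have hx2 : x ≠ 2 := fun h => h2u (h ▸ hxu)
      have hxI : x ∉ Finset.Icc 3 (a + 2) := fun h =>
        huav x hxu (Finset.mem_insert_of_mem h)
      rw [Finset.mem_Icc] at hxI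
      omega
    -- compress e
    have hesub : e.erase 2 ⊆ Finset.Icc 3 s := by
      intro x hx
      obtain ⟨hxne, hxe⟩ := Finset.mem_erase.mp hx
      have h1 := Finset.mem_Icc.mp ((hmem e he).2.1 hxe)
      have hx1 : x ≠ 1 := fun h => hie (h ▸ hxe)
      exact Finset.mem_Icc.mpr ⟨by omega, h1.2⟩
    set c := (e.erase 2).card with hc
    have hccard : c + 1 = e.card := Finset.card_erase_add_one hje
    have hgd : insert 2 (Finset.Icc 3 (c + 2)) ∈ G := by
      have h := TP.compress hC {2} (by intro k hk; rw [Finset.mem_singleton] at hk; omega)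
        _ (e.erase 2) rfl (by rw [← Finset.insert_eq, Finset.insert_erase hje]; exact he)
        hesub
      rwa [← Finset.insert_eq] at h
    have hc2s : c + 2 ≤ s := by
      have h1 := Finset.card_le_card hesub
      rw [Nat.card_Icc] at h1
      have : 1 ≤ c + 1 := by omega
      omega
    have h2Ic : (2:ℕ) ∉ Finset.Icc 3 (c + 2) := by simp
    -- u meets the compressed e, so c ≥ a + 1
    have hca : a + 1 ≤ c := by
      obtain ⟨x, hx⟩ := hint u hu _ hgd
      rw [Finset.mem_inter] at hx
      rcases Finset.mem_insert.mp hx.2 with rfl | hxI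
      · exact absurd hx.1 h2u
      · have h1 := Finset.mem_Icc.mp hxI
        have h2 := hE x hx.1 (by omega)
        omega
    have h1gd : 1 ∉ insert 2 (Finset.Icc 3 (c + 2)) := by
      rw [Finset.mem_insert]
      rintro (h | h)
      · omega
      · have := Finset.mem_Icc.mp h; omega
    have hgdhat : insert 1 (Finset.Icc 3 (c + 2)) ∉ G := by
      have hh := (hstar2 _ hgd h1gd).2
      rw [TP.swp_eq, Finset.erase_insert h2Ic] at hh
      exact hh
    have hcard_gdhat : (insert 1 (Finset.Icc 3 (c + 2))).card = c + 1 := by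
      rw [Finset.card_insert_of_notMem (by simp), Nat.card_Icc]
      omega
    have hv' : ∃ v ∈ G, ∀ x ∈ v, x ∉ insert 1 (Finset.Icc 3 (c + 2)) := by
      by_contra hno
      push_neg at hno
      apply hgdhat
      refine TP.max_mem hT hppos ?_ (Finset.insert_nonempty _ _) ?_ ?_ ?_
      · intro x hx
        rcases Finset.mem_insert.mp hx with rfl | hx
        · exact Finset.mem_Icc.mpr ⟨le_rfl, hs1⟩
        · have := Finset.mem_Icc.mp hx
          exact Finset.mem_Icc.mpr ⟨by omega, by omega⟩
      · rw [hcard_gdhat, hccard]; exact (hmem e he).2.2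
      · rcases hsize e he with h | h
        · exact Or.inl h
        · right; rw [hcard_gdhat, hccard]; exact h
      · intro g hg
        obtain ⟨x, hxg, hxm⟩ := hno g hg
        exact ⟨x, Finset.mem_inter.mpr ⟨hxm, hxg⟩⟩
    obtain ⟨v, hv, hvav⟩ := hv'
    obtain ⟨x, hx⟩ := hint v hv _ hfd
    rw [Finset.mem_inter] at hx
    rcases Finset.mem_insert.mp hx.2 with rfl | hxI
    · exact hvav 1 hx.1 (Finset.mem_insert_self _ _)
    · have h1 := Finset.mem_Icc.mp hxI
      refine hvav x hx.1 (Finset.mem_insert_of_mem ?_)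
      exact Finset.mem_Icc.mpr ⟨h1.1, by omega⟩
  · exact (hstar2 f hf h1f).1
end

section
/- Let r ≥ 4 and let (G,s,p) be a target with s > 2. Then there exist e, f ∈ G with e ∩ f = {s}; moreover, every pair e, f ∈ G with e ∩ f = {s} satisfies e ∪ f = [s]. In particular s ≤ 2r − 1. -/
open Finset

lemma two_term_binom (q t : ℝ) (hq : 0 ≤ q) (ht : 0 ≤ t) :
    ∀ m : ℕ, q ^ m + m * (q ^ (m - 1) * t) ≤ (q + t) ^ m
  | 0 => by simp
  | 1 => by simp
  | (m + 2) => by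
    have ih := two_term_binom q t hq ht (m + 1)
    simp only [Nat.add_sub_cancel] at ih ⊢
    have h1 : (0:ℝ) ≤ q + t := by linarith
    have h2 : (q + t) * (q ^ (m+1) + (m+1) * (q ^ m * t)) ≤ (q + t) ^ (m + 2) := by
      calc (q + t) * (q ^ (m+1) + (m+1) * (q ^ m * t))
          ≤ (q + t) * (q + t) ^ (m+1) := by
            apply mul_le_mul_of_nonneg_left _ h1
            push_cast at ih ⊢
            linarith
        _ = (q + t) ^ (m + 2) := by ring
    refine le_trans ?_ h2
    have hqm : 0 ≤ q ^ m := pow_nonneg hq m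
    have key : 0 ≤ ((m:ℝ) + 1) * q ^ m * (t * t) := by positivity
    push_cast
    rw [show q ^ (m+2) = q ^ m * q * q by ring, show q ^ (m+1) = q ^ m * q by ring]
    nlinarith [key]

lemma wissWeight_nonneg (r : ℕ) (p : ℕ → ℝ) (q : ℝ) (e : Finset ℕ)
    (hp : ∀ i ∈ e, 0 ≤ p i) (hq : 0 ≤ q) : 0 ≤ wissWeight r p q e := by
  unfold wissWeight
  apply mul_nonneg (mul_nonneg (div_nonneg (by positivity) (by positivity))
    (pow_nonneg hq _)) (Finset.prod_nonneg hp)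

/-- The `(a,b)`-shift of a single member of `G`. -/
def shf (G : Finset (Finset ℕ)) (a b : ℕ) (g : Finset ℕ) : Finset ℕ :=
  if b ∈ g ∧ a ∉ g ∧ insert a (g.erase b) ∉ G then insert a (g.erase b) else g

lemma shf_spec (G : Finset (Finset ℕ)) (a b : ℕ) (g : Finset ℕ) :
    (¬(b ∈ g ∧ a ∉ g ∧ insert a (g.erase b) ∉ G) ∧ shf G a b g = g) ∨
    ((b ∈ g ∧ a ∉ g ∧ insert a (g.erase b) ∉ G) ∧ shf G a b g = insert a (g.erase b)) := by
  unfold shf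
  split
  · right; tauto
  · left; tauto

/-- Stability of a target family under the `(a,b)`-shift (when the shifted family
remains non-principal). -/
lemma shift_stable (r s : ℕ) (G : Finset (Finset ℕ)) (p : ℕ → ℝ) (q : ℝ)
    (hT : IsTarget r s G p q) (a b : ℕ) (ha : 1 ≤ a) (hab : a < b) (hbs : b ≤ s)
    (hwit : ∃ g₀ ∈ G, 1 ∉ shf G a b g₀) :
    ∀ g ∈ G, b ∈ g → a ∉ g → insert a (g.erase b) ∈ G := by
  obtain ⟨⟨hs1, hmem, hint, hp01, hq01, hsum, hmono⟩, hnp, hopt⟩ := hT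
  intro g hg hbg hag
  by_contra hc
  have has : a ≤ s := le_trans hab.le hbs
  set G' := G.image (shf G a b) with hG'
  -- injectivity of shf on G
  have hinj : ∀ x ∈ G, ∀ y ∈ G, shf G a b x = shf G a b y → x = y := by
    intro x hx y hy hxy
    rcases shf_spec G a b x with ⟨_, hx1⟩ | ⟨⟨hbx, hax, hnx⟩, hx1⟩ <;>
      rcases shf_spec G a b y with ⟨_, hy1⟩ | ⟨⟨hby, hay, hny⟩, hy1⟩
    · rw [hx1, hy1] at hxy; exact hxy
    · rw [hx1, hy1] at hxy; exact absurd (hxy ▸ hx) hny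
    · rw [hx1, hy1] at hxy; exact absurd (hxy ▸ hy) hnx
    · rw [hx1, hy1] at hxy
      have hax' : a ∉ x.erase b := fun h => hax (mem_of_mem_erase h)
      have hay' : a ∉ y.erase b := fun h => hay (mem_of_mem_erase h)
      have h2 : x.erase b = y.erase b := by
        have := congrArg (fun z => z.erase a) hxy
        simpa [Finset.erase_insert hax', Finset.erase_insert hay'] using this
      calc x = insert b (x.erase b) := (Finset.insert_erase hbx).symm
        _ = insert b (y.erase b) := by rw [h2]
        _ = y := Finset.insert_erase hby
  -- weights do not decrease pointwise
  have hpa_ge : p b ≤ p a := hmono a b ha hab.le hbs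
  have hwle : ∀ x ∈ G, wissWeight r p q x ≤ wissWeight r p q (shf G a b x) := by
    intro x hx
    rcases shf_spec G a b x with ⟨_, hx1⟩ | ⟨⟨hbx, hax, _⟩, hx1⟩
    · rw [hx1]
    · rw [hx1]
      have hax' : a ∉ x.erase b := fun h => hax (mem_of_mem_erase h)
      have hcard : (insert a (x.erase b)).card = x.card := by
        rw [Finset.card_insert_of_notMem hax', Finset.card_erase_of_mem hbx]
        have : 1 ≤ x.card := Finset.card_pos.mpr ⟨b, hbx⟩
        omega
      unfold wissWeight
      rw [hcard, Finset.prod_insert hax', ← Finset.mul_prod_erase x p hbx]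
      have hP : 0 ≤ ∏ i ∈ x.erase b, p i := by
        apply Finset.prod_nonneg
        intro i hi
        exact (hp01 i ((hmem x hx).2.1 (mem_of_mem_erase hi))).1
      have hC : 0 ≤ ((r.factorial : ℝ) / ((r - x.card).factorial : ℝ)) * q ^ (r - x.card) := by
        apply mul_nonneg (div_nonneg (by positivity) (by positivity)) (pow_nonneg hq01.1 _)
      apply mul_le_mul_of_nonneg_left _ hC
      exact mul_le_mul_of_nonneg_right hpa_ge hP
  -- index sums do not increase pointwise
  have hidx : ∀ x : Finset ℕ, (b ∈ x ∧ a ∉ x ∧ insert a (x.erase b) ∉ G) →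
      (∑ i ∈ insert a (x.erase b), i) + b = (∑ i ∈ x, i) + a := by
    intro x ⟨hbx, hax, _⟩
    have hax' : a ∉ x.erase b := fun h => hax (mem_of_mem_erase h)
    rw [Finset.sum_insert hax']
    have h2 : b + ∑ i ∈ x.erase b, i = ∑ i ∈ x, i := by
      simpa using Finset.add_sum_erase x (fun i => i) hbx
    omega
  -- members of G' are good
  have hmem' : ∀ e ∈ G', e.Nonempty ∧ e ⊆ Finset.Icc 1 s ∧ e.card ≤ r := by
    intro e he
    obtain ⟨x, hx, rfl⟩ := Finset.mem_image.mp he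
    rcases shf_spec G a b x with ⟨_, hx1⟩ | ⟨⟨hbx, hax, _⟩, hx1⟩
    · rw [hx1]; exact hmem x hx
    · rw [hx1]
      have hax' : a ∉ x.erase b := fun h => hax (mem_of_mem_erase h)
      refine ⟨Finset.insert_nonempty _ _, ?_, ?_⟩
      · intro i hi
        rcases Finset.mem_insert.mp hi with rfl | hi'
        · exact Finset.mem_Icc.mpr ⟨ha, has⟩
        · exact (hmem x hx).2.1 (mem_of_mem_erase hi')
      · rw [Finset.card_insert_of_notMem hax', Finset.card_erase_of_mem hbx]
        have h1 : 1 ≤ x.card := Finset.card_pos.mpr ⟨b, hbx⟩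
        have := (hmem x hx).2.2
        omega
  -- cross-intersection helper
  have hkey : ∀ x ∈ G, ∀ y ∈ G, ¬(b ∈ x ∧ a ∉ x ∧ insert a (x.erase b) ∉ G) →
      b ∈ y → a ∉ y → (x ∩ insert a (y.erase b)).Nonempty := by
    intro x hx y hy hncond hby hay
    by_cases hax : a ∈ x
    · exact ⟨a, Finset.mem_inter.mpr ⟨hax, Finset.mem_insert_self _ _⟩⟩
    by_cases hbx : b ∈ x
    · -- insert a (x.erase b) ∈ G
      have hins : insert a (x.erase b) ∈ G := by
        by_contra h; exact hncond ⟨hbx, hax, h⟩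
      obtain ⟨z, hz⟩ := hint _ hins y hy
      have hz1 := (Finset.mem_inter.mp hz).1
      have hz2 := (Finset.mem_inter.mp hz).2
      have hza : z ≠ a := fun h => hay (h ▸ hz2)
      have hzx : z ∈ x.erase b := by
        rcases Finset.mem_insert.mp hz1 with rfl | h
        · exact absurd rfl hza
        · exact h
      have hzb : z ≠ b := (Finset.mem_erase.mp hzx).1
      exact ⟨z, Finset.mem_inter.mpr ⟨mem_of_mem_erase hzx,
        Finset.mem_insert_of_mem (Finset.mem_erase.mpr ⟨hzb, hz2⟩)⟩⟩
    · obtain ⟨z, hz⟩ := hint x hx y hy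
      have hz1 := (Finset.mem_inter.mp hz).1
      have hz2 := (Finset.mem_inter.mp hz).2
      have hzb : z ≠ b := fun h => hbx (h ▸ hz1)
      exact ⟨z, Finset.mem_inter.mpr ⟨hz1,
        Finset.mem_insert_of_mem (Finset.mem_erase.mpr ⟨hzb, hz2⟩)⟩⟩
  -- G' is intersecting
  have hint' : ∀ e ∈ G', ∀ f ∈ G', (e ∩ f).Nonempty := by
    intro e he f hf
    obtain ⟨x, hx, rfl⟩ := Finset.mem_image.mp he
    obtain ⟨y, hy, rfl⟩ := Finset.mem_image.mp hf
    rcases shf_spec G a b x with ⟨hncx, hx1⟩ | ⟨⟨hbx, hax, hnx⟩, hx1⟩ <;>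
      rcases shf_spec G a b y with ⟨hncy, hy1⟩ | ⟨⟨hby, hay, hny⟩, hy1⟩
    · rw [hx1, hy1]; exact hint x hx y hy
    · rw [hx1, hy1]; exact hkey x hx y hy hncx hby hay
    · rw [hx1, hy1, Finset.inter_comm]; exact hkey y hy x hx hncy hbx hax
    · rw [hx1, hy1]
      exact ⟨a, Finset.mem_inter.mpr ⟨Finset.mem_insert_self _ _, Finset.mem_insert_self _ _⟩⟩
  have hwiss' : IsWISS r s G' p q := ⟨hs1, hmem', hint', hp01, hq01, hsum, hmono⟩
  have hnp' : ¬ WISSPrincipal G' := by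
    obtain ⟨g₀, hg₀, h1⟩ := hwit
    intro hP
    exact h1 (hP _ (Finset.mem_image_of_mem _ hg₀))
  have hge : wissTotal r p q G ≤ wissTotal r p q G' := by
    unfold wissTotal
    rw [hG', Finset.sum_image hinj]
    exact Finset.sum_le_sum hwle
  obtain ⟨hle, heqc⟩ := hopt s G' p q le_rfl hwiss' hnp'
  have heq : wissTotal r p q G' = wissTotal r p q G := le_antisymm hle hge
  have hsums := (heqc heq).2.2
  -- but index sums strictly decrease
  have hlt : (∑ e ∈ G', ∑ i ∈ e, i) < ∑ e ∈ G, ∑ i ∈ e, i := by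
    rw [hG', Finset.sum_image hinj]
    apply Finset.sum_lt_sum
    · intro x hx
      rcases shf_spec G a b x with ⟨_, hx1⟩ | ⟨hcx, hx1⟩
      · rw [hx1]
      · rw [hx1]
        have := hidx x hcx
        omega
    · refine ⟨g, hg, ?_⟩
      have hcg : b ∈ g ∧ a ∉ g ∧ insert a (g.erase b) ∉ G := ⟨hbg, hag, hc⟩
      rcases shf_spec G a b g with ⟨hn, _⟩ | ⟨_, hg1⟩
      · exact absurd hcg hn
      · rw [hg1]
        have := hidx g hcg
        omega
  omega

lemma exists_pair_meeting_in_s (r s : ℕ) (hs : 2 < s)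
    (G : Finset (Finset ℕ)) (p : ℕ → ℝ) (q : ℝ) (hT : IsTarget r s G p q) :
    ∃ e ∈ G, ∃ f ∈ G, e ∩ f = {s} := by
  by_contra hno
  push_neg at hno
  obtain ⟨⟨hs1, hmem, hint, hp01, hq01, hsum, hmono⟩, hnp, hopt⟩ := hT
  have hsIcc : s ∈ Finset.Icc 1 s := Finset.mem_Icc.mpr ⟨by omega, le_rfl⟩
  have hps0 : 0 ≤ p s := (hp01 s hsIcc).1
  have hq0 : 0 ≤ q := hq01.1
  set G₂ := G.image (fun g => g.erase s) with hG₂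
  set q₂ := q + p s with hq₂
  -- decomposition of the sum over Icc 1 s
  have hIccsplit : (∑ i ∈ Finset.Icc 1 s, p i) = (∑ i ∈ Finset.Icc 1 (s-1), p i) + p s := by
    have h1 : s - 1 + 1 = s := by omega
    rw [← h1, Finset.sum_Icc_succ_top (by omega : 1 ≤ s - 1 + 1)]
    rw [h1]
  -- members of G₂
  have hmem₂ : ∀ e ∈ G₂, e.Nonempty ∧ e ⊆ Finset.Icc 1 (s-1) ∧ e.card ≤ r := by
    intro e he
    obtain ⟨g, hg, rfl⟩ := Finset.mem_image.mp he
    refine ⟨?_, ?_, ?_⟩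
    · rcases Finset.eq_empty_or_nonempty (g.erase s) with h | h
      · rcases (Finset.erase_eq_empty_iff g s).mp h with h' | h'
        · exact absurd h' (Finset.nonempty_iff_ne_empty.mp (hmem g hg).1)
        · exact absurd (by rw [h']; simp) (hno g hg g hg)
      · exact h
    · intro i hi
      have h1 := (Finset.mem_erase.mp hi).1
      have h2 := Finset.mem_Icc.mp ((hmem g hg).2.1 (mem_of_mem_erase hi))
      exact Finset.mem_Icc.mpr ⟨h2.1, by omega⟩
    · exact le_trans (Finset.card_le_card (Finset.erase_subset _ _)) (hmem g hg).2.2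
  have hint₂ : ∀ e ∈ G₂, ∀ f ∈ G₂, (e ∩ f).Nonempty := by
    intro e he f hf
    obtain ⟨g, hg, rfl⟩ := Finset.mem_image.mp he
    obtain ⟨g', hg', rfl⟩ := Finset.mem_image.mp hf
    have heq : g.erase s ∩ g'.erase s = (g ∩ g').erase s := by
      ext i; simp only [Finset.mem_inter, Finset.mem_erase]; tauto
    rw [heq]
    rcases Finset.eq_empty_or_nonempty ((g ∩ g').erase s) with h | h
    · rcases (Finset.erase_eq_empty_iff _ s).mp h with h' | h'
      · exact absurd h' (Finset.nonempty_iff_ne_empty.mp (hint g hg g' hg'))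
      · exact absurd h' (hno g hg g' hg')
    · exact h
  have hwiss₂ : IsWISS r (s-1) G₂ p q₂ := by
    refine ⟨by omega, hmem₂, hint₂, ?_, ?_, ?_, ?_⟩
    · intro i hi
      have := Finset.mem_Icc.mp hi
      exact hp01 i (Finset.mem_Icc.mpr ⟨this.1, by omega⟩)
    · constructor
      · positivity
      · have hnn : 0 ≤ ∑ i ∈ Finset.Icc 1 (s-1), p i := by
          apply Finset.sum_nonneg
          intro i hi
          have := Finset.mem_Icc.mp hi
          exact (hp01 i (Finset.mem_Icc.mpr ⟨this.1, by omega⟩)).1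
        rw [hIccsplit] at hsum
        linarith
    · rw [hq₂, ← hsum, hIccsplit]; ring
    · intro i j h1 h2 h3
      exact hmono i j h1 h2 (by omega)
  obtain ⟨g₀, hg₀, h1g₀⟩ : ∃ e ∈ G, 1 ∉ e := by
    by_contra h
    push_neg at h
    exact hnp h
  have hnp₂ : ¬ WISSPrincipal G₂ := by
    intro hP
    have := hP (g₀.erase s) (Finset.mem_image_of_mem _ hg₀)
    exact h1g₀ (mem_of_mem_erase this)
  -- the total weight does not decrease when we delete s
  have hge : wissTotal r p q G ≤ wissTotal r p q₂ G₂ := by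
    unfold wissTotal
    rw [← Finset.sum_fiberwise_of_maps_to
      (fun x hx => Finset.mem_image_of_mem (fun g => g.erase s) hx) (wissWeight r p q)]
    apply Finset.sum_le_sum
    intro h hh
    have hsh : s ∉ h := by
      obtain ⟨g₁, hg₁, rfl⟩ := Finset.mem_image.mp hh
      exact Finset.notMem_erase _ _
    have hhsub : h ⊆ Finset.Icc 1 s := by
      intro i hi
      have := Finset.mem_Icc.mp ((hmem₂ h hh).2.1 hi)
      exact Finset.mem_Icc.mpr ⟨this.1, by omega⟩
    have hP0 : 0 ≤ ∏ i ∈ h, p i :=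
      Finset.prod_nonneg (fun i hi => (hp01 i (hhsub hi)).1)
    have hne : h ≠ insert s h := fun hE => hsh (hE ▸ Finset.mem_insert_self s h)
    have hTsub : G.filter (fun g => g.erase s = h) ⊆ {h, insert s h} := by
      intro g hg'
      obtain ⟨hgG, hge'⟩ := Finset.mem_filter.mp hg'
      by_cases hsg : s ∈ g
      · have : g = insert s h := by rw [← hge']; exact (Finset.insert_erase hsg).symm
        simp [this]
      · have : g = h := by rw [← hge', Finset.erase_eq_self.mpr hsg]
        simp [this]
    have hC0 : 0 ≤ ((r.factorial : ℝ) / ((r - h.card).factorial : ℝ)) :=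
      div_nonneg (by positivity) (by positivity)
    calc ∑ g ∈ G.filter (fun g => g.erase s = h), wissWeight r p q g
        = ∑ g ∈ G.filter (fun g => g.erase s = h), (if g ∈ G then wissWeight r p q g else 0) := by
          apply Finset.sum_congr rfl
          intro g hg'
          rw [if_pos (Finset.mem_filter.mp hg').1]
      _ ≤ ∑ g ∈ ({h, insert s h} : Finset (Finset ℕ)), (if g ∈ G then wissWeight r p q g else 0) := by
          apply Finset.sum_le_sum_of_subset_of_nonneg hTsub
          intro g hg' _
          split
          · next hgG =>
            exact wissWeight_nonneg r p q g (fun i hi => (hp01 i ((hmem g hgG).2.1 hi)).1) hq0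
          · exact le_rfl
      _ = (if h ∈ G then wissWeight r p q h else 0) +
            (if insert s h ∈ G then wissWeight r p q (insert s h) else 0) :=
          Finset.sum_pair hne
      _ ≤ ((r.factorial : ℝ) / ((r - h.card).factorial : ℝ)) * q ^ (r - h.card) * (∏ i ∈ h, p i) +
            ((r.factorial : ℝ) / ((r - h.card).factorial : ℝ)) *
              (((r - h.card : ℕ) : ℝ) * (q ^ (r - h.card - 1) * p s)) * (∏ i ∈ h, p i) := by
          apply add_le_add
          · split
            · exact le_of_eq rfl
            · exact mul_nonneg (mul_nonneg hC0 (pow_nonneg hq0 _)) hP0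
          · split
            · next hin =>
              have hcard1 : (insert s h).card = h.card + 1 := Finset.card_insert_of_notMem hsh
              have hm1 : 1 ≤ r - h.card := by
                have := (hmem _ hin).2.2
                rw [hcard1] at this
                omega
              obtain ⟨k, hk⟩ : ∃ k, r - h.card = k + 1 := ⟨r - h.card - 1, by omega⟩
              have hk2 : r - (insert s h).card = k := by rw [hcard1]; omega
              unfold wissWeight
              rw [hk2, hk, Finset.prod_insert hsh]
              have hfac : ((k+1).factorial : ℝ) = (k+1) * (k.factorial : ℝ) := by
                rw [Nat.factorial_succ]; push_cast; ring
              have hkf : (k.factorial : ℝ) ≠ 0 := by positivity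
              have hkf1 : ((k+1).factorial : ℝ) ≠ 0 := by positivity
              apply le_of_eq
              field_simp
              rw [hfac]
              push_cast [Nat.add_sub_cancel]
              ring
            · apply mul_nonneg (mul_nonneg hC0 _) hP0
              apply mul_nonneg (by positivity) (mul_nonneg (pow_nonneg hq0 _) hps0)
      _ ≤ ((r.factorial : ℝ) / ((r - h.card).factorial : ℝ)) * (q + p s) ^ (r - h.card) *
            (∏ i ∈ h, p i) := by
          have h2 := two_term_binom q (p s) hq0 hps0 (r - h.card)
          have := mul_le_mul_of_nonneg_left h2 hC0
          have := mul_le_mul_of_nonneg_right this hP0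
          calc ((r.factorial : ℝ) / ((r - h.card).factorial : ℝ)) * q ^ (r - h.card) * (∏ i ∈ h, p i) +
                ((r.factorial : ℝ) / ((r - h.card).factorial : ℝ)) *
                  (((r - h.card : ℕ) : ℝ) * (q ^ (r - h.card - 1) * p s)) * (∏ i ∈ h, p i)
              = ((r.factorial : ℝ) / ((r - h.card).factorial : ℝ)) *
                  (q ^ (r - h.card) + ((r - h.card : ℕ) : ℝ) * (q ^ (r - h.card - 1) * p s)) * (∏ i ∈ h, p i) := by
                ring
            _ ≤ _ := this
      _ = wissWeight r p q₂ h := rfl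
  obtain ⟨hle, heqc⟩ := hopt (s-1) G₂ p q₂ (by omega) hwiss₂ hnp₂
  have heq : wissTotal r p q₂ G₂ = wissTotal r p q G := le_antisymm hle hge
  have := (heqc heq).1
  omega

theorem target_pair_meeting_in_s (r s : ℕ) (hr : 4 ≤ r) (hs : 2 < s)
    (G : Finset (Finset ℕ)) (p : ℕ → ℝ) (q : ℝ) (hT : IsTarget r s G p q) :
    (∃ e ∈ G, ∃ f ∈ G, e ∩ f = {s}) ∧
    (∀ e ∈ G, ∀ f ∈ G, e ∩ f = {s} → e ∪ f = Finset.Icc 1 s) ∧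
    s ≤ 2 * r - 1 := by
  have hpair := exists_pair_meeting_in_s r s hs G p q hT
  obtain ⟨hwiss, hnp, hopt⟩ := hT
  obtain ⟨hs1, hmem, hint, hp01, hq01, hsum, hmono⟩ := hwiss
  obtain ⟨g₀, hg₀, h1g₀⟩ : ∃ e ∈ G, 1 ∉ e := by
    by_contra h
    push_neg at h
    exact hnp h
  have hT' : IsTarget r s G p q :=
    ⟨⟨hs1, hmem, hint, hp01, hq01, hsum, hmono⟩, hnp, hopt⟩
  -- the key contradiction: if `insert x (e.erase s) ∈ G` where `e ∩ f = {s}` and `x ∉ f`,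
  -- then it is disjoint from f.
  have hcontra : ∀ e ∈ G, ∀ f ∈ G, e ∩ f = {s} → ∀ x, x ∉ f →
      insert x (e.erase s) ∈ G → False := by
    intro e he f hf hef x hxf hins
    obtain ⟨z, hz⟩ := hint _ hins f hf
    have hz1 := (Finset.mem_inter.mp hz).1
    have hz2 := (Finset.mem_inter.mp hz).2
    rcases Finset.mem_insert.mp hz1 with rfl | hze
    · exact hxf hz2
    · have : z ∈ e ∩ f := Finset.mem_inter.mpr ⟨mem_of_mem_erase hze, hz2⟩
      rw [hef] at this
      exact (Finset.mem_erase.mp hze).1 (Finset.mem_singleton.mp this)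
  have hpart2 : ∀ e ∈ G, ∀ f ∈ G, e ∩ f = {s} → e ∪ f = Finset.Icc 1 s := by
    intro e he f hf hef
    by_contra hne
    have hsub : e ∪ f ⊆ Finset.Icc 1 s :=
      Finset.union_subset (hmem e he).2.1 (hmem f hf).2.1
    obtain ⟨x, hx, hxnot⟩ : ∃ x ∈ Finset.Icc 1 s, x ∉ e ∪ f := by
      by_contra hcl
      push_neg at hcl
      exact hne (Finset.Subset.antisymm hsub (fun x hx => hcl x hx))
    have hse : s ∈ e := by
      have : s ∈ e ∩ f := hef ▸ Finset.mem_singleton_self s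
      exact (Finset.mem_inter.mp this).1
    have hsf : s ∈ f := by
      have : s ∈ e ∩ f := hef ▸ Finset.mem_singleton_self s
      exact (Finset.mem_inter.mp this).2
    have hxe : x ∉ e := fun h => hxnot (Finset.mem_union_left _ h)
    have hxf : x ∉ f := fun h => hxnot (Finset.mem_union_right _ h)
    have hxlt : x < s := by
      have := Finset.mem_Icc.mp hx
      rcases lt_or_eq_of_le this.2 with h | h
      · exact h
      · exact absurd (h ▸ hse) hxe
    have hx1 := (Finset.mem_Icc.mp hx).1
    by_cases hx2 : 2 ≤ x
    · -- shift x ← s; the shifted family stays non-principal since x ≠ 1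
      have hwit : ∃ g ∈ G, 1 ∉ shf G x s g := by
        refine ⟨g₀, hg₀, ?_⟩
        rcases shf_spec G x s g₀ with ⟨_, h1⟩ | ⟨_, h1⟩
        · rw [h1]; exact h1g₀
        · rw [h1]
          intro hmem1
          rcases Finset.mem_insert.mp hmem1 with h' | h'
          · omega
          · exact h1g₀ (mem_of_mem_erase h')
      have := shift_stable r s G p q hT' x s hx1 hxlt le_rfl hwit e he hse hxe
      exact hcontra e he f hf hef x hxf this
    · -- x = 1
      have hx1' : x = 1 := by omega
      subst hx1'
      have h1e : (1:ℕ) ∉ e := hxe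
      have h1f : (1:ℕ) ∉ f := hxf
      by_cases hP : ∃ g ∈ G, 1 ∉ shf G 1 s g
      · have := shift_stable r s G p q hT' 1 s le_rfl (by omega) le_rfl hP e he hse h1e
        exact hcontra e he f hf hef 1 h1f this
      · push_neg at hP
        -- every member of G missing 1 contains s
        have hhasS : ∀ g ∈ G, 1 ∉ g → s ∈ g := by
          intro g hg h1g
          rcases shf_spec G 1 s g with ⟨_, h1⟩ | ⟨⟨hsg, _, _⟩, _⟩
          · have := hP g hg; rw [h1] at this; exact absurd this h1g
          · exact hsg
        -- every member of G missing 1 equals Icc 2 s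
        have hkey : ∀ g ∈ G, 1 ∉ g → g = Finset.Icc 2 s := by
          intro g hg h1g
          have hsg : s ∈ g := hhasS g hg h1g
          apply Finset.Subset.antisymm
          · intro i hi
            have := Finset.mem_Icc.mp ((hmem g hg).2.1 hi)
            refine Finset.mem_Icc.mpr ⟨?_, this.2⟩
            rcases Nat.lt_or_ge i 2 with h | h
            · interval_cases i
              · omega
              · exact absurd hi h1g
            · exact h
          · intro a hA
            have hA' := Finset.mem_Icc.mp hA
            by_contra hag
            have haltS : a < s := by
              rcases lt_or_eq_of_le hA'.2 with h | h
              · exact h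
              · exact absurd (h ▸ hsg) hag
            have hwit' : ∃ g' ∈ G, 1 ∉ shf G a s g' := by
              refine ⟨e, he, ?_⟩
              rcases shf_spec G a s e with ⟨_, h1⟩ | ⟨_, h1⟩
              · rw [h1]; exact h1e
              · rw [h1]
                intro hmem1
                rcases Finset.mem_insert.mp hmem1 with h' | h'
                · omega
                · exact h1e (mem_of_mem_erase h')
            have hgin := shift_stable r s G p q hT' a s (by omega) haltS le_rfl hwit'
              g hg hsg hag
            have h1g' : (1:ℕ) ∉ insert a (g.erase s) := by
              intro hmem1
              rcases Finset.mem_insert.mp hmem1 with h' | h'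
              · omega
              · exact h1g (mem_of_mem_erase h')
            have hsg' := hhasS _ hgin h1g'
            rcases Finset.mem_insert.mp hsg' with h' | h'
            · omega
            · exact (Finset.mem_erase.mp h').1 rfl
        have he2 := hkey e he h1e
        have hf2 := hkey f hf h1f
        have h2mem : (2:ℕ) ∈ e ∩ f := by
          rw [he2, hf2, Finset.inter_self]
          exact Finset.mem_Icc.mpr ⟨le_rfl, by omega⟩
        rw [hef] at h2mem
        have := Finset.mem_singleton.mp h2mem
        omega
  refine ⟨hpair, hpart2, ?_⟩
  obtain ⟨e, he, f, hf, hef⟩ := hpair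
  have hunion := hpart2 e he f hf hef
  have hcards := Finset.card_union_add_card_inter e f
  rw [hunion, hef] at hcards
  rw [Nat.card_Icc, Finset.card_singleton] at hcards
  have h1 := (hmem e he).2.2
  have h2 := (hmem f hf).2.2
  omega
end

section
/- Let r and s be positive integers, let p : [s] ∪ {∞} → [0,1] satisfy ∑_{x∈[s]∪{∞}} p(x) = 1 and p(∞) ≥ p(s) > 0, and let e ⊆ [s] satisfy |e| ≤ r and s ∈ e. Define p̄ : [s−1] ∪ {∞} → [0,1] by p̄(i) = p(i) for i ∈ [s−1] and p̄(∞) = p(∞) + p(s). Then w_{p̄}(e ∖ {s}) ≥ 2·w_p(e). -/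
open Finset

lemma binom_lower (m : ℕ) (p q : ℝ) (hp : 0 ≤ p) (hq : 0 ≤ q) :
    q^(m+2) + ((m:ℝ)+2)*q^(m+1)*p + (((m:ℝ)+1)*((m:ℝ)+2)/2)*q^m*p^2 ≤ (q+p)^(m+2) := by
  induction m with
  | zero => ring_nf; nlinarith [sq_nonneg p, sq_nonneg q]
  | succ m ih =>
    have h2 : (q+p) * (q^(m+2) + ((m:ℝ)+2)*q^(m+1)*p + (((m:ℝ)+1)*((m:ℝ)+2)/2)*q^m*p^2)
        ≤ (q+p) * (q+p)^(m+2) :=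
      mul_le_mul_of_nonneg_left ih (by linarith)
    have hcube : (0:ℝ) ≤ (((m:ℝ)+1)*((m:ℝ)+2)/2)*q^m*p^3 := by positivity
    have hexp : (q+p) * (q^(m+2) + ((m:ℝ)+2)*q^(m+1)*p + (((m:ℝ)+1)*((m:ℝ)+2)/2)*q^m*p^2)
        = q^(m+3) + ((m:ℝ)+3)*q^(m+2)*p + (((m:ℝ)+2)*((m:ℝ)+3)/2)*q^(m+1)*p^2
          + (((m:ℝ)+1)*((m:ℝ)+2)/2)*q^m*p^3 := by ring
    have hfin : q^(m+3) + ((m:ℝ)+3)*q^(m+2)*p + (((m:ℝ)+2)*((m:ℝ)+3)/2)*q^(m+1)*p^2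
        ≤ (q+p)^(m+3) := by
      have h3 : (q+p)^(m+3) = (q+p) * (q+p)^(m+2) := by ring
      rw [h3]; linarith
    push_cast
    simp only [show m+1+2 = m+3 from rfl, show m+1+1 = m+2 from rfl]
    linarith [hfin]

lemma key_ineq (n : ℕ) (p q : ℝ) (hp : 0 < p) (hpq : p ≤ q) :
    2*((n:ℝ)+1)*p*q^n ≤ (q+p)^(n+1) := by
  have hq : 0 ≤ q := le_trans hp.le hpq
  cases n with
  | zero => simpa using by linarith
  | succ m =>
    have hb := binom_lower m p q hp.le hq
    have hsq : 0 ≤ q^m * (q - ((m:ℝ)+2)/2*p)^2 :=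
      mul_nonneg (pow_nonneg hq m) (sq_nonneg _)
    have hexpand : q^m * (q - ((m:ℝ)+2)/2*p)^2
        = q^(m+2) - ((m:ℝ)+2)*q^(m+1)*p + (((m:ℝ)+2)^2/4)*q^m*p^2 := by ring
    have hrest : 0 ≤ (((m:ℝ)+1)*((m:ℝ)+2)/2 - ((m:ℝ)+2)^2/4) * (q^m * p^2) := by
      apply mul_nonneg _ (by positivity)
      have : (0:ℝ) ≤ (m:ℝ) * ((m:ℝ)+2) := by positivity
      nlinarith
    have key : 2*((m:ℝ)+2)*p*q^(m+1)
        ≤ q^(m+2) + ((m:ℝ)+2)*q^(m+1)*p + (((m:ℝ)+1)*((m:ℝ)+2)/2)*q^m*p^2 := by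
      nlinarith [hsq, hrest, hexpand]
    push_cast
    simp only [show m+1+1 = m+2 from rfl]
    linarith

theorem weight_after_removing_s (r s : ℕ) (hr : 1 ≤ r) (hs : 1 ≤ s)
    (p : ℕ → ℝ) (q : ℝ)
    (hp01 : ∀ i ∈ Finset.Icc 1 s, 0 ≤ p i ∧ p i ≤ 1)
    (hq0 : 0 ≤ q) (hq1 : q ≤ 1)
    (hsum : (∑ i ∈ Finset.Icc 1 s, p i) + q = 1)
    (hqs : p s ≤ q) (hps : 0 < p s)
    (e : Finset ℕ) (hes : e ⊆ Finset.Icc 1 s) (hcard : e.card ≤ r) (hse : s ∈ e) :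
    2 * wissWeight r p q e ≤ wissWeight r p (q + p s) (e.erase s) := by
  classical
  have hk1 : 1 ≤ e.card := Finset.card_pos.mpr ⟨s, hse⟩
  have hkerase : (e.erase s).card = e.card - 1 := Finset.card_erase_of_mem hse
  set n := r - e.card with hn
  have hrk : r - (e.card - 1) = n + 1 := by omega
  have hprod : ∏ i ∈ e, p i = p s * ∏ i ∈ e.erase s, p i :=
    (Finset.mul_prod_erase e p hse).symm
  have hPnn : 0 ≤ ∏ i ∈ e.erase s, p i := by
    apply Finset.prod_nonneg
    intro i hi
    exact (hp01 i (hes (Finset.mem_of_mem_erase hi))).1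
  set P := ∏ i ∈ e.erase s, p i with hP
  unfold wissWeight
  rw [hkerase, hrk, hprod, ← hn]
  set A := (r.factorial : ℝ) / (n.factorial : ℝ) with hA
  have hA0 : 0 ≤ A := by positivity
  have hfact : ((r.factorial : ℝ) / ((n+1).factorial : ℝ)) = A / ((n:ℝ)+1) := by
    rw [hA, Nat.factorial_succ, div_div]
    push_cast
    ring_nf
  rw [hfact]
  have hn1 : (0:ℝ) < (n:ℝ) + 1 := by positivity
  have hkey := key_ineq n (p s) q hps hqs
  calc 2 * (A * q ^ n * (p s * P))
      = (A * P * (2*((n:ℝ)+1)*(p s)*q^n)) / ((n:ℝ)+1) := by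
        rw [eq_div_iff hn1.ne']; ring
    _ ≤ (A * P * ((q + p s)^(n+1))) / ((n:ℝ)+1) := by
        gcongr
    _ = A / ((n:ℝ)+1) * (q + p s) ^ (n+1) * P := by ring
end

section
/- Let r ≥ 3 be an integer. For every ε > 0 there exist δ > 0 and n₀ ∈ ℕ such that: if S is a star on n ≥ n₀ vertices with star partition (A,B) and S has at least (e_r − δ)·n^r edges, where e_r = (1−1/r)^{r−1}/r!, then | |A| − n/r | ≤ ε·n. -/
open Finset

-- counting: a star with edges of size r has at most |A| * C(n-|A|, r-1) edges
lemma star_card_le {n r : ℕ} (S : Finset (Finset (Fin n))) (A : Finset (Fin n))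
    (hcard : ∀ e ∈ S, e.card = r) (hstar : ∀ e ∈ S, (e ∩ A).card = 1) :
    S.card ≤ A.card * (n - A.card).choose (r - 1) := by
  have h : S.card ≤ (A.powersetCard 1 ×ˢ Aᶜ.powersetCard (r - 1)).card := by
    apply Finset.card_le_card_of_injOn (fun e => (e ∩ A, e \ A))
    · intro e he
      simp only [Finset.mem_coe, Finset.mem_product, Finset.mem_powersetCard]
      refine ⟨⟨Finset.inter_subset_right, hstar e he⟩, ?_, ?_⟩
      · intro x hx
        simp only [Finset.mem_sdiff] at hx
        simpa using hx.2
      · have h1 := Finset.card_sdiff_add_card_inter e A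
        have := hstar e he; have := hcard e he
        omega
    · intro e₁ h₁ e₂ h₂ h
      simp only [Prod.mk.injEq] at h
      have k₁ := Finset.sdiff_union_inter e₁ A
      have k₂ := Finset.sdiff_union_inter e₂ A
      rw [← k₁, ← k₂, h.1, h.2]
  calc S.card ≤ _ := h
    _ = A.card * (n - A.card).choose (r - 1) := by
        rw [Finset.card_product, Finset.card_powersetCard, Finset.card_powersetCard,
          Nat.choose_one_right, Finset.card_compl, Fintype.card_fin]

-- analysis: x (1-x)^(r-1) is strictly maximized on [0,1] at x = 1/r
lemma star_fun_lt {r : ℕ} (hr : 3 ≤ r) {x : ℝ} (hx : x ∈ Set.Icc (0:ℝ) 1)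
    (hne : x ≠ 1 / r) :
    x * (1 - x) ^ (r - 1) < (1 / r) * (1 - 1 / r) ^ (r - 1) := by
  set f : ℝ → ℝ := fun y => y * (1 - y) ^ (r - 1) with hf
  have hr0 : (0:ℝ) < r := by positivity
  have hrinv : (0:ℝ) < 1 / r := by positivity
  have hrinv1 : (1:ℝ) / r < 1 := by
    rw [div_lt_one hr0]; exact_mod_cast by omega
  have hderiv : ∀ y : ℝ, HasDerivAt f ((1 - y) ^ (r - 2) * (1 - r * y)) y := by
    intro y
    have h1 : HasDerivAt (fun y : ℝ => 1 - y) (-1) y := by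
      simpa using (hasDerivAt_id y).const_sub 1
    have h2 : HasDerivAt (fun y : ℝ => (1 - y) ^ (r - 1))
        ((r - 1 : ℕ) * (1 - y) ^ (r - 1 - 1) * (-1)) y := h1.pow (r - 1)
    have h3 := (hasDerivAt_id y).mul h2
    refine h3.congr_deriv ?_
    have hrr : r - 1 = (r - 2) + 1 := by omega
    have hrr2 : r - 1 - 1 = r - 2 := by omega
    rw [hrr2, hrr, pow_succ]
    have h2r : 2 ≤ r := by omega
    have hc : ((r - 2 + 1 : ℕ) : ℝ) = (r:ℝ) - 1 := by
      push_cast [Nat.cast_sub h2r]; ring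
    rw [hc]; simp only [id_eq]; ring
  -- strict mono on [0, 1/r]
  have hmono : StrictMonoOn f (Set.Icc 0 (1 / r)) := by
    apply strictMonoOn_of_deriv_pos (convex_Icc _ _)
    · exact (continuous_id.mul ((continuous_const.sub continuous_id).pow _)).continuousOn
    · intro y hy
      rw [interior_Icc] at hy
      rw [(hderiv y).deriv]
      have h1 : 0 < 1 - y := by
        have := hy.2; nlinarith [hrinv1]
      have h2 : 0 < 1 - (r : ℝ) * y := by
        have := hy.2
        have : (r:ℝ) * y < r * (1/r) := by
          exact (mul_lt_mul_iff_right₀ hr0).mpr this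
        rw [mul_one_div_cancel (ne_of_gt hr0)] at this
        linarith
      positivity
  have hanti : StrictAntiOn f (Set.Icc (1 / r) 1) := by
    apply strictAntiOn_of_deriv_neg (convex_Icc _ _)
    · exact (continuous_id.mul ((continuous_const.sub continuous_id).pow _)).continuousOn
    · intro y hy
      rw [interior_Icc] at hy
      rw [(hderiv y).deriv]
      have h1 : 0 < 1 - y := by linarith [hy.2]
      have h2 : 1 - (r : ℝ) * y < 0 := by
        have := hy.1
        have : (r:ℝ) * (1/r) < r * y := (mul_lt_mul_iff_right₀ hr0).mpr this
        rw [mul_one_div_cancel (ne_of_gt hr0)] at this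
        linarith
      have h3 : (0:ℝ) < (1 - y) ^ (r - 2) := by positivity
      nlinarith
  rcases lt_or_gt_of_ne hne with h | h
  · exact hmono ⟨hx.1, le_of_lt h⟩ ⟨hrinv.le, le_refl _⟩ h
  · exact hanti ⟨le_refl _, hrinv1.le⟩ ⟨h.le, hx.2⟩ h

theorem dense_star_is_balanced (r : ℕ) (hr : 3 ≤ r) (ε : ℝ) (hε : 0 < ε) :
    ∃ δ : ℝ, 0 < δ ∧ ∃ n₀ : ℕ, ∀ n : ℕ, n ≥ n₀ →
      ∀ (S : Finset (Finset (Fin n))) (A : Finset (Fin n)),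
        (∀ e ∈ S, e.card = r) →
        -- (A, Aᶜ) is a star partition of S
        (∀ e ∈ S, (e ∩ A).card = 1) →
        -- S has at least (e_r - δ) n^r edges, where e_r = (1 - 1/r)^{r-1} / r!
        ((1 - 1 / (r : ℝ)) ^ (r - 1) / (r.factorial : ℝ) - δ) * (n : ℝ) ^ r ≤ (S.card : ℝ) →
        |(A.card : ℝ) - (n : ℝ) / (r : ℝ)| ≤ ε * (n : ℝ) := by
  have hr0 : (0:ℝ) < r := by positivity
  set ε' : ℝ := min ε (1 / (2 * r)) with hε'def
  have hε'pos : 0 < ε' := lt_min hε (by positivity)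
  have hε'le : ε' ≤ ε := min_le_left _ _
  have hε'small : ε' ≤ 1 / (2 * r) := min_le_right _ _
  set f : ℝ → ℝ := fun y => y * (1 - y) ^ (r - 1) with hf
  set K : Set ℝ := Set.Icc 0 1 ∩ {x | ε' ≤ |x - 1 / r|} with hK
  have hKcompact : IsCompact K :=
    isCompact_Icc.inter_right (isClosed_le continuous_const
      ((continuous_id.sub continuous_const).abs))
  have hKne : K.Nonempty := by
    refine ⟨0, ⟨le_refl 0, zero_le_one⟩, ?_⟩
    simp only [Set.mem_setOf_eq, zero_sub, abs_neg]
    rw [abs_of_pos (by positivity)]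
    calc ε' ≤ 1 / (2 * r) := hε'small
      _ ≤ 1 / r := by
        apply div_le_div_of_nonneg_left one_pos.le hr0; linarith
  have hfc : ContinuousOn f K :=
    (continuous_id.mul ((continuous_const.sub continuous_id).pow _)).continuousOn
  obtain ⟨x₀, hx₀K, hmax⟩ := hKcompact.exists_isMaxOn hKne hfc
  have hx₀ne : x₀ ≠ 1 / r := by
    intro h
    have := hx₀K.2
    rw [h] at this
    simp only [Set.mem_setOf_eq, sub_self, abs_zero] at this
    linarith
  have hM : f x₀ < f (1 / r) := star_fun_lt hr hx₀K.1 hx₀ne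
  have hfact : (0:ℝ) < (r - 1).factorial := by positivity
  refine ⟨(f (1 / r) - f x₀) / (2 * (r - 1).factorial), div_pos (by linarith) (by positivity), 1, ?_⟩
  intro n hn S A hcard hstar hS
  have hn0 : (0:ℝ) < n := by exact_mod_cast hn
  have hAle : A.card ≤ n := by
    have := Finset.card_le_univ A
    simpa using this
  set a : ℝ := (A.card : ℝ) with ha
  set x : ℝ := a / n with hx
  have ha0 : (0:ℝ) ≤ a := by rw [ha]; positivity
  have hx01 : x ∈ Set.Icc (0:ℝ) 1 := by
    constructor
    · rw [hx]; exact div_nonneg ha0 hn0.le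
    · rw [hx, ha, div_le_one hn0]; exact_mod_cast hAle
  -- upper bound on S.card
  have hcount : (S.card : ℝ) ≤ f x * (n:ℝ) ^ r / (r - 1).factorial := by
    have h1 : (S.card : ℝ) ≤ a * ((n - A.card).choose (r - 1) : ℝ) := by
      have := star_card_le S A hcard hstar
      calc (S.card : ℝ) ≤ (A.card * (n - A.card).choose (r - 1) : ℕ) := by exact_mod_cast this
        _ = a * ((n - A.card).choose (r - 1) : ℝ) := by push_cast; ring
    have h2 : ((n - A.card).choose (r - 1) : ℝ) ≤ ((n:ℝ) - a) ^ (r - 1) / (r - 1).factorial := by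
      have := Nat.choose_le_pow_div (α := ℝ) (r - 1) (n - A.card)
      have hcast : ((n - A.card : ℕ) : ℝ) = (n:ℝ) - a := by
        rw [ha]; exact Nat.cast_sub hAle
      calc ((n - A.card).choose (r - 1) : ℝ) ≤ ((n - A.card : ℕ) : ℝ) ^ (r-1) / (r-1).factorial := by
            exact_mod_cast this
        _ = ((n:ℝ) - a) ^ (r - 1) / (r - 1).factorial := by rw [hcast]
    have h3 : f x * (n:ℝ) ^ r = a * ((n:ℝ) - a) ^ (r - 1) := by
      rw [hf]
      simp only
      rw [hx]
      have hrr : r = (r - 1) + 1 := by omega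
      have h1x : 1 - a / (n:ℝ) = ((n:ℝ) - a) / n := by field_simp
      rw [h1x, div_pow, hrr, pow_succ]
      have hne : (n:ℝ) ≠ 0 := ne_of_gt hn0
      have hne2 : ((n:ℝ)) ^ (r-1) ≠ 0 := pow_ne_zero _ hne
      field_simp
      ring_nf
      rw [show 1 + (r - 1) - 1 = r - 1 by omega]
    calc (S.card : ℝ) ≤ a * ((n - A.card).choose (r - 1) : ℝ) := h1
      _ ≤ a * (((n:ℝ) - a) ^ (r - 1) / (r - 1).factorial) := by
          apply mul_le_mul_of_nonneg_left h2 ha0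
      _ = f x * (n:ℝ) ^ r / (r - 1).factorial := by rw [h3]; ring
  -- lower bound: hypothesis rewritten
  have hfactr : (r.factorial : ℝ) = r * (r - 1).factorial := by
    have h : r = (r - 1) + 1 := by omega
    rw [h, Nat.factorial_succ]
    push_cast
    ring
  have herlow : (f (1/r) / (r - 1).factorial - (f (1 / r) - f x₀) / (2 * (r - 1).factorial))
      * (n : ℝ) ^ r ≤ (S.card : ℝ) := by
    have : (1 - 1 / (r : ℝ)) ^ (r - 1) / (r.factorial : ℝ) = f (1/r) / (r - 1).factorial := by
      rw [hf]; simp only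
      rw [hfactr]
      field_simp
    rw [← this]
    exact hS
  -- combine
  have hN : (0:ℝ) < (n:ℝ) ^ r := by positivity
  have key := le_trans herlow hcount
  have hfx : f x₀ < f x := by
    have hFne : ((r-1).factorial : ℝ) ≠ 0 := ne_of_gt hfact
    have e1 : f x * (n:ℝ)^r / ((r-1).factorial : ℝ) = (f x / ((r-1).factorial : ℝ)) * (n:ℝ)^r := by
      ring
    rw [e1] at key
    have h5 := le_of_mul_le_mul_right key hN
    have h6 := mul_le_mul_of_nonneg_right h5
      (show (0:ℝ) ≤ 2 * ((r-1).factorial : ℝ) by positivity)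
    have eL : (f (1/(r:ℝ)) / ((r-1).factorial : ℝ)
        - (f (1/(r:ℝ)) - f x₀) / (2 * ((r-1).factorial : ℝ))) * (2 * ((r-1).factorial : ℝ))
        = f (1/(r:ℝ)) + f x₀ := by
      field_simp
      ring
    have eR : (f x / ((r-1).factorial : ℝ)) * (2 * ((r-1).factorial : ℝ)) = 2 * f x := by
      field_simp
    rw [eL, eR] at h6
    linarith
  -- conclude x is not in K
  have hxK : x ∉ K := by
    intro hxK
    exact absurd (hmax hxK) (not_le.mpr hfx)
  have hclose : |x - 1 / r| < ε' := by
    by_contra h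
    exact hxK ⟨hx01, le_of_not_gt h⟩
  have : |a - (n:ℝ) / r| = n * |x - 1/r| := by
    have h7 : a - (n:ℝ)/r = n * (x - 1/r) := by
      rw [hx, mul_sub, mul_div_cancel₀ _ (ne_of_gt hn0), mul_one_div]
    rw [h7, abs_mul, abs_of_pos hn0]
  rw [this]
  calc (n:ℝ) * |x - 1/r| ≤ n * ε' := by
        apply mul_le_mul_of_nonneg_left hclose.le hn0.le
    _ ≤ ε * n := by rw [mul_comm]; exact mul_le_mul_of_nonneg_right hε'le hn0.le
end

section
/- Fix an integer r ≥ 2. If (G,s,p) is a principal weighted intersecting set system, then w_p(G) ≤ r·p(1)·(1−p(1))^{r−1} ≤ (1−1/r)^{r−1}. -/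
open Finset


/-- Auxiliary weight with descending factorial. -/
noncomputable def auxW (p : ℕ → ℝ) (q : ℝ) (m : ℕ) (f : Finset ℕ) : ℝ :=
  (m.descFactorial f.card : ℝ) * q ^ (m - f.card) * ∏ i ∈ f, p i

lemma auxW_succ (p : ℕ → ℝ) (q : ℝ) (m : ℕ) (f : Finset ℕ) (hf : f.card ≤ m + 1) :
    auxW p q (m + 1) f = q * auxW p q m f + ∑ i ∈ f, p i * auxW p q m (f.erase i) := by
  rcases f.eq_empty_or_nonempty with rfl | hne
  · simp [auxW, pow_succ, mul_comm]
  · obtain ⟨j, hj⟩ := hne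
    obtain ⟨k, hk⟩ : ∃ k, f.card = k + 1 :=
      ⟨f.card - 1, by have := Finset.card_pos.2 ⟨j, hj⟩; omega⟩
    have hkm : k ≤ m := by omega
    -- the erase sum
    have hsum : ∑ i ∈ f, p i * auxW p q m (f.erase i)
        = (k + 1 : ℝ) * ((m.descFactorial k : ℝ) * q ^ (m - k) * ∏ i ∈ f, p i) := by
      have : ∀ i ∈ f, p i * auxW p q m (f.erase i)
          = (m.descFactorial k : ℝ) * q ^ (m - k) * ∏ j ∈ f, p j := by
        intro i hi
        have hce : (f.erase i).card = k := by
          rw [Finset.card_erase_of_mem hi, hk]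
          omega
        rw [auxW, hce, ← Finset.mul_prod_erase f p hi]
        ring
      rw [Finset.sum_congr rfl this, Finset.sum_const, hk, nsmul_eq_mul]
      push_cast
      ring
    have hd : (m + 1).descFactorial (k + 1)
        = m.descFactorial (k + 1) + (k + 1) * m.descFactorial k := by
      rw [Nat.succ_descFactorial_succ, Nat.descFactorial_succ, ← Nat.add_mul]
      congr 1
      omega
    have hexp : m + 1 - (k + 1) = m - k := by omega
    have hq1 : q * ((m.descFactorial (k+1) : ℝ) * q ^ (m - (k+1)) * ∏ i ∈ f, p i)
        = (m.descFactorial (k+1) : ℝ) * q ^ (m - k) * ∏ i ∈ f, p i := by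
      by_cases hkm' : k + 1 ≤ m
      · have : m - k = (m - (k + 1)) + 1 := by omega
        rw [this, pow_succ]
        ring
      · have : m.descFactorial (k + 1) = 0 := Nat.descFactorial_of_lt (by omega)
        rw [this]
        push_cast
        ring
    rw [hsum, auxW, auxW, hk, hexp, hd]
    rw [hq1]
    push_cast
    ring

lemma auxW_key (p : ℕ → ℝ) (q : ℝ) (hq : 0 ≤ q) (m : ℕ) :
    ∀ (S : Finset ℕ), (∀ i ∈ S, 0 ≤ p i) → ∀ (F : Finset (Finset ℕ)),
      (∀ f ∈ F, f ⊆ S ∧ f.card ≤ m) →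
      ∑ f ∈ F, auxW p q m f ≤ (q + ∑ i ∈ S, p i) ^ m := by
  induction m with
  | zero =>
    intro S hp F hF
    have hsub : F ⊆ {∅} := fun f hf =>
      Finset.mem_singleton.2 (Finset.card_eq_zero.1 (Nat.le_zero.1 (hF f hf).2))
    rcases Finset.subset_singleton_iff.1 hsub with h | h <;> simp [h, auxW]
  | succ m ih =>
    intro S hp F hF
    have hP : (0:ℝ) ≤ q + ∑ i ∈ S, p i := add_nonneg hq (Finset.sum_nonneg hp)
    have hsum : ∑ f ∈ F, auxW p q (m+1) f
        = q * (∑ f ∈ F, auxW p q m f)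
          + ∑ f ∈ F, ∑ i ∈ f, p i * auxW p q m (f.erase i) := by
      rw [Finset.mul_sum, ← Finset.sum_add_distrib]
      exact Finset.sum_congr rfl fun f hf => auxW_succ p q m f (hF f hf).2
    rw [hsum]
    have h1 : ∑ f ∈ F, auxW p q m f ≤ (q + ∑ i ∈ S, p i) ^ m := by
      have heq : ∑ f ∈ F.filter (fun f => f.card ≤ m), auxW p q m f
          = ∑ f ∈ F, auxW p q m f := by
        apply Finset.sum_filter_of_ne
        intro f hf hne
        by_contra hc
        push_neg at hc
        apply hne
        rw [auxW, Nat.descFactorial_of_lt hc]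
        push_cast
        ring
      rw [← heq]
      exact ih S hp _ (fun f hf => by
        simp only [Finset.mem_filter] at hf
        exact ⟨(hF f hf.1).1, hf.2⟩)
    have h2 : ∑ f ∈ F, ∑ i ∈ f, p i * auxW p q m (f.erase i)
        ≤ (∑ i ∈ S, p i) * (q + ∑ i ∈ S, p i) ^ m := by
      have hrw : ∀ f ∈ F, ∑ i ∈ f, p i * auxW p q m (f.erase i)
          = ∑ i ∈ S, if i ∈ f then p i * auxW p q m (f.erase i) else 0 := by
        intro f hf
        rw [Finset.sum_ite_mem, Finset.inter_eq_right.2 (hF f hf).1]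
      rw [Finset.sum_congr rfl hrw, Finset.sum_comm]
      rw [Finset.sum_mul]
      apply Finset.sum_le_sum
      intro i hi
      rw [← Finset.sum_filter]
      have hfilt : ∀ f ∈ F.filter (fun f => i ∈ f), p i * auxW p q m (f.erase i)
          = p i * auxW p q m (f.erase i) := fun _ _ => rfl
      rw [← Finset.mul_sum]
      apply mul_le_mul_of_nonneg_left _ (hp i hi)
      have himg : ∑ f ∈ F.filter (fun f => i ∈ f), auxW p q m (f.erase i)
          = ∑ g ∈ (F.filter (fun f => i ∈ f)).image (fun f => f.erase i), auxW p q m g := by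
        rw [Finset.sum_image]
        intro a ha b hb hab
        simp only [Finset.mem_coe, Finset.mem_filter] at ha hb
        rw [← Finset.insert_erase ha.2, ← Finset.insert_erase hb.2, show a.erase i = b.erase i from hab]
      rw [himg]
      apply ih S hp
      intro g hg
      obtain ⟨f, hf, rfl⟩ := Finset.mem_image.1 hg
      simp only [Finset.mem_filter] at hf
      constructor
      · exact (Finset.erase_subset _ _).trans (hF f hf.1).1
      · have := Finset.card_erase_of_mem hf.2
        have := (hF f hf.1).2
        omega
    calc q * (∑ f ∈ F, auxW p q m f) + ∑ f ∈ F, ∑ i ∈ f, p i * auxW p q m (f.erase i)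
        ≤ q * (q + ∑ i ∈ S, p i) ^ m + (∑ i ∈ S, p i) * (q + ∑ i ∈ S, p i) ^ m :=
          add_le_add (mul_le_mul_of_nonneg_left h1 hq) h2
      _ = (q + ∑ i ∈ S, p i) ^ (m + 1) := by ring

lemma amgm (r : ℕ) (hr : 2 ≤ r) (x : ℝ) (hx0 : 0 ≤ x) (hx1 : x ≤ 1) :
    (r : ℝ) * x * (1 - x) ^ (r - 1) ≤ (1 - 1 / (r : ℝ)) ^ (r - 1) := by
  have hr2 : (2:ℝ) ≤ (r:ℝ) := by exact_mod_cast hr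
  have hrpos : (0:ℝ) < (r:ℝ) := by linarith
  have hr1pos : (0:ℝ) < (r:ℝ) - 1 := by linarith
  set A : ℝ := (r:ℝ) * x with hA
  set B : ℝ := (r:ℝ) * (1 - x) / ((r:ℝ) - 1) with hB
  have hA0 : 0 ≤ A := by positivity
  have hB0 : 0 ≤ B := by
    apply div_nonneg _ (le_of_lt hr1pos)
    nlinarith
  have hgm : A ^ (1/(r:ℝ)) * B ^ (((r:ℝ)-1)/(r:ℝ)) ≤ 1 := by
    have h := Real.geom_mean_le_arith_mean2_weighted
      (by positivity : (0:ℝ) ≤ 1/(r:ℝ))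
      (by positivity : (0:ℝ) ≤ ((r:ℝ)-1)/(r:ℝ)) hA0 hB0
      (by field_simp; ring : 1/(r:ℝ) + ((r:ℝ)-1)/(r:ℝ) = 1)
    have heq : 1/(r:ℝ) * A + ((r:ℝ)-1)/(r:ℝ) * B = 1 := by
      rw [hA, hB]
      field_simp
      ring
    linarith [h, heq.le]
  have hpow : (A ^ (1/(r:ℝ)) * B ^ (((r:ℝ)-1)/(r:ℝ))) ^ (r:ℝ) ≤ 1 := by
    apply Real.rpow_le_one (by positivity) hgm (le_of_lt hrpos)
  have hexp : (A ^ (1/(r:ℝ)) * B ^ (((r:ℝ)-1)/(r:ℝ))) ^ (r:ℝ)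
      = A * B ^ ((r:ℝ) - 1) := by
    rw [Real.mul_rpow (Real.rpow_nonneg hA0 _) (Real.rpow_nonneg hB0 _)]
    rw [← Real.rpow_mul hA0, ← Real.rpow_mul hB0]
    rw [one_div_mul_cancel (ne_of_gt hrpos), Real.rpow_one]
    congr 1
    field_simp
  have hnat : B ^ ((r:ℝ) - 1) = B ^ (r - 1) := by
    rw [← Real.rpow_natCast B (r-1)]
    congr 1
    push_cast [Nat.cast_sub (by omega : 1 ≤ r)]
    ring
  have hAB : A * B ^ (r - 1) ≤ 1 := by
    rw [← hnat, ← hexp]; exact hpow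
  have hBx : (((r:ℝ)-1)/(r:ℝ)) * B = 1 - x := by
    rw [hB]
    field_simp
  have hone : (1 - 1/(r:ℝ)) = ((r:ℝ)-1)/(r:ℝ) := by field_simp
  have final : (r:ℝ) * x * (1-x)^(r-1)
      = A * B ^ (r-1) * (((r:ℝ)-1)/(r:ℝ)) ^ (r-1) := by
    rw [← hBx, mul_pow, hA]
    ring
  rw [final, hone]
  calc A * B ^ (r-1) * (((r:ℝ)-1)/(r:ℝ)) ^ (r-1)
      ≤ 1 * (((r:ℝ)-1)/(r:ℝ)) ^ (r-1) :=
        mul_le_mul_of_nonneg_right hAB (by positivity)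
    _ = (((r:ℝ)-1)/(r:ℝ)) ^ (r-1) := one_mul _

theorem principal_wiss_weight_le (r s : ℕ) (hr : 2 ≤ r)
    (G : Finset (Finset ℕ)) (p : ℕ → ℝ) (q : ℝ)
    (h : IsWISS r s G p q) (hprin : WISSPrincipal G) :
    wissTotal r p q G ≤ (r : ℝ) * p 1 * (1 - p 1) ^ (r - 1) ∧
    (r : ℝ) * p 1 * (1 - p 1) ^ (r - 1) ≤ (1 - 1 / (r : ℝ)) ^ (r - 1) := by
  obtain ⟨hs, hG, -, hp01, ⟨hq0, hq1⟩, hsum1, -⟩ := h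
  have h1mem : (1:ℕ) ∈ Finset.Icc 1 s := by
    simp only [Finset.mem_Icc]
    omega
  obtain ⟨hp10, hp11⟩ := hp01 1 h1mem
  have hIcc : Finset.Icc 1 s = insert 1 (Finset.Icc 2 s) := by
    ext i
    simp only [Finset.mem_Icc, Finset.mem_insert]
    omega
  have h1notin : (1:ℕ) ∉ Finset.Icc 2 s := by simp
  have hPsum : q + ∑ i ∈ Finset.Icc 2 s, p i = 1 - p 1 := by
    rw [hIcc, Finset.sum_insert h1notin] at hsum1
    linarith
  constructor
  · have hstep : ∀ e ∈ G, wissWeight r p q e = (r:ℝ) * p 1 * auxW p q (r-1) (e.erase 1) := by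
      intro e he
      have h1e : 1 ∈ e := hprin e he
      obtain ⟨-, hesub, hecard⟩ := hG e he
      have hck : (e.erase 1).card + 1 = e.card := Finset.card_erase_add_one h1e
      have hfr : ((r.factorial : ℝ) / ((r - e.card).factorial : ℝ))
          = (r.descFactorial e.card : ℝ) := by
        rw [div_eq_iff (Nat.cast_ne_zero.2 (Nat.factorial_ne_zero _)), mul_comm]
        exact_mod_cast (Nat.factorial_mul_descFactorial hecard).symm
      have hdesc : r.descFactorial e.card = r * (r-1).descFactorial (e.erase 1).card := by
        rw [← hck]
        have hr1 : r - 1 + 1 = r := by omega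
        calc r.descFactorial ((e.erase 1).card + 1)
            = (r-1+1).descFactorial ((e.erase 1).card + 1) := by rw [hr1]
          _ = (r-1+1) * (r-1).descFactorial (e.erase 1).card :=
              Nat.succ_descFactorial_succ _ _
          _ = r * (r-1).descFactorial (e.erase 1).card := by rw [hr1]
      have hexp : r - e.card = (r - 1) - (e.erase 1).card := by omega
      rw [wissWeight, auxW, hfr, hdesc, hexp, ← Finset.mul_prod_erase e p h1e]
      push_cast
      ring
    have hkey : ∑ e ∈ G, auxW p q (r-1) (e.erase 1) ≤ (1 - p 1) ^ (r-1) := by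
      rw [← hPsum]
      have himg : ∑ e ∈ G, auxW p q (r-1) (e.erase 1)
          = ∑ g ∈ G.image (fun e => e.erase 1), auxW p q (r-1) g := by
        rw [Finset.sum_image]
        intro a ha b hb hab
        rw [← Finset.insert_erase (hprin a ha), ← Finset.insert_erase (hprin b hb), show a.erase 1 = b.erase 1 from hab]
      rw [himg]
      apply auxW_key p q hq0 (r-1) (Finset.Icc 2 s)
      · intro i hi
        have hi' : i ∈ Finset.Icc 1 s := by
          simp only [Finset.mem_Icc] at hi ⊢
          omega
        exact (hp01 i hi').1
      · intro g hg
        obtain ⟨e, he, rfl⟩ := Finset.mem_image.1 hg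
        obtain ⟨-, hesub, hecard⟩ := hG e he
        constructor
        · intro i hi
          obtain ⟨hine, hie⟩ := Finset.mem_erase.1 hi
          have := hesub hie
          simp only [Finset.mem_Icc] at this ⊢
          omega
        · have := Finset.card_erase_of_mem (hprin e he)
          omega
    calc wissTotal r p q G = ∑ e ∈ G, (r:ℝ) * p 1 * auxW p q (r-1) (e.erase 1) :=
        Finset.sum_congr rfl hstep
      _ = (r:ℝ) * p 1 * ∑ e ∈ G, auxW p q (r-1) (e.erase 1) := by rw [Finset.mul_sum]
      _ ≤ (r:ℝ) * p 1 * (1 - p 1) ^ (r-1) :=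
        mul_le_mul_of_nonneg_left hkey (by positivity)
  · exact amgm r hr (p 1) hp10 hp11
end

section
/- For every integer r ≥ 3, every intersecting r-graph is K_{r,r}^{(r)}-hom-free; that is, there is no homomorphism from K_{r,r}^{(r)} to any intersecting r-graph. -/
open Finset

theorem intersecting_is_Krr_hom_free (r : ℕ) (hr : 3 ≤ r)
    {γ : Type*} [DecidableEq γ] (H : Finset (Finset γ))
    (hunif : ∀ e ∈ H, e.card = r)
    (hint : ∀ e ∈ H, ∀ f ∈ H, (e ∩ f).Nonempty) :
    ¬ ∃ φ : KrrV r → γ, ∀ e ∈ Krr r, Set.InjOn φ ↑e ∧ e.image φ ∈ H := by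
  rintro ⟨φ, hφ⟩
  have h1 : (Finset.univ : Finset (Fin r)).image
      (fun i => (Sum.inl ((0 : Fin 2), i) : KrrV r)) ∈ Krr r := by
    simp [Krr]
  have h2 : (Finset.univ : Finset (Fin r)).image
      (fun i => (Sum.inl ((1 : Fin 2), i) : KrrV r)) ∈ Krr r := by
    simp [Krr]
  obtain ⟨x, hx⟩ := hint _ (hφ _ h1).2 _ (hφ _ h2).2
  rw [Finset.mem_inter] at hx
  obtain ⟨hx1, hx2⟩ := hx
  obtain ⟨a, ha, hi⟩ := Finset.mem_image.1 hx1
  obtain ⟨i, -, rfl⟩ := Finset.mem_image.1 ha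
  obtain ⟨b, hb, hj⟩ := Finset.mem_image.1 hx2
  obtain ⟨j, -, rfl⟩ := Finset.mem_image.1 hb
  set f : Finset (KrrV r) :=
    insert (Sum.inl ((0 : Fin 2), i)) (insert (Sum.inl ((1 : Fin 2), j))
      ((Finset.univ : Finset (Fin (r - 2))).image (fun k => Sum.inr ((i, j), k)))) with hf
  have hfK : f ∈ Krr r := by
    rw [Krr, Finset.mem_union]
    right
    exact Finset.mem_image.2 ⟨(i, j), Finset.mem_univ _, rfl⟩
  have hinj := (hφ f hfK).1
  have hmem1 : (Sum.inl ((0 : Fin 2), i) : KrrV r) ∈ f := by simp [hf]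
  have hmem2 : (Sum.inl ((1 : Fin 2), j) : KrrV r) ∈ f := by simp [hf]
  have heq : (Sum.inl ((0 : Fin 2), i) : KrrV r) = Sum.inl ((1 : Fin 2), j) :=
    hinj (Finset.mem_coe.2 hmem1) (Finset.mem_coe.2 hmem2) (by rw [hi, hj])
  simp at heq
end

section
/- Let r ≥ 3 and let H be an r-graph that covers pairs, i.e. every pair of distinct vertices of H is contained in some edge of H. If H contains two disjoint edges, then there is a homomorphism from K_{r,r}^{(r)} to H. -/
open Finset

lemma image_univ_eq_of_inj {γ : Type*} [DecidableEq γ] {n : ℕ} {s : Finset γ}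
    (f : Fin n → γ) (hinj : Function.Injective f) (hmem : ∀ i, f i ∈ s)
    (hcard : s.card = n) : Finset.univ.image f = s := by
  apply Finset.eq_of_subset_of_card_le
  · intro x hx
    simp only [Finset.mem_image] at hx
    obtain ⟨i, _, rfl⟩ := hx
    exact hmem i
  · rw [Finset.card_image_of_injective _ hinj, Finset.card_univ, Fintype.card_fin, hcard]

theorem covers_pairs_two_disjoint_edges_hom_Krr (r : ℕ) (hr : 3 ≤ r)
    {γ : Type*} [DecidableEq γ] [Fintype γ] (H : Finset (Finset γ))
    (hunif : ∀ e ∈ H, e.card = r)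
    (hcov : ∀ u v : γ, u ≠ v → ∃ e ∈ H, u ∈ e ∧ v ∈ e)
    (hdisj : ∃ e ∈ H, ∃ f ∈ H, e ≠ f ∧ Disjoint e f) :
    ∃ φ : KrrV r → γ, ∀ e ∈ Krr r, Set.InjOn φ ↑e ∧ e.image φ ∈ H := by
  obtain ⟨e, he, f, hf, hne, hdis⟩ := hdisj
  let A : Fin r → γ := fun i => ((e.equivFinOfCardEq (hunif e he)).symm i : γ)
  let B : Fin r → γ := fun i => ((f.equivFinOfCardEq (hunif f hf)).symm i : γ)
  have hAinj : Function.Injective A := fun i j h =>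
    (e.equivFinOfCardEq (hunif e he)).symm.injective (Subtype.ext h)
  have hBinj : Function.Injective B := fun i j h =>
    (f.equivFinOfCardEq (hunif f hf)).symm.injective (Subtype.ext h)
  have hAe : ∀ i, A i ∈ e := fun i => ((e.equivFinOfCardEq (hunif e he)).symm i).2
  have hBf : ∀ i, B i ∈ f := fun i => ((f.equivFinOfCardEq (hunif f hf)).symm i).2
  have hAB : ∀ i j, A i ≠ B j := fun i j h =>
    (Finset.disjoint_left.mp hdis (hAe i)) (h ▸ hBf j)
  have key : ∀ i j : Fin r, ∃ g ∈ H, A i ∈ g ∧ B j ∈ g := fun i j => hcov _ _ (hAB i j)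
  choose g hgH hAg hBg using key
  have hsub : ∀ i j, ({A i, B j} : Finset γ) ⊆ g i j := by
    intro i j x hx
    rcases Finset.mem_insert.mp hx with rfl | hx
    · exact hAg i j
    · exact Finset.mem_singleton.mp hx ▸ hBg i j
  have hcard2 : ∀ i j, (g i j \ {A i, B j}).card = r - 2 := by
    intro i j
    rw [Finset.card_sdiff_of_subset (hsub i j), hunif _ (hgH i j),
      Finset.card_insert_of_notMem (by simp [hAB i j]), Finset.card_singleton]
  let N : ∀ (_ : Fin r) (_ : Fin r), Fin (r - 2) → γ := fun i j k =>
    (((g i j \ {A i, B j}).equivFinOfCardEq (hcard2 i j)).symm k : γ)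
  have hNinj : ∀ i j, Function.Injective (N i j) := fun i j a b h =>
    ((g i j \ {A i, B j}).equivFinOfCardEq (hcard2 i j)).symm.injective (Subtype.ext h)
  have hNmem : ∀ i j k, N i j k ∈ g i j \ {A i, B j} := fun i j k =>
    (((g i j \ {A i, B j}).equivFinOfCardEq (hcard2 i j)).symm k).2
  refine ⟨Sum.elim (fun p => if p.1 = 0 then A p.2 else B p.2) (fun q => N q.1.1 q.1.2 q.2),
    ?_⟩
  set φ : KrrV r → γ :=
    Sum.elim (fun p => if p.1 = 0 then A p.2 else B p.2) (fun q => N q.1.1 q.1.2 q.2) with hφ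
  intro t ht
  have hφ0 : ∀ i : Fin r, φ (Sum.inl ((0 : Fin 2), i)) = A i := by intro i; simp [hφ]
  have hφ1 : ∀ i : Fin r, φ (Sum.inl ((1 : Fin 2), i)) = B i := by
    intro i; simp only [hφ, Sum.elim_inl]; norm_num
  have hφ2 : ∀ (i j : Fin r) (k : Fin (r - 2)), φ (Sum.inr ((i, j), k)) = N i j k := by
    intro i j k; simp [hφ]
  simp only [Krr, Finset.mem_union, Finset.mem_insert, Finset.mem_singleton,
    Finset.mem_image, Finset.mem_univ, true_and] at ht
  rcases ht with (rfl | rfl) | ⟨⟨i, j⟩, rfl⟩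
  · -- first side
    have himg : Finset.image φ (Finset.univ.image (fun i : Fin r => Sum.inl ((0 : Fin 2), i))) = e := by
      rw [Finset.image_image]
      refine image_univ_eq_of_inj _ ?_ ?_ (hunif e he)
      · intro a b hab
        simp only [Function.comp_apply, hφ0] at hab
        exact hAinj hab
      · intro a; simp only [Function.comp_apply, hφ0]; exact hAe a
    constructor
    · apply Finset.injOn_of_card_image_eq
      rw [himg, hunif e he, Finset.card_image_of_injective _
        (fun a b hab => (Prod.mk.injEq _ _ _ _ ▸ Sum.inl.inj hab).2),
        Finset.card_univ, Fintype.card_fin]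
    · rw [himg]; exact he
  · -- second side
    have himg : Finset.image φ (Finset.univ.image (fun i : Fin r => Sum.inl ((1 : Fin 2), i))) = f := by
      rw [Finset.image_image]
      refine image_univ_eq_of_inj _ ?_ ?_ (hunif f hf)
      · intro a b hab
        simp only [Function.comp_apply, hφ1] at hab
        exact hBinj hab
      · intro a; simp only [Function.comp_apply, hφ1]; exact hBf a
    constructor
    · apply Finset.injOn_of_card_image_eq
      rw [himg, hunif f hf, Finset.card_image_of_injective _
        (fun a b hab => (Prod.mk.injEq _ _ _ _ ▸ Sum.inl.inj hab).2),
        Finset.card_univ, Fintype.card_fin]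
    · rw [himg]; exact hf
  · -- main edges
    have hNimg : Finset.univ.image (N i j) = g i j \ {A i, B j} :=
      image_univ_eq_of_inj _ (hNinj i j) (hNmem i j) (hcard2 i j)
    have hins : insert (A i) (insert (B j) (g i j \ {A i, B j})) = g i j := by
      ext x
      simp only [Finset.mem_insert, Finset.mem_sdiff, Finset.mem_singleton]
      constructor
      · rintro (rfl | rfl | ⟨h, _⟩)
        · exact hAg i j
        · exact hBg i j
        · exact h
      · intro hx
        by_cases h1 : x = A i
        · exact Or.inl h1
        by_cases h2 : x = B j
        · exact Or.inr (Or.inl h2)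
        · exact Or.inr (Or.inr ⟨hx, by tauto⟩)
    have himg : Finset.image φ (insert (Sum.inl ((0 : Fin 2), i)) (insert (Sum.inl ((1 : Fin 2), j))
        (Finset.univ.image (fun k : Fin (r - 2) => Sum.inr (((i, j), k) : (Fin r × Fin r) × Fin (r - 2)))))) = g i j := by
      rw [Finset.image_insert, Finset.image_insert, Finset.image_image, hφ0, hφ1]
      have hc : Finset.univ.image (φ ∘ fun k : Fin (r - 2) => (Sum.inr ((i, j), k) : KrrV r))
          = Finset.univ.image (N i j) :=
        Finset.image_congr (fun k _ => hφ2 i j k)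
      rw [hc, hNimg, hins]
    have htcard : (insert (Sum.inl ((0 : Fin 2), i)) (insert (Sum.inl ((1 : Fin 2), j))
        (Finset.univ.image (fun k : Fin (r - 2) => (Sum.inr (((i, j), k)) : KrrV r))))).card = r := by
      rw [Finset.card_insert_of_notMem (by simp), Finset.card_insert_of_notMem (by simp),
        Finset.card_image_of_injective _ (fun a b hab => by
          simpa using Sum.inr.inj hab),
        Finset.card_univ, Fintype.card_fin]
      omega
    constructor
    · apply Finset.injOn_of_card_image_eq
      rw [himg, htcard, hunif _ (hgH i j)]
    · rw [himg]; exact hgH i j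
end

section
/- For every integer r ≥ 4, (1/r!)·(1−1/r)^{r−1} > C(2r−1, r)/(2r−1)^r; that is, the limiting Lagrangian of the principal intersecting r-graphs S₁^{(r)}(n) exceeds the Lagrangian of the complete r-graph on 2r−1 vertices. -/
lemma fact_mul_prod (n : ℕ) : ∀ k, n.factorial * ∏ i ∈ Finset.range k, (n + 1 + i) = (n + k).factorial := by
  intro k
  induction k with
  | zero => simp
  | succ k ih =>
      rw [Finset.prod_range_succ, ← Nat.mul_assoc, ih, ← Nat.add_assoc, Nat.factorial_succ]
      ring

lemma prod_sq_bound (r : ℕ) (hr : 1 ≤ r) :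
    (2 ^ r * ∏ i ∈ Finset.range r, (r + i)) ^ 2 ≤ ((3 * r - 1) ^ r) ^ 2 := by
  have h1 : (∏ i ∈ Finset.range r, (r + i)) * (∏ i ∈ Finset.range r, (r + i))
      = ∏ i ∈ Finset.range r, ((r + i) * (r + (r - 1 - i))) := by
    rw [Finset.prod_mul_distrib]
    congr 1
    exact (Finset.prod_range_reflect (fun i => r + i) r).symm
  have h2 : ∀ i ∈ Finset.range r, 4 * ((r + i) * (r + (r - 1 - i))) ≤ (3 * r - 1) ^ 2 := by
    intro i hi
    rw [Finset.mem_range] at hi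
    have hab : (r + i) + (r + (r - 1 - i)) = 3 * r - 1 := by omega
    set a := r + i
    set b := r + (r - 1 - i)
    rw [← hab]
    zify
    nlinarith [sq_nonneg ((a : ℤ) - b)]
  calc (2 ^ r * ∏ i ∈ Finset.range r, (r + i)) ^ 2
      = ∏ i ∈ Finset.range r, (4 * ((r + i) * (r + (r - 1 - i)))) := by
        rw [Finset.prod_mul_distrib, Finset.prod_const, Finset.card_range, ← h1, mul_pow,
          ← pow_mul, mul_comm r 2, pow_mul]
        norm_num [sq]
    _ ≤ ∏ i ∈ Finset.range r, (3 * r - 1) ^ 2 := Finset.prod_le_prod' h2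
    _ = ((3 * r - 1) ^ r) ^ 2 := by rw [Finset.prod_const, Finset.card_range]; ring

lemma exp_neg_one_le (n : ℕ) (hn : 1 ≤ n) :
    Real.exp (-1) ≤ ((n : ℝ) / ((n : ℝ) + 1)) ^ n := by
  have hn0 : (0 : ℝ) < n := by exact_mod_cast hn
  have h1 : (1 : ℝ) + 1 / n ≤ Real.exp (1 / n) := by
    have := Real.add_one_le_exp (1 / (n : ℝ))
    linarith
  have h2 : (((n : ℝ) + 1) / n) ^ n ≤ Real.exp 1 := by
    have hb : ((n : ℝ) + 1) / n = 1 + 1 / n := by field_simp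
    calc (((n : ℝ) + 1) / n) ^ n ≤ Real.exp (1 / n) ^ n := by
          apply pow_le_pow_left₀ (by positivity) (by rw [hb]; exact h1)
      _ = Real.exp ((n : ℕ) * (1 / n)) := by rw [← Real.exp_nat_mul]
      _ = Real.exp 1 := by rw [mul_one_div, div_self (ne_of_gt hn0)]
  have h3 : ((n : ℝ) / ((n : ℝ) + 1)) ^ n = ((((n : ℝ) + 1) / n) ^ n)⁻¹ := by
    rw [← inv_pow, inv_div]
  rw [h3, Real.exp_neg]
  exact inv_anti₀ (by positivity) h2

theorem principal_beats_complete (r : ℕ) (hr : 4 ≤ r) :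
    ((2 * r - 1).choose r : ℝ) / ((2 * r - 1 : ℕ) : ℝ) ^ r <
      (1 / (r.factorial : ℝ)) * (1 - 1 / (r : ℝ)) ^ (r - 1) := by
  rcases eq_or_lt_of_le hr with h4 | h5
  · subst h4
    norm_num [Nat.choose, Nat.factorial]
  · have hr5 : 5 ≤ r := h5
    clear hr h5
    have hr0 : (0 : ℝ) < r := by positivity
    have hrR : (5 : ℝ) ≤ r := by exact_mod_cast hr5
    set x : ℝ := (r : ℝ) with hx
    set P : ℕ := ∏ i ∈ Finset.range r, (r + i) with hP
    -- factorial identity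
    have hfact : (r - 1).factorial * P = (2 * r - 1).factorial := by
      have := fact_mul_prod (r - 1) r
      have e1 : r - 1 + 1 = r := by omega
      have e2 : r - 1 + r = 2 * r - 1 := by omega
      rw [e1, e2] at this
      exact this
    have hchoose : ((2 * r - 1).choose r) * r.factorial = P := by
      have h1 : r ≤ 2 * r - 1 := by omega
      have h2 := Nat.choose_mul_factorial_mul_factorial h1
      have e : 2 * r - 1 - r = r - 1 := by omega
      rw [e] at h2
      apply Nat.eq_of_mul_eq_mul_left (Nat.factorial_pos (r - 1))
      calc (r-1).factorial * ((2 * r - 1).choose r * r.factorial)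
          = (2*r-1).choose r * r.factorial * (r-1).factorial := by ring
        _ = (2*r-1).factorial := h2
        _ = (r-1).factorial * P := hfact.symm
    have hPb : 2 ^ r * P ≤ (3 * r - 1) ^ r :=
      (Nat.pow_le_pow_iff_left (n := 2) two_ne_zero).mp (prod_sq_bound r (by omega))
    -- cast facts
    have hc2 : ((2 * r - 1 : ℕ) : ℝ) = 2 * x - 1 := by
      have : (1:ℕ) ≤ 2 * r := by omega
      push_cast [Nat.cast_sub this]; ring
    have hc3 : ((3 * r - 1 : ℕ) : ℝ) = 3 * x - 1 := by
      have : (1:ℕ) ≤ 3 * r := by omega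
      push_cast [Nat.cast_sub this]; ring
    have h2x : (0 : ℝ) < 2 * x - 1 := by linarith
    have h3x : (0 : ℝ) < 3 * x - 1 := by linarith
    have hPR : (P : ℝ) * 2 ^ r ≤ (3 * x - 1) ^ r := by
      calc (P : ℝ) * 2 ^ r = ((2 ^ r * P : ℕ) : ℝ) := by push_cast; ring
        _ ≤ (((3 * r - 1) ^ r : ℕ) : ℝ) := by exact_mod_cast hPb
        _ = (3 * x - 1) ^ r := by rw [Nat.cast_pow, hc3]
    -- key chain
    have key : (P : ℝ) / (2 * x - 1) ^ r < ((x - 1) / x) ^ (r - 1) := by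
      have s1 : (P : ℝ) / (2 * x - 1) ^ r ≤ ((3 * x - 1) / (2 * (2 * x - 1))) ^ r := by
        rw [div_pow, mul_pow, div_le_div_iff₀ (by positivity) (by positivity)]
        calc (P : ℝ) * (2 ^ r * (2 * x - 1) ^ r) = ((P : ℝ) * 2 ^ r) * (2 * x - 1) ^ r := by ring
          _ ≤ (3 * x - 1) ^ r * (2 * x - 1) ^ r := by
              apply mul_le_mul_of_nonneg_right hPR (by positivity)
      have s2 : ((3 * x - 1) / (2 * (2 * x - 1))) ^ r ≤ ((7:ℝ)/9) ^ r := by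
        apply pow_le_pow_left₀ (by positivity)
        rw [div_le_div_iff₀ (by positivity) (by norm_num)]
        linarith
      have s3 : ((7:ℝ)/9) ^ r ≤ ((7:ℝ)/9) ^ 5 :=
        pow_le_pow_of_le_one (by norm_num) (by norm_num) hr5
      have s4 : ((7:ℝ)/9) ^ 5 < Real.exp (-1) := by
        rw [Real.exp_neg]
        rw [lt_inv_comm₀ (by positivity) (Real.exp_pos 1)]
        calc Real.exp 1 < 2.7182818286 := Real.exp_one_lt_d9
          _ < (((7:ℝ)/9) ^ 5)⁻¹ := by norm_num
      have s5 : Real.exp (-1) ≤ ((x - 1) / x) ^ (r - 1) := by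
        have h := exp_neg_one_le (r - 1) (by omega)
        have e1 : ((r - 1 : ℕ) : ℝ) = x - 1 := by
          push_cast [Nat.cast_sub (by omega : (1:ℕ) ≤ r)]; ring
        rw [e1] at h
        have e2 : x - 1 + 1 = x := by ring
        rw [e2] at h
        exact h
      calc (P : ℝ) / (2 * x - 1) ^ r ≤ ((7:ℝ)/9) ^ r := le_trans s1 s2
        _ ≤ ((7:ℝ)/9) ^ 5 := s3
        _ < Real.exp (-1) := s4
        _ ≤ ((x - 1) / x) ^ (r - 1) := s5
    -- conclude
    have hfacpos : (0 : ℝ) < r.factorial := by exact_mod_cast r.factorial_pos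
    have hC : ((2 * r - 1).choose r : ℝ) = (P : ℝ) / r.factorial := by
      rw [eq_div_iff (ne_of_gt hfacpos)]
      exact_mod_cast hchoose
    have hone : (1 : ℝ) - 1 / x = (x - 1) / x := by field_simp
    rw [hC, hc2, hone]
    have e : ((P:ℝ) / (r.factorial : ℝ)) / (2 * x - 1) ^ r
        = (1 / (r.factorial : ℝ)) * ((P:ℝ) / (2 * x - 1) ^ r) := by ring
    rw [e]
    exact mul_lt_mul_of_pos_left key (by positivity)
end
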